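/- arXiv:2312.03010 — 12 statements merged into one kernel-verified Lean document; each statement's English description precedes it below -/
import Mathlib

section
/- Let p be a prime, n ≥ 2, and 2 ≤ j ≤ n. Let N be the number of finsets A of vectors in (Fin n → ZMod p) with A.card = j+1 such that A is not linearly independent over ZMod p but every proper subset of A is linearly independent (in particular all elements of A are nonzero). Then N · (j+1)! = (p^n − 1)(p^n − p)⋯(p^n − p^{j−1}) · (p−1)^j, i.e., N · (j+1)! = (∏_{t=0}^{j−1} (p^n − p^t)) · (p−1)^j. -/
open Finset

section aux

variable {K V : Type*} [Field K] [AddCommGroup V] [Module K V] [DecidableEq V]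

/-- minimal nonsimplex predicate -/
def mnsP (K : Type*) [Field K] [Module K V] (j : ℕ) (A : Finset V) : Prop :=
  A.card = j + 1 ∧
  ¬ LinearIndependent K (fun x : A => (x.1 : V)) ∧
  ∀ B ⊂ A, LinearIndependent K (fun x : B => (x.1 : V))

/-- ordered version -/
def mnsQ (K : Type*) [Field K] [Module K V] (j : ℕ) (v : Fin (j + 1) → V) : Prop :=
  LinearIndependent K (fun i : Fin j => v i.castSucc) ∧
  ∃ c : Fin j → K, (∀ i, c i ≠ 0) ∧ v (Fin.last j) = ∑ i, c i • v i.castSucc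

omit [AddCommGroup V] in
lemma range_eq_insert {j : ℕ} (v : Fin (j + 1) → V) :
    (↑(Finset.image v Finset.univ) : Set V)
      = insert (v (Fin.last j)) (Set.range fun i : Fin j => v i.castSucc) := by
  rw [Finset.coe_image, Finset.coe_univ, Set.image_univ]
  ext x
  constructor
  · rintro ⟨i, rfl⟩
    rcases Fin.eq_castSucc_or_eq_last i with ⟨i', rfl⟩ | rfl
    · exact Or.inr ⟨i', rfl⟩
    · exact Or.inl rfl
  · rintro (rfl | ⟨i, rfl⟩)
    exacts [⟨Fin.last j, rfl⟩, ⟨i.castSucc, rfl⟩]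

lemma key_iff {j : ℕ} (hj : 2 ≤ j) (v : Fin (j + 1) → V) :
    mnsQ K j v ↔ Function.Injective v ∧ mnsP K j (Finset.image v Finset.univ) := by
  haveI : Nontrivial (Fin j) := Fin.nontrivial_iff_two_le.2 hj
  set f : Fin j → V := fun i => v i.castSucc with hf
  set A : Finset V := Finset.image v Finset.univ with hAdef
  have hA : (↑A : Set V) = insert (v (Fin.last j)) (Set.range f) := range_eq_insert v
  constructor
  · rintro ⟨hLI, c, hc, hlast⟩
    have hinj0 : Function.Injective f := hLI.injective
    -- v last is not any v i.castSucc
    have hne : ∀ k : Fin j, v (Fin.last j) ≠ f k := by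
      intro k hk
      obtain ⟨m, hm⟩ := exists_ne k
      have : ∀ i, (c i - if i = k then 1 else 0) = 0 := by
        apply Fintype.linearIndependent_iff.1 hLI
        have : ∑ i, (c i - if i = k then 1 else 0) • f i
            = (∑ i, c i • f i) - f k := by
          simp [sub_smul, Finset.sum_sub_distrib, ite_smul]
        rw [this, ← hlast, hk, sub_self]
      have := this m
      simp [if_neg hm] at this
      exact hc m this
    have hnotmem : v (Fin.last j) ∉ Set.range f := by
      rintro ⟨k, hk⟩; exact hne k hk.symm
    have hinj : Function.Injective v := by
      intro a b hab
      rcases Fin.eq_castSucc_or_eq_last a with ⟨a', rfl⟩ | rfl <;>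
        rcases Fin.eq_castSucc_or_eq_last b with ⟨b', rfl⟩ | rfl
      · exact congrArg Fin.castSucc (hinj0 hab)
      · exact absurd hab.symm (hne a')
      · exact absurd hab (hne b')
      · rfl
    have hspan : v (Fin.last j) ∈ Submodule.span K (Set.range f) := by
      rw [hlast]
      exact Submodule.sum_mem _ fun i _ =>
        Submodule.smul_mem _ _ (Submodule.subset_span ⟨i, rfl⟩)
    refine ⟨hinj, ?_, ?_, ?_⟩
    · rw [Finset.card_image_of_injective _ hinj, Finset.card_univ, Fintype.card_fin]
    · -- not linearly independent
      intro hli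
      have : LinearIndependent K ((↑) : (↑A : Set V) → V) := hli
      rw [hA] at this
      exact ((linearIndepOn_id_insert hnotmem).1 this).2 hspan
    · -- proper subsets
      intro B hB
      obtain ⟨a, haA, haB⟩ := Finset.exists_of_ssubset hB
      have hBsub : (↑B : Set V) ⊆ ↑(A.erase a) := by
        intro x hx
        simp only [Finset.coe_erase, Set.mem_diff, Set.mem_singleton_iff]
        exact ⟨hB.1 hx, fun h => haB (h ▸ hx)⟩
      suffices h : LinearIndependent K ((↑) : (↑(A.erase a) : Set V) → V) from LinearIndepOn.mono (R := K) (v := id) h hBsub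
      -- a is some v i
      have haA' : a ∈ (↑A : Set V) := haA
      rw [hA] at haA'
      rcases haA' with rfl | ⟨k, rfl⟩
      · -- a = v last
        have : (↑(A.erase (v (Fin.last j))) : Set V) = Set.range f := by
          rw [Finset.coe_erase, hA, Set.insert_diff_self_of_notMem hnotmem]
        rw [this]
        exact hLI.linearIndepOn_id
      · -- a = f k
        have hset : (↑(A.erase (f k)) : Set V)
            = insert (v (Fin.last j)) (Set.range f \ {f k}) := by
          rw [Finset.coe_erase, hA, Set.insert_diff_of_notMem]
          simpa using hne k
        rw [hset]
        have hnm2 : v (Fin.last j) ∉ Set.range f \ {f k} := fun h => hnotmem h.1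
        refine (linearIndepOn_id_insert hnm2).2 ?_
        refine ⟨hLI.linearIndepOn_id.mono Set.diff_subset, ?_⟩
        intro hmem
        -- derive f k ∈ span (range f \ {f k})
        have hterm : ∀ i ∈ Finset.univ.erase k,
            c i • f i ∈ Submodule.span K (Set.range f \ {f k}) := by
          intro i hi
          refine Submodule.smul_mem _ _ (Submodule.subset_span ⟨⟨i, rfl⟩, ?_⟩)
          simp only [Set.mem_singleton_iff]
          exact fun h => (Finset.mem_erase.1 hi).1 (hinj0 h)
        have hck : c k • f k ∈ Submodule.span K (Set.range f \ {f k}) := by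
          have h1 : c k • f k = v (Fin.last j) - ∑ i ∈ Finset.univ.erase k, c i • f i := by
            rw [hlast, ← Finset.add_sum_erase _ _ (Finset.mem_univ k)]
            abel
          rw [h1]
          exact Submodule.sub_mem _ hmem (Submodule.sum_mem _ hterm)
        have hfk : f k ∈ Submodule.span K (Set.range f \ {f k}) := by
          have := Submodule.smul_mem _ (c k)⁻¹ hck
          rwa [smul_smul, inv_mul_cancel₀ (hc k), one_smul] at this
        have hnot : f k ∉ Submodule.span K (f '' {i | i ≠ k}) :=
          hLI.notMem_span_image (by simp)
        apply hnot
        refine Submodule.span_mono ?_ hfk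
        rintro x ⟨⟨i, rfl⟩, hx⟩
        exact ⟨i, fun h => hx (h ▸ rfl), rfl⟩
  · rintro ⟨hinj, hcard, hnli, hsub⟩
    have hinj0 : Function.Injective f := fun a b h =>
      Fin.castSucc_injective _ (hinj h)
    have hne : ∀ k : Fin j, v (Fin.last j) ≠ f k := by
      intro k hk
      exact (Fin.castSucc_lt_last k).ne' (hinj hk)
    have hnotmem : v (Fin.last j) ∉ Set.range f := by
      rintro ⟨k, hk⟩; exact hne k hk.symm
    -- linear independence of f
    have hBlt : Finset.image f Finset.univ ⊂ A := by
      constructor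
      · intro x hx
        obtain ⟨i, _, rfl⟩ := Finset.mem_image.1 hx
        exact Finset.mem_image.2 ⟨i.castSucc, Finset.mem_univ _, rfl⟩
      · intro hsup
        have : v (Fin.last j) ∈ Finset.image f Finset.univ :=
          hsup (Finset.mem_image.2 ⟨Fin.last j, Finset.mem_univ _, rfl⟩)
        obtain ⟨i, _, hi⟩ := Finset.mem_image.1 this
        exact hne i hi.symm
    have hLIB := hsub _ hBlt
    have hLIf : LinearIndependent K f := by
      have he : Function.Injective
          (fun i : Fin j => (⟨f i, Finset.mem_image.2 ⟨i, Finset.mem_univ _, rfl⟩⟩ :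
            (Finset.image f Finset.univ : Finset V))) := by
        intro a b h
        exact hinj0 (congrArg Subtype.val h)
      exact hLIB.comp _ he
    -- v last in span of f
    have hspan : v (Fin.last j) ∈ Submodule.span K (Set.range f) := by
      by_contra h
      apply hnli
      have : LinearIndependent K ((↑) : (insert (v (Fin.last j)) (Set.range f) : Set V) → V) :=
        (linearIndepOn_id_insert hnotmem).2 ⟨hLIf.linearIndepOn_id, h⟩
      rw [← hA] at this
      exact this
    obtain ⟨c, hcsum⟩ := Submodule.mem_span_range_iff_exists_fun K |>.1 hspan
    refine ⟨hLIf, c, ?_, hcsum.symm⟩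
    intro k hk
    have hfkA : f k ∈ A := Finset.mem_image.2 ⟨k.castSucc, Finset.mem_univ _, rfl⟩
    have hB : A.erase (f k) ⊂ A := Finset.erase_ssubset hfkA
    have hLIB2 := hsub _ hB
    have hset : (↑(A.erase (f k)) : Set V)
        = insert (v (Fin.last j)) (Set.range f \ {f k}) := by
      rw [Finset.coe_erase, hA, Set.insert_diff_of_notMem]
      simpa using hne k
    have hLIB2' : LinearIndependent K
        ((↑) : (insert (v (Fin.last j)) (Set.range f \ {f k}) : Set V) → V) := by
      rw [← hset]; exact hLIB2
    have hnm2 : v (Fin.last j) ∉ Set.range f \ {f k} := fun h => hnotmem h.1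
    apply ((linearIndepOn_id_insert hnm2).1 hLIB2').2
    have hes : ∑ i ∈ Finset.univ.erase k, c i • f i = ∑ i, c i • f i :=
      Finset.sum_erase _ (by rw [hk, zero_smul])
    rw [← hcsum, ← hes]
    exact Submodule.sum_mem _ fun i hi =>
      Submodule.smul_mem _ _ (Submodule.subset_span
        ⟨⟨i, rfl⟩, fun h => (Finset.mem_erase.1 hi).1 (hinj0 h)⟩)

end aux


section count
variable {K V : Type*} [Field K] [AddCommGroup V] [Module K V] [DecidableEq V]

lemma mnsQ_snoc {j : ℕ} (f : Fin j → V) (hf : LinearIndependent K f) (c : Fin j → K)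
    (hc : ∀ i, c i ≠ 0) : mnsQ K j (Fin.snoc f (∑ i, c i • f i)) := by
  have h1 : (fun i : Fin j => (Fin.snoc f (∑ i, c i • f i) : Fin (j+1) → V) i.castSucc) = f :=
    funext fun i => Fin.snoc_castSucc _ _ _
  refine ⟨by rw [h1]; exact hf, c, hc, ?_⟩
  simp [Fin.snoc_last, Fin.snoc_castSucc]

def snocMap {K V : Type*} [Field K] [AddCommGroup V] [Module K V] [DecidableEq V] {j : ℕ}
    (x : {f : Fin j → V // LinearIndependent K f} × {c : Fin j → K // ∀ i, c i ≠ 0}) :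
    {v : Fin (j + 1) → V // mnsQ K j v} :=
  ⟨Fin.snoc x.1.1 (∑ i, x.2.1 i • x.1.1 i), mnsQ_snoc _ x.1.2 _ x.2.2⟩

lemma snocMap_bij {j : ℕ} : Function.Bijective (snocMap (K := K) (V := V) (j := j)) := by
  constructor
  · rintro ⟨⟨f, hf⟩, ⟨c, hc⟩⟩ ⟨⟨f2, hf2⟩, ⟨c2, hc2⟩⟩ h
    have h : (Fin.snoc f (∑ i, c i • f i) : Fin (j + 1) → V)
        = Fin.snoc f2 (∑ i, c2 i • f2 i) := congrArg Subtype.val h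
    have hff : f = f2 := by
      funext i
      have := congrFun h i.castSucc
      simpa [Fin.snoc_castSucc] using this
    subst hff
    have hsum : ∑ i, c i • f i = ∑ i, c2 i • f i := by
      have := congrFun h (Fin.last j)
      simpa [Fin.snoc_last] using this
    have hcc : c = c2 := by
      funext i
      have h0 : ∀ i, (c i - c2 i) = 0 := Fintype.linearIndependent_iff.1 hf _
        (by simp [sub_smul, Finset.sum_sub_distrib, hsum])
      exact sub_eq_zero.1 (h0 i)
    subst hcc; rfl
  · rintro ⟨v, hv, c, hc, hlast⟩
    refine ⟨⟨⟨fun i => v i.castSucc, hv⟩, ⟨c, hc⟩⟩, ?_⟩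
    apply Subtype.ext
    funext i
    refine Fin.lastCases ?_ ?_ i
    · simpa [snocMap, Fin.snoc_last] using hlast.symm
    · intro i; simp [snocMap, Fin.snoc_castSucc]

lemma countQ {j : ℕ} :
    Nat.card {v : Fin (j + 1) → V // mnsQ K j v}
      = Nat.card {f : Fin j → V // LinearIndependent K f} *
        Nat.card {c : Fin j → K // ∀ i, c i ≠ 0} := by
  rw [← Nat.card_prod]
  exact (Nat.card_eq_of_bijective _ snocMap_bij).symm

lemma card_fixed_image [Fintype V] {j : ℕ} (A : Finset V) (hA : A.card = j + 1) :
    Nat.card {v : Fin (j + 1) → V // Function.Injective v ∧ Finset.image v Finset.univ = A}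
      = (j + 1).factorial := by
  classical
  have hcards : Fintype.card (Fin (j + 1)) = Fintype.card A := by
    simp [Fintype.card_coe, hA]
  have := Nat.card_eq_of_bijective
    (fun e : Fin (j + 1) ≃ A =>
      (⟨fun i => (e i : V), ?_, ?_⟩ :
        {v : Fin (j + 1) → V // Function.Injective v ∧ Finset.image v Finset.univ = A}))
    ⟨?_, ?_⟩
  · rw [← this, Nat.card_eq_fintype_card, Fintype.card_equiv (Fintype.equivOfCardEq hcards),
      Fintype.card_fin]
  · intro a b hab
    exact e.injective (Subtype.ext hab)
  · ext x
    simp only [Finset.mem_image, Finset.mem_univ, true_and]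
    constructor
    · rintro ⟨i, rfl⟩; exact (e i).2
    · intro hx; exact ⟨e.symm ⟨x, hx⟩, by simp⟩
  · intro e1 e2 h
    simp only [Subtype.mk.injEq] at h
    ext i
    exact congrFun h i
  · rintro ⟨v, hvinj, himg⟩
    have hmem : ∀ i, v i ∈ A := fun i => himg ▸ Finset.mem_image.2 ⟨i, Finset.mem_univ _, rfl⟩
    have hbij : Function.Bijective (fun i : Fin (j + 1) => (⟨v i, hmem i⟩ : A)) := by
      rw [Fintype.bijective_iff_injective_and_card]
      exact ⟨fun a b hab => hvinj (congrArg Subtype.val hab), by simp [Fintype.card_coe, hA]⟩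
    exact ⟨Equiv.ofBijective _ hbij, rfl⟩

lemma countP [Fintype V] {j : ℕ} :
    Nat.card {v : Fin (j + 1) → V //
        Function.Injective v ∧ mnsP K j (Finset.image v Finset.univ)}
      = Nat.card {A : Finset V // mnsP K j A} * (j + 1).factorial := by
  classical
  let π : {v : Fin (j + 1) → V //
      Function.Injective v ∧ mnsP K j (Finset.image v Finset.univ)} →
      {A : Finset V // mnsP K j A} := fun x => ⟨Finset.image x.1 Finset.univ, x.2.2⟩
  rw [Nat.card_eq_fintype_card, Nat.card_eq_fintype_card,
    ← Fintype.card_congr (Equiv.sigmaFiberEquiv π), Fintype.card_sigma]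
  have hfib : ∀ A : {A : Finset V // mnsP K j A},
      Fintype.card {x // π x = A} = (j + 1).factorial := by
    intro A
    have he : {x // π x = A} ≃
        {v : Fin (j + 1) → V // Function.Injective v ∧ Finset.image v Finset.univ = A.1} :=
      { toFun := fun x => ⟨x.1.1, x.1.2.1, congrArg Subtype.val x.2⟩
        invFun := fun v => ⟨⟨v.1, v.2.1, by rw [v.2.2]; exact A.2⟩, Subtype.ext v.2.2⟩
        left_inv := fun x => by ext : 2 <;> rfl
        right_inv := fun v => rfl }
    rw [Fintype.card_congr he, ← Nat.card_eq_fintype_card]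
    exact card_fixed_image A.1 A.2.1
  simp only [hfib, Finset.sum_const, Finset.card_univ, smul_eq_mul]

end count

/-- Count of minimal `j`-nonsimplices of the universal complex `X(F_p^n)` for `j ≥ 2`:
`N · (j+1)! = (p^n − 1)(p^n − p)⋯(p^n − p^{j−1}) · (p−1)^j`. -/
theorem stmt1 (p n j : ℕ) (hp : p.Prime) (hn : 2 ≤ n) (hj : 2 ≤ j) (hjn : j ≤ n) :
    Nat.card {A : Finset (Fin n → ZMod p) //
        A.card = j + 1 ∧
        ¬ LinearIndependent (ZMod p) (fun x : A => (x.1 : Fin n → ZMod p)) ∧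
        ∀ B ⊂ A, LinearIndependent (ZMod p) (fun x : B => (x.1 : Fin n → ZMod p))} *
      (j + 1).factorial =
    (∏ t ∈ Finset.range j, (p ^ n - p ^ t)) * (p - 1) ^ j := by
  haveI : Fact p.Prime := ⟨hp⟩
  classical
  show Nat.card {A : Finset (Fin n → ZMod p) // mnsP (ZMod p) j A} * (j + 1).factorial = _
  rw [← countP, Nat.card_congr (Equiv.subtypeEquivRight fun v => (key_iff hj v).symm), countQ]
  have hfr : Module.finrank (ZMod p) (Fin n → ZMod p) = n := by
    simp [Module.finrank_pi]
  have e4 : Nat.card {f : Fin j → (Fin n → ZMod p) // LinearIndependent (ZMod p) f}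
      = ∏ t ∈ Finset.range j, (p ^ n - p ^ t) := by
    rw [card_linearIndependent (by rw [hfr]; exact hjn)]
    rw [← Fin.prod_univ_eq_prod_range]
    simp [ZMod.card, hfr]
  have e5 : Nat.card {c : Fin j → ZMod p // ∀ i, c i ≠ 0} = (p - 1) ^ j := by
    have he : {c : Fin j → ZMod p // ∀ i, c i ≠ 0} ≃ (Fin j → {x : ZMod p // x ≠ 0}) :=
      Equiv.subtypePiEquivPi (p := fun _ x => x ≠ 0)
    rw [Nat.card_congr he, Nat.card_pi]
    have hone : Nat.card {x : ZMod p // x ≠ 0} = p - 1 := by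
      rw [Nat.card_eq_fintype_card, Fintype.card_subtype_compl, ZMod.card,
        Fintype.card_subtype_eq (0 : ZMod p)]
    simp [hone]
  rw [e4, e5]
end

section
/- Let p be a prime, k ≤ m, and n ≥ 1. If there exists a nondegenerate simplicial map from Δ^{m+1}_(k+1) to X(F_p^n) (a function f : Fin (m+2) → (Fin n → ZMod p) such that for every finset s of Fin (m+2) with s.card ≤ k+2 the family (f i), i ∈ s, is linearly independent over ZMod p), then there exists a nondegenerate simplicial map from Δ^m_(k) to X(F_p^{n−1}) (a function g : Fin (m+1) → (Fin (n−1) → ZMod p) such that for every finset s of Fin (m+1) with s.card ≤ k+1 the family (g i), i ∈ s, is linearly independent over ZMod p). -/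
/-- If there is a nondegenerate simplicial map `Δ^{m+1}_(k+1) → X(F_p^n)`,
then there is a nondegenerate simplicial map `Δ^m_(k) → X(F_p^{n-1})`. -/
theorem stmt5 (p n m k : ℕ) (hp : p.Prime) (hkm : k ≤ m) (hn : 1 ≤ n)
    (f : Fin (m + 2) → (Fin n → ZMod p))
    (hf : ∀ s : Finset (Fin (m + 2)), s.card ≤ k + 2 →
      LinearIndependent (ZMod p) (fun i : s => f i.1)) :
    ∃ g : Fin (m + 1) → (Fin (n - 1) → ZMod p),
      ∀ s : Finset (Fin (m + 1)), s.card ≤ k + 1 →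
        LinearIndependent (ZMod p) (fun i : s => g i.1) := by
  haveI : Fact p.Prime := ⟨hp⟩
  set x : Fin n → ZMod p := f (Fin.last (m + 1)) with hxdef
  have hx0 : x ≠ 0 := by
    have h := hf {Fin.last (m + 1)} (by simp)
    rw [hxdef]
    simpa using h.ne_zero ⟨Fin.last (m + 1), Finset.mem_singleton_self _⟩
  set S : Submodule (ZMod p) (Fin n → ZMod p) := Submodule.span (ZMod p) {x} with hSdef
  have hfr : Module.finrank (ZMod p) ((Fin n → ZMod p) ⧸ S) = n - 1 := by
    have h1 := Submodule.finrank_quotient_add_finrank S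
    have h2 : Module.finrank (ZMod p) S = 1 := finrank_span_singleton hx0
    have h3 : Module.finrank (ZMod p) (Fin n → ZMod p) = n := by
      simp
    omega
  have e : ((Fin n → ZMod p) ⧸ S) ≃ₗ[ZMod p] (Fin (n - 1) → ZMod p) := by
    apply LinearEquiv.ofFinrankEq
    rw [hfr]; simp
  refine ⟨fun i => e (S.mkQ (f i.castSucc)), ?_⟩
  intro s hs
  have hq : LinearIndependent (ZMod p) (fun i : s => S.mkQ (f i.1.castSucc)) := by
    rw [Fintype.linearIndependent_iff]
    intro c hc
    have hmem : (∑ i : s, c i • f i.1.castSucc) ∈ S := by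
      have h0 : S.mkQ (∑ i : s, c i • f i.1.castSucc) = 0 := by
        rw [map_sum]
        simpa [map_smul] using hc
      rwa [Submodule.mkQ_apply, Submodule.Quotient.mk_eq_zero] at h0
    obtain ⟨a, ha⟩ := Submodule.mem_span_singleton.mp hmem
    -- build the family on Option s
    set w : Option s → Fin (m + 2) := fun o => o.elim (Fin.last (m + 1)) (fun i => i.1.castSucc) with hwdef
    have hwinj : Function.Injective w := by
      intro o₁ o₂ h
      match o₁, o₂ with
      | none, none => rfl
      | none, some i =>
        exact absurd h.symm (Fin.ne_last_of_lt (Fin.castSucc_lt_last i.1))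
      | some i, none =>
        exact absurd h (Fin.ne_last_of_lt (Fin.castSucc_lt_last i.1))
      | some i, some j =>
        simp only [w, Option.elim] at h
        exact congrArg some (Subtype.ext (Fin.castSucc_injective _ h))
    set t : Finset (Fin (m + 2)) := Finset.image w Finset.univ with htdef
    have htcard : t.card ≤ k + 2 := by
      have h1 : t.card ≤ Fintype.card (Option s) := by
        simpa using Finset.card_image_le (s := Finset.univ) (f := w)
      have h2 : Fintype.card (Option s) = s.card + 1 := by
        simp
      omega
    have hind := hf t htcard
    have hw' : Function.Injective (fun o : Option s => (⟨w o, Finset.mem_image_of_mem w (Finset.mem_univ o)⟩ : t)) := by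
      intro o₁ o₂ h
      exact hwinj (congrArg Subtype.val h)
    have hind2 := hind.comp _ hw'
    rw [Fintype.linearIndependent_iff] at hind2
    set d : Option s → ZMod p := fun o => o.elim (-a) c with hddef
    have hsum : ∑ o : Option s, d o • f (w o) = 0 := by
      rw [Fintype.sum_option]
      simp only [d, w, Option.elim]
      rw [← ha]
      show -a • x + a • x = 0
      module
    intro i
    have := hind2 d (by simpa [Function.comp] using hsum) (some i)
    simpa [d] using this
  exact hq.map' e.toLinearMap e.ker
end

section
/- Let p be a prime and k ≤ m. If there exists a nondegenerate simplicial map from Δ^m_(k) to X(F_p^n), then there exists a nondegenerate simplicial map from Δ^{m+1}_(k) to X(F_p^{n+1}); that is, if there is f : Fin (m+1) → (Fin n → ZMod p) such that for every finset s of Fin (m+1) with s.card ≤ k+1 the family (f i), i ∈ s, is linearly independent over ZMod p, then there is g : Fin (m+2) → (Fin (n+1) → ZMod p) such that for every finset s of Fin (m+2) with s.card ≤ k+1 the family (g i), i ∈ s, is linearly independent over ZMod p. -/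
/-- If there is a nondegenerate simplicial map `Δ^m_(k) → X(F_p^n)`,
then there is a nondegenerate simplicial map `Δ^{m+1}_(k) → X(F_p^{n+1})`. -/
theorem stmt6 (p n m k : ℕ) (hp : p.Prime) (hkm : k ≤ m)
    (f : Fin (m + 1) → (Fin n → ZMod p))
    (hf : ∀ s : Finset (Fin (m + 1)), s.card ≤ k + 1 →
      LinearIndependent (ZMod p) (fun i : s => f i.1)) :
    ∃ g : Fin (m + 2) → (Fin (n + 1) → ZMod p),
      ∀ s : Finset (Fin (m + 2)), s.card ≤ k + 1 →
        LinearIndependent (ZMod p) (fun i : s => g i.1) := by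
  classical
  refine ⟨Fin.snoc (fun a => Fin.snoc (f a) 0) (Fin.snoc 0 1), ?_⟩
  intro s hs
  set g : Fin (m + 2) → Fin (n + 1) → ZMod p :=
    Fin.snoc (fun a => Fin.snoc (f a) 0) (Fin.snoc 0 1) with hg
  rw [Fintype.linearIndependent_iff]
  intro c hc i
  -- extend c to all of Fin (m+2) by 0
  set C : Fin (m + 2) → ZMod p := fun j => if h : j ∈ s then c ⟨j, h⟩ else 0 with hC
  have hceq : ∀ i : s, c i = C i.1 := by
    intro i; simp [hC, i.2]
  have hsum : ∑ j : Fin (m + 2), C j • g j = 0 := by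
    have h1 : ∑ j : Fin (m + 2), C j • g j = ∑ j ∈ s, C j • g j := by
      symm
      apply Finset.sum_subset (Finset.subset_univ s)
      intro x _ hx
      simp [hC, hx]
    have h2 : ∑ j ∈ s, C j • g j = ∑ i : s, c i • g i.1 := by
      rw [← Finset.sum_attach s (fun j => C j • g j)]
      exact Finset.sum_congr rfl (fun i _ => by rw [hceq])
    rw [h1, h2, hc]
  -- last coordinate: coefficient of the last vector vanishes
  have hsum' : ∑ a : Fin (m + 1), C a.castSucc • g a.castSucc + C (Fin.last (m + 1)) • g (Fin.last (m + 1)) = 0 := by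
    rw [← Fin.sum_univ_castSucc (fun j => C j • g j)]; exact hsum
  have hgcs : ∀ a : Fin (m + 1), g a.castSucc = Fin.snoc (f a) 0 := by
    intro a; simp [hg]
  have hglast : g (Fin.last (m + 1)) = Fin.snoc (0 : Fin n → ZMod p) 1 := by simp [hg]
  have hlast : C (Fin.last (m + 1)) = 0 := by
    have := congrFun hsum' (Fin.last n)
    simp only [Finset.sum_apply, Pi.add_apply, Pi.smul_apply, Pi.zero_apply] at this
    simp only [hgcs, hglast, Fin.snoc_last, smul_eq_mul, mul_zero, mul_one,
      Finset.sum_const_zero, zero_add] at this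
    simpa using this
  -- first n coordinates
  have hcoord : ∀ a : Fin (m + 1), C a.castSucc = 0 := by
    set s' : Finset (Fin (m + 1)) := s.preimage Fin.castSucc
      (Fin.castSucc_injective _).injOn with hs'
    have hmem : ∀ a : Fin (m + 1), a ∈ s' ↔ a.castSucc ∈ s := by
      intro a; simp [hs']
    have hs'card : s'.card ≤ k + 1 := by
      calc s'.card ≤ s.card := Finset.card_le_card_of_injOn Fin.castSucc
            (fun a ha => (hmem a).1 ha) (Fin.castSucc_injective _).injOn
        _ ≤ k + 1 := hs
    have hli := (Fintype.linearIndependent_iff.1 (hf s' hs'card))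
    have hsumf : ∑ a : Fin (m + 1), C a.castSucc • f a = 0 := by
      funext j
      have := congrFun hsum' j.castSucc
      simp only [Finset.sum_apply, Pi.add_apply, Pi.smul_apply, Pi.zero_apply] at this
      simpa [hgcs, hglast, Fin.snoc_castSucc] using this
    have hsub : ∑ a : s', (fun b : s' => C b.1.castSucc) a • f a.1 = 0 := by
      have : ∑ a ∈ s', C a.castSucc • f a = 0 := by
        rw [← hsumf]
        apply Finset.sum_subset (Finset.subset_univ s')
        intro x _ hx
        have : C x.castSucc = 0 := by
          simp only [hC]
          rw [dif_neg]
          intro h; exact hx ((hmem x).2 h)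
        simp [this]
      rw [← Finset.sum_attach s' (fun a => C a.castSucc • f a)] at this
      exact this
    have key := hli (fun b : s' => C b.1.castSucc) hsub
    intro a
    by_cases ha : a ∈ s'
    · exact key ⟨a, ha⟩
    · simp only [hC]
      rw [dif_neg]
      intro h; exact ha ((hmem a).2 h)
  have : ∀ j : Fin (m + 2), C j = 0 := by
    intro j
    exact Fin.lastCases (motive := fun j => C j = 0) hlast hcoord j
  rw [hceq i, this]
end

section
/- Let p be a prime and n, m, k natural numbers with k ≤ m. If (p−1)·C(m,1) + (p−1)^2·C(m,2) + ⋯ + (p−1)^k·C(m,k) < p^n − 1 (where C(m,i) denotes the binomial coefficient), then there exists a nondegenerate simplicial map from Δ^m_(k) to X(F_p^n), i.e., a function f : Fin (m+1) → (Fin n → ZMod p) such that for every finset s of Fin (m+1) with s.card ≤ k+1 the family (f i), i ∈ s, is linearly independent over ZMod p. -/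
open Finset

/-- If `(p−1)·C(m,1) + (p−1)²·C(m,2) + ⋯ + (p−1)^k·C(m,k) < p^n − 1`, then there
exists a nondegenerate simplicial map `Δ^m_(k) → X(F_p^n)`. -/
theorem stmt7 (p n m k : ℕ) (hp : p.Prime) (hkm : k ≤ m)
    (h : ∑ i ∈ Finset.Icc 1 k, (p - 1) ^ i * m.choose i < p ^ n - 1) :
    ∃ f : Fin (m + 1) → (Fin n → ZMod p),
      ∀ s : Finset (Fin (m + 1)), s.card ≤ k + 1 →
        LinearIndependent (ZMod p) (fun i : s => f i.1) := by
  haveI : Fact p.Prime := ⟨hp⟩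
  classical
  have hcardV : Fintype.card (Fin n → ZMod p) = p ^ n := by
    simp [ZMod.card]
  have key : ∀ j, j ≤ m + 1 → ∃ f : Fin j → (Fin n → ZMod p),
      ∀ c : Fin j → ZMod p, (univ.filter fun i => c i ≠ 0).card ≤ k + 1 →
        ∑ i, c i • f i = 0 → c = 0 := by
    intro j hj
    induction j with
    | zero => exact ⟨fun _ => 0, fun c _ _ => funext fun i => i.elim0⟩
    | succ j ih =>
      obtain ⟨f, hf⟩ := ih (le_trans (Nat.le_succ j) hj)
      have hjm : j ≤ m := by omega
      set A : Finset (Fin j) → Finset (Fin n → ZMod p) := fun s =>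
        Finset.image (fun c : ↥s → (ZMod p)ˣ => ∑ i : ↥s, (c i : ZMod p) • f i.1)
          Finset.univ with hA
      set Bad : Finset (Fin n → ZMod p) :=
        (univ.filter fun s : Finset (Fin j) => s.card ≤ k).biUnion A with hBad
      have hmem : ∀ c : Fin j → ZMod p, (univ.filter fun i => c i ≠ 0).card ≤ k →
          (∑ i, c i • f i) ∈ Bad := by
        intro c hc
        set s : Finset (Fin j) := univ.filter fun i => c i ≠ 0 with hs
        have hsum : ∑ i, c i • f i = ∑ i : ↥s, (c i.1) • f i.1 := by
          rw [Finset.sum_coe_sort s (fun i => c i • f i)]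
          refine (Finset.sum_filter_of_ne ?_).symm
          intro i _ hci
          exact fun h0 => hci (by rw [h0, zero_smul])
        rw [hsum]
        refine Finset.mem_biUnion.2 ⟨s, by simp [hc], ?_⟩
        exact Finset.mem_image.2 ⟨fun i => Units.mk0 (c i.1)
          (Finset.mem_filter.1 i.2).2, Finset.mem_univ _, rfl⟩
      have hcard : Bad.card < p ^ n := by
        have h1 : Bad.card ≤ ∑ s ∈ univ.filter fun s : Finset (Fin j) => s.card ≤ k,
            (p - 1) ^ s.card := by
          refine le_trans (Finset.card_biUnion_le) (Finset.sum_le_sum ?_)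
          intro s _
          refine le_trans (Finset.card_image_le) ?_
          have : Fintype.card (↥s → (ZMod p)ˣ) = (p - 1) ^ s.card := by
            rw [Fintype.card_fun]
            simp [ZMod.card_units_eq_totient, Nat.totient_prime hp]
          rw [← this]
          exact le_of_eq (Finset.card_univ)
        have h2 : (univ.filter fun s : Finset (Fin j) => s.card ≤ k) =
            (Finset.range (k+1)).biUnion fun i => Finset.powersetCard i univ := by
          ext s
          simp [Nat.lt_succ_iff, Finset.mem_powersetCard]
        have h3 : ∑ s ∈ univ.filter fun s : Finset (Fin j) => s.card ≤ k,
            (p - 1) ^ s.card = ∑ i ∈ Finset.range (k+1), j.choose i * (p-1)^i := by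
          rw [h2, Finset.sum_biUnion]
          · refine Finset.sum_congr rfl fun i _ => ?_
            rw [Finset.sum_congr rfl fun s hs =>
              by rw [(Finset.mem_powersetCard.1 hs).2]]
            rw [Finset.sum_const, Finset.card_powersetCard, Finset.card_univ,
              Fintype.card_fin, smul_eq_mul]
          · intro a _ b _ hab
            simp only [Finset.disjoint_left]
            intro s hsa hsb
            exact hab ((Finset.mem_powersetCard.1 hsa).2.symm.trans
              (Finset.mem_powersetCard.1 hsb).2)
        have h4 : ∑ i ∈ Finset.range (k+1), j.choose i * (p-1)^i ≤
            1 + ∑ i ∈ Finset.Icc 1 k, (p - 1) ^ i * m.choose i := by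
          have hr : Finset.range (k+1) = insert 0 (Finset.Icc 1 k) := by
            ext i; simp [Nat.lt_succ_iff]; omega
          rw [hr, Finset.sum_insert (by simp)]
          simp only [Nat.choose_zero_right, pow_zero, mul_one, one_mul]
          refine Nat.add_le_add le_rfl (Finset.sum_le_sum fun i _ => ?_)
          rw [mul_comm]
          exact Nat.mul_le_mul le_rfl (Nat.choose_le_choose i hjm)
        have h5 : 1 ≤ p ^ n := Nat.one_le_pow _ _ hp.pos
        omega
      obtain ⟨v, hv⟩ : ∃ v : Fin n → ZMod p, v ∉ Bad := by
        by_contra hcon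
        push_neg at hcon
        have : (Finset.univ : Finset (Fin n → ZMod p)) ⊆ Bad := fun x _ => hcon x
        have := Finset.card_le_card this
        rw [Finset.card_univ, hcardV] at this
        omega
      refine ⟨Fin.snoc f v, ?_⟩
      intro c hsupp hsum
      rw [Fin.sum_univ_castSucc] at hsum
      simp only [Fin.snoc_castSucc, Fin.snoc_last] at hsum
      have himage : ∀ d : Fin (j+1) → ZMod p,
          (univ.filter fun i : Fin j => d i.castSucc ≠ 0).card ≤
          (univ.filter fun i : Fin (j+1) => d i ≠ 0).card - (if d (Fin.last j) ≠ 0 then 1 else 0) := by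
        intro d
        have hle : (univ.filter fun i : Fin j => d i.castSucc ≠ 0).card ≤
            ((univ.filter fun i : Fin (j+1) => d i ≠ 0).erase (Fin.last j)).card := by
          refine Finset.card_le_card_of_injOn (fun i => i.castSucc) ?_ ?_
          · intro i hi
            refine Finset.mem_erase.2 ⟨?_, ?_⟩
            · exact (Fin.castSucc_lt_last i).ne
            · simpa using (Finset.mem_filter.1 hi).2
          · intro a _ b _ hab
            exact Fin.castSucc_injective _ hab
        by_cases hdl : d (Fin.last j) = 0
        · rw [if_neg (by simp [hdl])]
          exact le_trans hle (le_trans (Finset.card_erase_le) (by omega))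
        · rw [if_pos (by simp [hdl])]
          rw [Finset.card_erase_of_mem (by simp [hdl])] at hle
          exact hle
      by_cases hl : c (Fin.last j) = 0
      · rw [hl, zero_smul, add_zero] at hsum
        have hcs : (univ.filter fun i : Fin j => c i.castSucc ≠ 0).card ≤ k + 1 := by
          have h0 := himage c
          rw [if_neg (by simp [hl])] at h0
          omega
        have := hf (fun i => c i.castSucc) hcs hsum
        funext i
        refine Fin.lastCases hl (fun i => ?_) i
        exact congrFun this i
      · exfalso
        apply hv
        have hveq : v = ∑ i : Fin j, (-(c (Fin.last j))⁻¹ * c i.castSucc) • f i := by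
          have : c (Fin.last j) • v = -∑ i : Fin j, c i.castSucc • f i := by
            rw [eq_neg_iff_add_eq_zero, add_comm]; exact hsum
          calc v = (c (Fin.last j))⁻¹ • (c (Fin.last j) • v) := by
                rw [smul_smul, inv_mul_cancel₀ hl, one_smul]
            _ = ∑ i : Fin j, (-(c (Fin.last j))⁻¹ * c i.castSucc) • f i := by
                rw [this, smul_neg, Finset.smul_sum]
                rw [← Finset.sum_neg_distrib]
                refine Finset.sum_congr rfl fun i _ => ?_
                rw [smul_smul, neg_mul, neg_smul]
        rw [hveq]
        apply hmem
        have hsub : (univ.filter fun i : Fin j =>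
            (-(c (Fin.last j))⁻¹ * c i.castSucc) ≠ 0) =
            (univ.filter fun i : Fin j => c i.castSucc ≠ 0) := by
          ext i
          simp [mul_ne_zero_iff, inv_ne_zero hl, hl]
        rw [hsub]
        have h0 := himage c
        rw [if_pos (by simp [hl])] at h0
        omega
  obtain ⟨f, hf⟩ := key (m+1) le_rfl
  refine ⟨f, fun s hs => ?_⟩
  rw [Fintype.linearIndependent_iff]
  intro g hg i
  set c : Fin (m+1) → ZMod p := fun i => if h : i ∈ s then g ⟨i, h⟩ else 0 with hc
  have hsupp : (univ.filter fun i => c i ≠ 0) ⊆ s := by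
    intro i hi
    by_contra hns
    simp [hc, hns] at hi
  have hcount : (univ.filter fun i => c i ≠ 0).card ≤ k + 1 :=
    le_trans (Finset.card_le_card hsupp) hs
  have hsum : ∑ i, c i • f i = 0 := by
    rw [← Finset.sum_subset (Finset.subset_univ s)
      (by intro i _ hi; simp [hc, hi])]
    rw [← Finset.sum_attach s (fun i => c i • f i)]
    rw [← hg]
    refine Finset.sum_congr rfl fun i _ => ?_
    simp [hc, i.2]
  have := hf c hcount hsum
  have := congrFun this i.1
  simpa [hc, i.2] using this
end

section
/- Let p be a prime and 0 ≤ k ≤ m−1. Then: (i) there exists a nondegenerate simplicial map from Δ^m_(k) to X(F_p^m), i.e., a function f : Fin (m+1) → (Fin m → ZMod p) such that for every finset s of Fin (m+1) with s.card ≤ k+1 the family (f i), i ∈ s, is linearly independent over ZMod p; and (ii) there is no nondegenerate simplicial map from Δ^m_(k) to X(F_p^k), i.e., no function g : Fin (m+1) → (Fin k → ZMod p) such that for every finset s of Fin (m+1) with s.card ≤ k+1 the family (g i), i ∈ s, is linearly independent over ZMod p. (Equivalently, 1 ≤ s_p(Δ^m_(k)) ≤ m − k.) -/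
/-- For `0 ≤ k ≤ m−1`: there is a nondegenerate simplicial map
`Δ^m_(k) → X(F_p^m)`, and there is no nondegenerate simplicial map
`Δ^m_(k) → X(F_p^k)`.  (Equivalently `1 ≤ s_p(Δ^m_(k)) ≤ m − k`.) -/
theorem stmt8 (p m k : ℕ) (hp : p.Prime) (hkm : k + 1 ≤ m) :
    (∃ f : Fin (m + 1) → (Fin m → ZMod p),
      ∀ s : Finset (Fin (m + 1)), s.card ≤ k + 1 →
        LinearIndependent (ZMod p) (fun i : s => f i.1)) ∧
    ¬ (∃ g : Fin (m + 1) → (Fin k → ZMod p),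
      ∀ s : Finset (Fin (m + 1)), s.card ≤ k + 1 →
        LinearIndependent (ZMod p) (fun i : s => g i.1)) := by
  haveI := Fact.mk hp
  constructor
  · refine ⟨fun i j => if (i : ℕ) = (j : ℕ) then 1 else if (i : ℕ) = m then 1 else 0,
      fun s hs => ?_⟩
    rw [Fintype.linearIndependent_iff]
    intro c hc
    -- L is the "last" vertex
    set L : Fin (m + 1) := Fin.last m with hL
    have hval : ∀ j : Fin m, ∀ i : Fin (m+1), ((i:ℕ) = (j:ℕ) → False) → ((i:ℕ) = m → False) →
        (if (i : ℕ) = (j : ℕ) then (1 : ZMod p) else if (i : ℕ) = m then 1 else 0) = 0 := by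
      intro j i h1 h2
      rw [if_neg h1, if_neg h2]
    have heval : ∀ j : Fin m, (∑ i : s, c i *
        (if ((i:Fin (m+1)) : ℕ) = (j:ℕ) then (1:ZMod p) else if ((i:Fin (m+1)):ℕ) = m then 1 else 0)) = 0 := by
      intro j
      have := congrFun hc j
      simpa [Finset.sum_apply] using this
    -- Step 1: c at L is zero (if L ∈ s)
    have hcL : ∀ hLs : L ∈ s, c ⟨L, hLs⟩ = 0 := by
      intro hLs
      -- find j0 : Fin m with castSucc j0 ∉ s
      have hj0 : ∃ j0 : Fin m, (j0.castSucc) ∉ s := by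
        by_contra h
        push_neg at h
        have hsub : insert L (Finset.univ.image Fin.castSucc) ⊆ s := by
          intro x hx
          rcases Finset.mem_insert.mp hx with rfl | hx
          · exact hLs
          · obtain ⟨j, _, rfl⟩ := Finset.mem_image.mp hx
            exact h j
        have hcard : (insert L (Finset.univ.image Fin.castSucc)).card = m + 1 := by
          rw [Finset.card_insert_of_notMem, Finset.card_image_of_injective _
            (Fin.castSucc_injective m), Finset.card_univ, Fintype.card_fin]
          simp only [Finset.mem_image]
          rintro ⟨j, _, hj⟩
          have := congrArg Fin.val hj
          simp [hL] at this
          omega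
        have := Finset.card_le_card hsub
        omega
      obtain ⟨j0, hj0⟩ := hj0
      have := heval j0
      rw [Finset.sum_eq_single (⟨L, hLs⟩ : s)] at this
      · simpa [hL] using this
      · intro b _ hb
        apply mul_eq_zero_of_right
        apply hval j0
        · intro hbj
          apply hj0
          have : (b : Fin (m+1)) = j0.castSucc := by
            apply Fin.ext
            simpa using hbj
          rw [← this]; exact b.2
        · intro hbm
          apply hb
          apply Subtype.ext
          apply Fin.ext
          simpa [hL] using hbm
      · intro h; exact absurd (Finset.mem_univ _) h
    -- Step 2: all coefficients zero
    intro i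
    by_cases him : (i : Fin (m+1)) = L
    · have : (⟨L, him ▸ i.2⟩ : s) = i := by
        apply Subtype.ext; exact him.symm
      rw [← this]; exact hcL _
    · have hivm : ((i : Fin (m+1)) : ℕ) < m := by
        have := (i : Fin (m+1)).isLt
        have hne : ((i : Fin (m+1)) : ℕ) ≠ m := fun h => him (Fin.ext (by simp [hL, h]))
        omega
      have := heval ⟨(i : Fin (m+1)), hivm⟩
      rw [Finset.sum_eq_single i] at this
      · simpa using this
      · intro b _ hb
        by_cases hbm : ((b : Fin (m+1)) : ℕ) = m
        · have hbL : (b : Fin (m+1)) = L := Fin.ext (by simp [hL, hbm])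
          have hb0 : c b = 0 := by
            have h := hcL (hbL ▸ b.2)
            rwa [show (⟨L, hbL ▸ b.2⟩ : s) = b from Subtype.ext hbL.symm] at h
          exact mul_eq_zero_of_left hb0 _
        · apply mul_eq_zero_of_right
          apply hval
          · intro hbj
            exact hb (Subtype.ext (Fin.ext (by simpa using hbj)))
          · exact fun h => hbm h
      · intro h; exact absurd (Finset.mem_univ _) h
  · rintro ⟨g, hg⟩
    obtain ⟨t, -, ht⟩ := Finset.exists_subset_card_eq (s := (Finset.univ : Finset (Fin (m+1)))) (n := k+1) (by simp; omega)
    have hli := hg t (le_of_eq ht)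
    have := hli.fintype_card_le_finrank
    rw [Fintype.card_coe, ht] at this
    simp [Module.finrank_pi] at this
end

section
/- Let p be a prime and 0 ≤ k ≤ m−1 with m ≤ p. Then there exists a nondegenerate simplicial map from Δ^m_(k) to X(F_p^{k+1}), i.e., a function f : Fin (m+1) → (Fin (k+1) → ZMod p) such that for every finset s of Fin (m+1) with s.card ≤ k+1 the family (f i), i ∈ s, is linearly independent over ZMod p. (Consequently s_p(Δ^m_(k)) = m − k.) -/
/-- Workhorse: if the power sums `∑_{i∈s} c i * x i ^ j` vanish for all `j < s.card`,
with `x` injective on `s`, then all `c i` (for `i ∈ s`) vanish.  Proof via Lagrange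
interpolation basis polynomials. -/
lemma keyC {F : Type*} [Field F] {ι : Type*} [DecidableEq ι] (s : Finset ι) (x : ι → F)
    (hx : Set.InjOn x s) (c : ι → F)
    (h : ∀ j : ℕ, j < s.card → ∑ i ∈ s, c i * x i ^ j = 0) :
    ∀ i ∈ s, c i = 0 := by
  intro i0 hi0
  set L := Lagrange.basis s x i0 with hLdef
  have hdeg : L.natDegree < s.card := by
    rw [hLdef, Lagrange.natDegree_basis hx hi0]
    exact Nat.sub_lt (Finset.card_pos.mpr ⟨i0, hi0⟩) one_pos
  have key : c i0 = ∑ i ∈ s, c i * L.eval (x i) := by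
    rw [Finset.sum_eq_single i0]
    · rw [Lagrange.eval_basis_self hx hi0, mul_one]
    · intro b hb hne
      rw [Lagrange.eval_basis_of_ne (Ne.symm hne) hb, mul_zero]
    · intro hns; exact absurd hi0 hns
  rw [key]
  have heval : ∀ i ∈ s, c i * L.eval (x i)
      = ∑ j ∈ Finset.range s.card, L.coeff j * (c i * x i ^ j) := by
    intro i _
    rw [Polynomial.eval_eq_sum_range' hdeg, Finset.mul_sum]
    exact Finset.sum_congr rfl fun j _ => by ring
  rw [Finset.sum_congr rfl heval, Finset.sum_comm]
  refine Finset.sum_eq_zero fun j hj => ?_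
  rw [← Finset.mul_sum, h j (Finset.mem_range.mp hj), mul_zero]

/-- For `0 ≤ k ≤ m−1` and `m ≤ p`: there is a nondegenerate simplicial map
`Δ^m_(k) → X(F_p^{k+1})`.  (Consequently `s_p(Δ^m_(k)) = m − k`.) -/
theorem stmt9 (p m k : ℕ) (hp : p.Prime) (hkm : k + 1 ≤ m) (hmp : m ≤ p) :
    ∃ f : Fin (m + 1) → (Fin (k + 1) → ZMod p),
      ∀ s : Finset (Fin (m + 1)), s.card ≤ k + 1 →
        LinearIndependent (ZMod p) (fun i : s => f i.1) := by
  classical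
  haveI : Fact p.Prime := ⟨hp⟩
  -- the extended rational normal curve: moment curve points plus the point at infinity
  set f : Fin (m + 1) → (Fin (k + 1) → ZMod p) :=
    fun i j => if (i : ℕ) = p then (if (j : ℕ) = k then 1 else 0)
      else ((i : ℕ) : ZMod p) ^ (j : ℕ) with hf
  set x : Fin (m + 1) → ZMod p := fun i => ((i : ℕ) : ZMod p) with hxdef
  refine ⟨f, fun s hs => ?_⟩
  rw [Fintype.linearIndependent_iff]
  intro g hg
  set c : Fin (m + 1) → ZMod p := fun i => if h : i ∈ s then g ⟨i, h⟩ else 0 with hc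
  -- injectivity of `x` off the value `p`
  have hxinj : ∀ i i' : Fin (m + 1), (i : ℕ) ≠ p → (i' : ℕ) ≠ p → x i = x i' → i = i' := by
    intro i i' hi hi' hxx
    have h1 : (i : ℕ) < p := lt_of_le_of_ne (le_trans (Nat.lt_succ_iff.mp i.2) hmp) hi
    have h2 : (i' : ℕ) < p := lt_of_le_of_ne (le_trans (Nat.lt_succ_iff.mp i'.2) hmp) hi'
    have hval := congrArg ZMod.val hxx
    simp only [hxdef] at hval
    rw [ZMod.val_cast_of_lt h1, ZMod.val_cast_of_lt h2] at hval
    exact Fin.ext hval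
  -- the coordinate equations
  have hsum : ∀ jf : Fin (k + 1), ∑ i ∈ s, c i * f i jf = 0 := by
    intro jf
    have h0 := congrFun hg jf
    rw [Finset.sum_apply] at h0
    rw [show (0 : Fin (k+1) → ZMod p) jf = 0 from rfl] at h0
    rw [← Finset.sum_coe_sort s (fun i => c i * f i jf)]
    rw [← h0]
    refine Finset.sum_congr rfl fun i _ => ?_
    simp [hc, i.2, smul_eq_mul]
  set s' : Finset (Fin (m + 1)) := s.filter (fun i : Fin (m+1) => ¬ i.val = p) with hs'
  have hsplit : ∀ jf : Fin (k + 1),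
      (∑ i ∈ s.filter (fun i : Fin (m+1) => i.val = p), c i * f i jf)
        + ∑ i ∈ s', c i * f i jf = 0 := by
    intro jf
    rw [Finset.sum_filter_add_sum_filter_not]
    exact hsum jf
  have hcard' : s'.card ≤ s.card := Finset.card_filter_le _ _
  -- vanishing of power sums over s'
  have h1 : ∀ j : ℕ, j < s'.card → ∑ i ∈ s', c i * x i ^ j = 0 := by
    intro j hj
    have hjk : j < k + 1 := lt_of_lt_of_le hj (le_trans hcard' hs)
    have heq := hsplit ⟨j, hjk⟩
    have hmain : ∑ i ∈ s', c i * f i ⟨j, hjk⟩ = ∑ i ∈ s', c i * x i ^ j := by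
      refine Finset.sum_congr rfl fun i hi => ?_
      have : ¬ (i : ℕ) = p := (Finset.mem_filter.mp hi).2
      simp [hf, hxdef, this]
    have hinf : ∑ i ∈ s.filter (fun i : Fin (m+1) => i.val = p), c i * f i ⟨j, hjk⟩ = 0 := by
      by_cases hjeqk : j = k
      · -- then s'.card ≥ k+1 = s.card, so the filter-of-p part is empty
        have hfull : s.filter (fun i : Fin (m+1) => i.val = p) = ∅ := by
          by_contra hne
          obtain ⟨i0, hi0⟩ := Finset.nonempty_of_ne_empty hne
          have hcards : (s.filter (fun i : Fin (m+1) => i.val = p)).card + s'.card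
              = s.card := by
            rw [hs']
            exact Finset.card_filter_add_card_filter_not
              (s := s) (p := fun i : Fin (m+1) => i.val = p)
          have hge1 : 1 ≤ (s.filter (fun i : Fin (m+1) => i.val = p)).card :=
            Finset.card_pos.mpr ⟨i0, hi0⟩
          omega
        rw [hfull, Finset.sum_empty]
      · refine Finset.sum_eq_zero fun i hi => ?_
        have hip : (i : ℕ) = p := (Finset.mem_filter.mp hi).2
        simp [hf, hip, hjeqk]
    rw [hmain, hinf, zero_add] at heq
    exact heq
  have hxinjOn : Set.InjOn x s' := by
    intro a ha b hb hab
    exact hxinj a b (Finset.mem_filter.mp ha).2 (Finset.mem_filter.mp hb).2 hab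
  have h2 : ∀ i ∈ s', c i = 0 := keyC s' x hxinjOn c h1
  -- the point at infinity also has zero coefficient
  have h3 : ∀ i ∈ s, (i : ℕ) = p → c i = 0 := by
    intro i0 hi0 hi0p
    have hkf : k < k + 1 := Nat.lt_succ_self k
    have heq := hsplit ⟨k, hkf⟩
    have hzero : ∑ i ∈ s', c i * f i ⟨k, hkf⟩ = 0 :=
      Finset.sum_eq_zero fun i hi => by rw [h2 i hi, zero_mul]
    have hsingle : s.filter (fun i : Fin (m+1) => i.val = p) = {i0} := by
      apply Finset.eq_singleton_iff_unique_mem.mpr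
      refine ⟨Finset.mem_filter.mpr ⟨hi0, hi0p⟩, fun j hj => ?_⟩
      have hjp : (j : ℕ) = p := (Finset.mem_filter.mp hj).2
      exact Fin.ext (by rw [hjp, hi0p])
    rw [hzero, add_zero, hsingle, Finset.sum_singleton] at heq
    have hfval : f i0 ⟨k, hkf⟩ = 1 := by simp [hf, hi0p]
    rw [hfval, mul_one] at heq
    exact heq
  intro i
  have hgc : g i = c i := by simp [hc, i.2]
  rw [hgc]
  by_cases hip : (i : ℕ) = p
  · exact h3 i i.2 hip
  · exact h2 i (Finset.mem_filter.mpr ⟨i.2, hip⟩)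
end

section
/- Let p be a prime, m ≥ 2, and 0 ≤ k ≤ m−1 with k % p ≠ p−1. Then there exists a nondegenerate simplicial map from Δ^m_(k) to X(F_p^{m−1}) (a function f : Fin (m+1) → (Fin (m−1) → ZMod p) such that for every finset s of Fin (m+1) with s.card ≤ k+1 the family (f i), i ∈ s, is linearly independent over ZMod p) if and only if m ≥ k + k/p + 2, where k/p denotes the floor of k divided by p. (Equivalently, s_p(Δ^m_(k)) ≥ 2 if and only if m ≥ k + ⌊k/p⌋ + 2.) -/
open Finset

def dcol (p j : ℕ) : ZMod p × ZMod p := if j < p then (1, (j : ZMod p)) else (0, 1)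

lemma dcol_unique {p : ℕ} (hp : p.Prime) {a b : ZMod p} (hab : ¬(a = 0 ∧ b = 0))
    {j j' : ℕ} (hj : j ≤ p) (hj' : j' ≤ p)
    (e : a * (dcol p j).1 + b * (dcol p j).2 = 0)
    (e' : a * (dcol p j').1 + b * (dcol p j').2 = 0) : j = j' := by
  haveI := Fact.mk hp
  by_cases h1 : j < p <;> by_cases h2 : j' < p
  · simp only [dcol, if_pos h1, if_pos h2, mul_one] at e e'
    have hb : b ≠ 0 := by
      rintro rfl
      simp only [zero_mul, add_zero] at e
      exact hab ⟨e, rfl⟩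
    have hcast : (j : ZMod p) = (j' : ZMod p) := by
      have hsub : b * ((j : ZMod p) - (j' : ZMod p)) = 0 := by linear_combination e - e'
      rcases mul_eq_zero.mp hsub with h | h
      · exact absurd h hb
      · exact sub_eq_zero.mp h
    calc j = ((j : ZMod p)).val := (ZMod.val_cast_of_lt h1).symm
    _ = ((j' : ZMod p)).val := by rw [hcast]
    _ = j' := ZMod.val_cast_of_lt h2
  · exfalso
    simp only [dcol, if_pos h1, if_neg h2, mul_one, mul_zero, zero_add] at e e'
    subst e'
    simp only [zero_mul, add_zero] at e
    exact hab ⟨e, rfl⟩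
  · exfalso
    simp only [dcol, if_pos h2, if_neg h1, mul_one, mul_zero, zero_add] at e e'
    subst e
    simp only [zero_mul, add_zero] at e'
    exact hab ⟨e', rfl⟩
  · omega

def ccol (p k n : ℕ) : ZMod p × ZMod p :=
  if n < (p + 1) * (k / p) then dcol p (n % (p + 1))
  else if n < (p + 1) * (k / p) + (k % p + 3) then dcol p (n - (p + 1) * (k / p))
  else (0, 0)

lemma ccol_zero_card {p m k : ℕ} (hp : p.Prime) (hk : k % p ≠ p - 1)
    (hm : k + k / p + 2 ≤ m) {a b : ZMod p} (hab : ¬(a = 0 ∧ b = 0)) :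
    (((Finset.range (m + 1)).filter
        fun n => a * (ccol p k n).1 + b * (ccol p k n).2 = 0)).card + (k + 2) ≤ m + 1 := by
  obtain ⟨q, hqd⟩ : ∃ q, k / p = q := ⟨_, rfl⟩
  obtain ⟨r, hrm⟩ : ∃ r, k % p = r := ⟨_, rfl⟩
  have hp2 : 2 ≤ p := hp.two_le
  have hrp : r + 2 ≤ p := by
    have h1 := Nat.mod_lt k (show 0 < p by omega)
    omega
  have hk1 : p * q + r = k := by
    have h := Nat.div_add_mod k p
    rw [hqd, hrm] at h
    exact h
  have hm' : k + q + 2 ≤ m := by rw [hqd] at hm; exact hm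
  have hA : (p + 1) * q = p * q + q := by ring
  have hd1 : ∀ n, n < (p + 1) * q → ccol p k n = dcol p (n % (p + 1)) := by
    intro n h
    rw [ccol, hqd, if_pos h]
  have hd2 : ∀ n, (p + 1) * q ≤ n → n < (p + 1) * q + (r + 3) →
      ccol p k n = dcol p (n - (p + 1) * q) := by
    intro n hge hlt
    have hcc : ¬ (n < (p + 1) * q) := by omega
    rw [ccol, hqd, hrm, if_neg hcc, if_pos hlt]
  have hsub : (Finset.range (m + 1)).filter
        (fun n => a * (ccol p k n).1 + b * (ccol p k n).2 = 0) ⊆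
      (((Finset.range ((p + 1) * q)).filter
          (fun n => a * (ccol p k n).1 + b * (ccol p k n).2 = 0)) ∪
        ((Finset.Ico ((p + 1) * q) ((p + 1) * q + (r + 3))).filter
          (fun n => a * (ccol p k n).1 + b * (ccol p k n).2 = 0))) ∪
      Finset.Ico ((p + 1) * q + (r + 3)) (m + 1) := by
    intro n hn
    simp only [Finset.mem_filter, Finset.mem_range] at hn
    by_cases hc1 : n < (p + 1) * q
    · exact Finset.mem_union_left _ (Finset.mem_union_left _
        (Finset.mem_filter.mpr ⟨Finset.mem_range.mpr hc1, hn.2⟩))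
    · by_cases hc2 : n < (p + 1) * q + (r + 3)
      · exact Finset.mem_union_left _ (Finset.mem_union_right _
          (Finset.mem_filter.mpr ⟨Finset.mem_Ico.mpr ⟨by omega, hc2⟩, hn.2⟩))
      · exact Finset.mem_union_right _ (Finset.mem_Ico.mpr ⟨by omega, by omega⟩)
  have h3 : (Finset.Ico ((p + 1) * q + (r + 3)) (m + 1)).card
      = m + 1 - ((p + 1) * q + (r + 3)) := Nat.card_Ico _ _
  -- part 1
  have h1 : (((Finset.range ((p + 1) * q)).filter
      (fun n => a * (ccol p k n).1 + b * (ccol p k n).2 = 0))).card ≤ q := by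
    have hfib := Finset.card_le_mul_card_image (f := fun n => n % (p + 1))
      ((Finset.range ((p + 1) * q)).filter
        (fun n => a * (ccol p k n).1 + b * (ccol p k n).2 = 0)) q ?_
    · have himg : (((Finset.range ((p + 1) * q)).filter
          (fun n => a * (ccol p k n).1 + b * (ccol p k n).2 = 0)).image
            fun n => n % (p + 1)).card ≤ 1 := by
        apply Finset.card_le_one.mpr
        intro x hx y hy
        simp only [Finset.mem_image, Finset.mem_filter, Finset.mem_range] at hx hy
        obtain ⟨n, ⟨hnA, hnP⟩, rfl⟩ := hx
        obtain ⟨n', ⟨hnA', hnP'⟩, rfl⟩ := hy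
        rw [hd1 n hnA] at hnP
        rw [hd1 n' hnA'] at hnP'
        have hb1 : n % (p + 1) ≤ p := by
          have := Nat.mod_lt n (show 0 < p + 1 by omega); omega
        have hb2 : n' % (p + 1) ≤ p := by
          have := Nat.mod_lt n' (show 0 < p + 1 by omega); omega
        exact dcol_unique hp hab hb1 hb2 hnP hnP'
      calc (((Finset.range ((p + 1) * q)).filter
          (fun n => a * (ccol p k n).1 + b * (ccol p k n).2 = 0))).card
          ≤ q * _ := hfib
      _ ≤ q * 1 := Nat.mul_le_mul_left q himg
      _ = q := by omega
    · intro bb _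
      have hcc : #(((Finset.range ((p + 1) * q)).filter
            (fun n => a * (ccol p k n).1 + b * (ccol p k n).2 = 0)).filter
              (fun n => n % (p + 1) = bb)) ≤ #(Finset.range q) := by
        apply Finset.card_le_card_of_injOn (fun n => n / (p + 1))
        · intro n hn
          simp only [Finset.coe_filter, Set.mem_setOf_eq, Finset.mem_coe, Finset.mem_filter, Finset.mem_range] at hn ⊢
          exact Nat.div_lt_of_lt_mul (m := n) (n := p + 1) (k := q) (by omega)
        · intro x hx y hy hxy
          simp only [Finset.coe_filter, Set.mem_setOf_eq, Finset.mem_filter,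
            Finset.mem_range] at hx hy
          have hxy' : x / (p + 1) = y / (p + 1) := hxy
          have dx := Nat.div_add_mod x (p + 1)
          have dy := Nat.div_add_mod y (p + 1)
          rw [hxy'] at dx
          omega
      simpa using hcc
  -- part 2
  have h2 : (((Finset.Ico ((p + 1) * q) ((p + 1) * q + (r + 3))).filter
      (fun n => a * (ccol p k n).1 + b * (ccol p k n).2 = 0))).card ≤ 1 := by
    apply Finset.card_le_one.mpr
    intro x hx y hy
    simp only [Finset.mem_filter, Finset.mem_Ico] at hx hy
    have ex := hx.2
    have ey := hy.2
    rw [hd2 x hx.1.1 hx.1.2] at ex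
    rw [hd2 y hy.1.1 hy.1.2] at ey
    have heq := dcol_unique hp hab (show x - (p + 1) * q ≤ p by omega)
      (show y - (p + 1) * q ≤ p by omega) ex ey
    omega
  have hcs := Finset.card_le_card hsub
  have hu2 := Finset.card_union_le
    (((Finset.range ((p + 1) * q)).filter
        (fun n => a * (ccol p k n).1 + b * (ccol p k n).2 = 0)) ∪
      ((Finset.Ico ((p + 1) * q) ((p + 1) * q + (r + 3))).filter
        (fun n => a * (ccol p k n).1 + b * (ccol p k n).2 = 0)))
    (Finset.Ico ((p + 1) * q + (r + 3)) (m + 1))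
  have hu1 := Finset.card_union_le
    ((Finset.range ((p + 1) * q)).filter
        (fun n => a * (ccol p k n).1 + b * (ccol p k n).2 = 0))
    ((Finset.Ico ((p + 1) * q) ((p + 1) * q + (r + 3))).filter
        (fun n => a * (ccol p k n).1 + b * (ccol p k n).2 = 0))
  omega


lemma ccol_weight {p m k : ℕ} (hp : p.Prime) (hk : k % p ≠ p - 1)
    (hm : k + k / p + 2 ≤ m) (a b : ZMod p)
    (h : (Finset.univ.filter fun i : Fin (m + 1) =>
      ¬(a * (ccol p k i.val).1 + b * (ccol p k i.val).2 = 0)).card ≤ k + 1) :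
    a = 0 ∧ b = 0 := by
  by_contra hab
  have hcard := ccol_zero_card hp hk hm hab (a := a) (b := b)
  -- transfer Fin filter card to range filter card
  have htrans : (Finset.univ.filter fun i : Fin (m + 1) =>
      a * (ccol p k i.val).1 + b * (ccol p k i.val).2 = 0).card
      = ((Finset.range (m + 1)).filter
        fun n => a * (ccol p k n).1 + b * (ccol p k n).2 = 0).card := by
    apply Finset.card_bij (fun i _ => i.val)
    · intro i hi
      simp only [Finset.mem_filter, Finset.mem_univ, true_and] at hi
      simp only [Finset.mem_filter, Finset.mem_range]
      exact ⟨i.isLt, hi⟩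
    · intro i _ j _ hij
      exact Fin.val_injective hij
    · intro n hn
      simp only [Finset.mem_filter, Finset.mem_range] at hn
      exact ⟨⟨n, hn.1⟩, by simp [hn.2], rfl⟩
  have hsplit := Finset.card_filter_add_card_filter_not
    (s := (Finset.univ : Finset (Fin (m + 1))))
    (fun i => a * (ccol p k i.val).1 + b * (ccol p k i.val).2 = 0)
  simp only [Finset.card_univ, Fintype.card_fin] at hsplit
  omega

lemma exists_good_map {p m k : ℕ} (hp : p.Prime) (hk : k % p ≠ p - 1)
    (hge : k + k / p + 2 ≤ m) :
    ∃ f : Fin (m + 1) → (Fin (m - 1) → ZMod p),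
      ∀ s : Finset (Fin (m + 1)), s.card ≤ k + 1 →
        LinearIndependent (ZMod p) (fun i : s => f i.1) := by
  haveI := Fact.mk hp
  set u : Fin (m + 1) → ZMod p := fun i => (ccol p k i.val).1 with hu
  set v : Fin (m + 1) → ZMod p := fun i => (ccol p k i.val).2 with hv
  have hfe : ∀ (a b : ZMod p) (i : Fin (m + 1)),
      (a • u + b • v) i = a * (ccol p k i.val).1 + b * (ccol p k i.val).2 := by
    intro a b i
    simp [hu, hv]
  -- min weight property
  have hmin : ∀ x : Fin (m + 1) → ZMod p, x ∈ Submodule.span (ZMod p) {u, v} →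
      (Finset.univ.filter fun i => ¬(x i = 0)).card ≤ k + 1 → x = 0 := by
    intro x hx hcard
    obtain ⟨a, b, rfl⟩ := Submodule.mem_span_pair.mp hx
    have hfilter : (Finset.univ.filter fun i => ¬((a • u + b • v) i = 0))
        = (Finset.univ.filter fun i : Fin (m + 1) =>
            ¬(a * (ccol p k i.val).1 + b * (ccol p k i.val).2 = 0)) :=
      Finset.filter_congr (fun i _ => by rw [hfe a b i])
    rw [hfilter] at hcard
    obtain ⟨ha, hb⟩ := ccol_weight hp hk hge a b hcard
    rw [ha, hb]
    simp
  -- linear independence of u, v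
  have hli : LinearIndependent (ZMod p) ![u, v] := by
    rw [LinearIndependent.pair_iff]
    intro a b hab
    refine ccol_weight hp hk hge a b ?_
    have hempty : (Finset.univ.filter fun i : Fin (m + 1) =>
        ¬(a * (ccol p k i.val).1 + b * (ccol p k i.val).2 = 0)) = ∅ := by
      apply Finset.filter_eq_empty_iff.mpr
      intro i _
      rw [not_not, ← hfe a b i, hab]
      rfl
    rw [hempty]
    simp
  set C := Submodule.span (ZMod p) ({u, v} : Set (Fin (m + 1) → ZMod p)) with hC
  have hrange : Set.range ![u, v] = {u, v} := by
    ext x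
    simp [Matrix.range_cons, Matrix.range_empty]
    tauto
  have hC2 : Module.finrank (ZMod p) C = 2 := by
    rw [hC, ← hrange, finrank_span_eq_card hli]
    simp
  have hV : Module.finrank (ZMod p) (Fin (m + 1) → ZMod p) = m + 1 := by
    simp [Module.finrank_pi]
  have hQ : Module.finrank (ZMod p) ((Fin (m + 1) → ZMod p) ⧸ C) = m - 1 := by
    have hq := Submodule.finrank_quotient_add_finrank C
    rw [hV, hC2] at hq
    omega
  have hW : Module.finrank (ZMod p) (Fin (m - 1) → ZMod p) = m - 1 := by
    simp [Module.finrank_pi]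
  let e := LinearEquiv.ofFinrankEq ((Fin (m + 1) → ZMod p) ⧸ C) (Fin (m - 1) → ZMod p)
    (by rw [hQ, hW])
  set L : (Fin (m + 1) → ZMod p) →ₗ[ZMod p] (Fin (m - 1) → ZMod p) :=
    e.toLinearMap.comp C.mkQ with hL
  set δ : Fin (m + 1) → (Fin (m + 1) → ZMod p) := fun i => Pi.single i 1 with hδ
  refine ⟨fun i => L (δ i), ?_⟩
  intro s hs
  rw [Fintype.linearIndependent_iff]
  intro c hc
  have hLx : L (∑ i : s, c i • δ (i : Fin (m + 1))) = 0 := by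
    rw [map_sum]
    simpa [map_smul] using hc
  have hxC : (∑ i : s, c i • δ (i : Fin (m + 1))) ∈ C := by
    have h1 : e (C.mkQ (∑ i : s, c i • δ (i : Fin (m + 1)))) = 0 := hLx
    have h2 := (LinearEquiv.map_eq_zero_iff e).mp h1
    rw [Submodule.mkQ_apply] at h2
    exact (Submodule.Quotient.mk_eq_zero C).mp h2
  have hx0 : (∑ i : s, c i • δ (i : Fin (m + 1))) = 0 := by
    apply hmin _ hxC
    refine le_trans (Finset.card_le_card ?_) hs
    intro i hi
    simp only [Finset.mem_filter, Finset.mem_univ, true_and] at hi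
    by_contra his
    apply hi
    rw [Finset.sum_apply]
    apply Finset.sum_eq_zero
    intro j _
    have hne : (j : Fin (m + 1)) ≠ i := fun h => his (h ▸ j.2)
    simp only [hδ, Pi.smul_apply, smul_eq_mul]
    rw [Pi.single_eq_of_ne hne.symm]
    ring
  intro i0
  have hev := congrFun hx0 (i0 : Fin (m + 1))
  rw [Finset.sum_apply] at hev
  have hsum : ∑ j : s, (c j • δ (j : Fin (m + 1))) (i0 : Fin (m + 1))
      = (c i0 • δ (i0 : Fin (m + 1))) (i0 : Fin (m + 1)) := by
    apply Fintype.sum_eq_single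
    intro j hj
    have hne : (j : Fin (m + 1)) ≠ (i0 : Fin (m + 1)) := fun h => hj (Subtype.ext h)
    simp only [hδ, Pi.smul_apply, smul_eq_mul]
    rw [Pi.single_eq_of_ne hne.symm]
    ring
  rw [hsum] at hev
  simpa [hδ] using hev


lemma percoord {p : ℕ} [NeZero p] (hp : p.Prime) (a b : ZMod p) :
    ((∑ t : ZMod p, if ¬(a + t * b = 0) then 1 else 0) +
      if ¬(b = 0) then 1 else 0) ≤ p := by
  haveI := Fact.mk hp
  by_cases hb : b = 0
  · subst hb
    by_cases ha : a = 0
    · simp [ha]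
    · simp [ha, Finset.sum_const, Finset.card_univ, ZMod.card]
  · have hone : (Finset.univ.filter fun t : ZMod p => a + t * b = 0) = {(-a) * b⁻¹} := by
      ext t
      simp only [Finset.mem_filter, Finset.mem_univ, true_and, Finset.mem_singleton]
      constructor
      · intro h
        have ht : t * b = -a := by linear_combination h
        rw [← ht]
        field_simp
      · intro h
        subst h
        field_simp
        ring
    have hsplit := Finset.card_filter_add_card_filter_not
      (s := (Finset.univ : Finset (ZMod p))) (fun t : ZMod p => a + t * b = 0)
    rw [hone] at hsplit
    have hsum : (∑ t : ZMod p, if ¬(a + t * b = 0) then 1 else 0)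
        = (Finset.univ.filter fun t : ZMod p => ¬(a + t * b = 0)).card :=
      (Finset.card_filter _ _).symm
    rw [hsum, if_pos hb]
    simp only [Finset.card_singleton, Finset.card_univ, ZMod.card] at hsplit
    omega

set_option maxHeartbeats 1000000 in
lemma forward_bound {p m k : ℕ} (hp : p.Prime)
    (f : Fin (m + 1) → (Fin (m - 1) → ZMod p)) (hm : 2 ≤ m)
    (H : ∀ s : Finset (Fin (m + 1)), s.card ≤ k + 1 →
        LinearIndependent (ZMod p) (fun i : s => f i.1)) :
    k + k / p + 2 ≤ m := by
  haveI := Fact.mk hp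
  haveI : NeZero p := ⟨hp.pos.ne'⟩
  set T : (Fin (m + 1) → ZMod p) →ₗ[ZMod p] (Fin (m - 1) → ZMod p) :=
    { toFun := fun c => ∑ i, c i • f i
      map_add' := by
        intro x y
        simp [add_smul, Finset.sum_add_distrib]
      map_smul' := by
        intro r x
        simp [Finset.smul_sum, mul_smul] } with hT
  -- weight bound on kernel elements
  have hwt : ∀ w : Fin (m + 1) → ZMod p, T w = 0 → w ≠ 0 →
      k + 2 ≤ (Finset.univ.filter fun i => ¬(w i = 0)).card := by
    intro w hw hw0
    by_contra hlt
    push_neg at hlt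
    set s := Finset.univ.filter fun i => ¬(w i = 0) with hsdef
    have hli := H s (by omega)
    rw [Fintype.linearIndependent_iff] at hli
    have hsum : ∑ i : s, w i.1 • f i.1 = 0 := by
      rw [Finset.sum_coe_sort s (fun i => w i • f i)]
      rw [Finset.sum_subset (Finset.subset_univ s)]
      · exact hw
      · intro i _ his
        have : w i = 0 := by
          by_contra hne
          exact his (Finset.mem_filter.mpr ⟨Finset.mem_univ i, hne⟩)
        rw [this, zero_smul]
    have hzero := hli (fun i => w i.1) hsum
    apply hw0
    funext i
    by_cases hi : w i = 0
    · exact hi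
    · exact hzero ⟨i, Finset.mem_filter.mpr ⟨Finset.mem_univ i, hi⟩⟩
  -- kernel has dimension ≥ 2
  have hrank := LinearMap.finrank_range_add_finrank_ker T
  have hrle : Module.finrank (ZMod p) (LinearMap.range T) ≤ m - 1 := by
    refine le_trans (Submodule.finrank_le _) ?_
    simp [Module.finrank_pi]
  have hVr : Module.finrank (ZMod p) (Fin (m + 1) → ZMod p) = m + 1 := by
    simp [Module.finrank_pi]
  rw [hVr] at hrank
  have hker : 2 ≤ Module.finrank (ZMod p) (LinearMap.ker T) := by omega
  set bk := Module.finBasis (ZMod p) (LinearMap.ker T) with hbk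
  set u' := bk ⟨0, by omega⟩ with hu'
  set v' := bk ⟨1, by omega⟩ with hv'
  have hpair : ∀ a b : ZMod p, a • u' + b • v' = 0 → a = 0 ∧ b = 0 := by
    intro a b hab
    have hinj : Function.Injective
        (![⟨0, by omega⟩, ⟨1, by omega⟩] :
          Fin 2 → Fin (Module.finrank (ZMod p) (LinearMap.ker T))) := by
      intro i j hij
      fin_cases i <;> fin_cases j
      · rfl
      · exact absurd (congrArg Fin.val hij) (by norm_num)
      · exact absurd (congrArg Fin.val hij) (by norm_num)
      · rfl
    have hli2 : LinearIndependent (ZMod p) ![u', v'] := by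
      have hcomp := bk.linearIndependent.comp _ hinj
      convert hcomp using 1
      funext i
      fin_cases i <;> rfl
    exact LinearIndependent.pair_iff.mp hli2 a b hab
  have hpairV : ∀ a b : ZMod p,
      a • (u' : Fin (m + 1) → ZMod p) + b • (v' : Fin (m + 1) → ZMod p) = 0 →
        a = 0 ∧ b = 0 := by
    intro a b hab
    apply hpair a b
    apply Subtype.ext
    rw [Submodule.coe_add, SetLike.val_smul, SetLike.val_smul, ZeroMemClass.coe_zero]
    exact hab
  -- codeword family
  have hcw : ∀ t : ZMod p,
      T ((u' : Fin (m + 1) → ZMod p) + t • (v' : Fin (m + 1) → ZMod p)) = 0 := by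
    intro t
    have h1 : T u'.1 = 0 := u'.2
    have h2 : T v'.1 = 0 := v'.2
    rw [map_add, map_smul, h1, h2, smul_zero, add_zero]
  have hcwne : ∀ t : ZMod p,
      (u' : Fin (m + 1) → ZMod p) + t • (v' : Fin (m + 1) → ZMod p) ≠ 0 := by
    intro t h0
    rw [← one_smul (ZMod p) ((u' : Fin (m + 1) → ZMod p))] at h0
    exact one_ne_zero ((hpairV 1 t h0).1)
  have hvne : (v' : Fin (m + 1) → ZMod p) ≠ 0 := by
    intro h0
    have h1 : (0 : ZMod p) • (u' : Fin (m + 1) → ZMod p) +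
        (1 : ZMod p) • (v' : Fin (m + 1) → ZMod p) = 0 := by
      rw [zero_smul, one_smul, zero_add]
      exact h0
    exact one_ne_zero ((hpairV 0 1 h1).2)
  have hTv : T (v' : Fin (m + 1) → ZMod p) = 0 := v'.2
  -- double counting
  set wt : (Fin (m + 1) → ZMod p) → ℕ :=
    fun x => (Finset.univ.filter fun i => ¬(x i = 0)).card with hwtdef
  have hlower : p * (k + 2) + (k + 2) ≤
      (∑ t : ZMod p, wt ((u' : Fin (m + 1) → ZMod p) + t • (v' : Fin (m + 1) → ZMod p)))
        + wt (v' : Fin (m + 1) → ZMod p) := by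
    have h1 : ∀ t : ZMod p, k + 2 ≤
        wt ((u' : Fin (m + 1) → ZMod p) + t • (v' : Fin (m + 1) → ZMod p)) :=
      fun t => hwt _ (hcw t) (hcwne t)
    have h2 : k + 2 ≤ wt (v' : Fin (m + 1) → ZMod p) := hwt _ hTv hvne
    have h3 : p * (k + 2) ≤ ∑ t : ZMod p,
        wt ((u' : Fin (m + 1) → ZMod p) + t • (v' : Fin (m + 1) → ZMod p)) := by
      calc p * (k + 2) = (Finset.univ : Finset (ZMod p)).card * (k + 2) := by
            rw [Finset.card_univ, ZMod.card]
      _ ≤ _ := Finset.card_nsmul_le_sum _ _ _ (fun t _ => h1 t)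
    omega
  have hwtsum : ∀ x : Fin (m + 1) → ZMod p,
      wt x = ∑ i : Fin (m + 1), if ¬(x i = 0) then 1 else 0 := by
    intro x
    rw [hwtdef]
    exact Finset.card_filter _ _
  have hupper :
      (∑ t : ZMod p, wt ((u' : Fin (m + 1) → ZMod p) + t • (v' : Fin (m + 1) → ZMod p)))
        + wt (v' : Fin (m + 1) → ZMod p) ≤ (m + 1) * p := by
    calc (∑ t : ZMod p, wt ((u' : Fin (m + 1) → ZMod p) + t • (v' : Fin (m + 1) → ZMod p)))
          + wt (v' : Fin (m + 1) → ZMod p)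
        = (∑ t : ZMod p, ∑ i : Fin (m + 1),
            if ¬((u' : Fin (m + 1) → ZMod p) i + t * (v' : Fin (m + 1) → ZMod p) i = 0)
              then 1 else 0)
          + ∑ i : Fin (m + 1),
              if ¬((v' : Fin (m + 1) → ZMod p) i = 0) then 1 else 0 := by
          rw [hwtsum]
          congr 1
          refine Finset.sum_congr rfl fun t _ => ?_
          rw [hwtsum]
          refine Finset.sum_congr rfl fun i _ => ?_
          have hiff : (((u' : Fin (m + 1) → ZMod p) + t • (v' : Fin (m + 1) → ZMod p)) i = 0)
              ↔ ((u' : Fin (m + 1) → ZMod p) i + t * (v' : Fin (m + 1) → ZMod p) i = 0) := by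
            simp
          simp only [hiff]
    _ = ∑ i : Fin (m + 1), ((∑ t : ZMod p,
            if ¬((u' : Fin (m + 1) → ZMod p) i + t * (v' : Fin (m + 1) → ZMod p) i = 0)
              then 1 else 0)
          + if ¬((v' : Fin (m + 1) → ZMod p) i = 0) then 1 else 0) := by
          rw [Finset.sum_comm, ← Finset.sum_add_distrib]
    _ ≤ ∑ _i : Fin (m + 1), p :=
          Finset.sum_le_sum fun i _ =>
            percoord hp ((u' : Fin (m + 1) → ZMod p) i) ((v' : Fin (m + 1) → ZMod p) i)
    _ = (m + 1) * p := by
          rw [Finset.sum_const, Finset.card_univ, Fintype.card_fin, smul_eq_mul]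
  -- conclude
  have hdiv : k / p * p ≤ k := Nat.div_mul_le_self k p
  have hcomm1 : p * (k / p) = k / p * p := by ring
  have hsplit : p * (k + 2 + k / p) = p * (k + 2) + p * (k / p) := by ring
  have hcomm2 : (m + 1) * p = p * (m + 1) := by ring
  have hfin : p * (k + 2 + k / p) < p * (m + 1) := by omega
  have : k + 2 + k / p < m + 1 := by
    by_contra hc
    push_neg at hc
    have := Nat.mul_le_mul_left p hc
    omega
  omega


/-- For `m ≥ 2`, `0 ≤ k ≤ m−1`, and `k % p ≠ p−1`: there is a nondegenerate
simplicial map `Δ^m_(k) → X(F_p^{m−1})` iff `m ≥ k + ⌊k/p⌋ + 2`.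
(Equivalently, `s_p(Δ^m_(k)) ≥ 2` iff `m ≥ k + ⌊k/p⌋ + 2`.) -/
theorem stmt10 (p m k : ℕ) (hp : p.Prime) (hm : 2 ≤ m) (hkm : k + 1 ≤ m)
    (hk : k % p ≠ p - 1) :
    (∃ f : Fin (m + 1) → (Fin (m - 1) → ZMod p),
      ∀ s : Finset (Fin (m + 1)), s.card ≤ k + 1 →
        LinearIndependent (ZMod p) (fun i : s => f i.1)) ↔
    k + k / p + 2 ≤ m := by
  constructor
  · rintro ⟨f, H⟩
    exact forward_bound hp f hm H
  · intro hge
    exact exists_good_map hp hk hge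
end

section
/- Let p be a prime, m ≥ 2, and 0 ≤ k ≤ m−1 with k % p = p−1. Then there exists a nondegenerate simplicial map from Δ^m_(k) to X(F_p^{m−1}) (a function f : Fin (m+1) → (Fin (m−1) → ZMod p) such that for every finset s of Fin (m+1) with s.card ≤ k+1 the family (f i), i ∈ s, is linearly independent over ZMod p) if and only if m ≥ k + k/p + 3, where k/p denotes the floor of k divided by p. (Equivalently, s_p(Δ^m_(k)) ≥ 2 if and only if m ≥ k + ⌊k/p⌋ + 3.) -/
open Finset

section helpers

variable {p : ℕ} [Fact p.Prime]

/-- Weight lemma: any nonzero linear relation among the `f i` has support of size ≥ k+2. -/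
lemma wt_lemma {n N k : ℕ} (f : Fin N → (Fin n → ZMod p))
    (hf : ∀ s : Finset (Fin N), s.card ≤ k + 1 →
        LinearIndependent (ZMod p) (fun i : s => f i.1))
    (w : Fin N → ZMod p) (hw : ∑ i, w i • f i = 0) (hw0 : w ≠ 0) :
    k + 2 ≤ (univ.filter (fun i => w i ≠ 0)).card := by
  by_contra h
  push_neg at h
  set s := univ.filter (fun i => w i ≠ 0) with hs
  have hcard : s.card ≤ k + 1 := by omega
  have hli := hf s hcard
  rw [Fintype.linearIndependent_iff] at hli
  have hsum : ∑ i : s, w i.1 • f i.1 = 0 := by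
    rw [Finset.sum_coe_sort s (fun i => w i • f i)]
    rw [← hw]
    refine Finset.sum_subset (Finset.subset_univ s) (fun i _ hi => ?_)
    have : w i = 0 := by
      by_contra hne
      exact hi (by simp [hs, hne])
    simp [this]
  have hz := hli (fun i => w i.1) hsum
  apply hw0
  funext i
  by_cases hi : i ∈ s
  · exact hz ⟨i, hi⟩
  · simp only [Pi.zero_apply]
    by_contra hne
    exact hi (by simp [hs, hne])

lemma orth_pair {a b x y x' y' : ZMod p} (hdet : x * y' ≠ x' * y)
    (h1 : a * x + b * y = 0) (h2 : a * x' + b * y' = 0) : a = 0 ∧ b = 0 := by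
  have ha : a * (x * y' - x' * y) = 0 := by linear_combination y' * h1 - y * h2
  have ha0 : a = 0 := by
    rcases mul_eq_zero.mp ha with h | h
    · exact h
    · exact absurd (sub_eq_zero.mp h) hdet
  refine ⟨ha0, ?_⟩
  rw [ha0] at h1 h2
  simp only [zero_mul, zero_add] at h1 h2
  by_contra hb
  have hy : y = 0 := by rcases mul_eq_zero.mp h1 with h | h; exact absurd h hb; exact h
  have hy' : y' = 0 := by rcases mul_eq_zero.mp h2 with h | h; exact absurd h hb; exact h
  apply hdet
  rw [hy, hy', mul_zero, mul_zero]

end helpers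

lemma arith_fwd {p m k q : ℕ} (hk1 : k + 1 = p * q + p)
    (key : (p + 1) * (k + 2) ≤ (m + 1) * p) : k + q + 3 ≤ m := by
  by_contra h
  push_neg at h
  have e1 : (p + 1) * (k + 2) = p * (k + 2) + (k + 2) := by ring
  have e2 : (m + 1) * p = p * (m + 1) := by ring
  have h3 : p * (m + 1) ≤ p * (k + q + 3) := Nat.mul_le_mul_left p (by omega)
  have e3 : p * (k + q + 3) = p * (k + 2) + (p * q + p) := by ring
  omega

lemma arith_bwd {p m k q : ℕ} (hp : 2 ≤ p) (hk1 : k + 1 = p * q + p)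
    (hge : k + q + 3 ≤ m) : (m + 1) / (p + 1) + k + 2 < m + 1 := by
  set d := (m + 1) / (p + 1) with hd
  have hdpm : d * (p + 1) ≤ m + 1 := Nat.div_mul_le_self _ _
  have e : d * (p + 1) = d * p + d := by ring
  by_cases hdq : d ≤ q + 1
  · omega
  · have h1 : (q + 2) * p ≤ d * p := Nat.mul_le_mul_right p (by omega)
    have e2 : (q + 2) * p = p * q + p + p := by ring
    omega

lemma forward_count {p m k : ℕ} [Fact p.Prime] (hm : 2 ≤ m)
    (f : Fin (m + 1) → (Fin (m - 1) → ZMod p))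
    (hf : ∀ s : Finset (Fin (m + 1)), s.card ≤ k + 1 →
        LinearIndependent (ZMod p) (fun i : s => f i.1)) :
    (p + 1) * (k + 2) ≤ (m + 1) * p := by
  classical
  set L : (Fin (m + 1) → ZMod p) →ₗ[ZMod p] (Fin (m - 1) → ZMod p) :=
    { toFun := fun w => ∑ i, w i • f i
      map_add' := fun x y => by
        simp only [Pi.add_apply, add_smul, Finset.sum_add_distrib]
      map_smul' := fun c x => by
        simp only [Pi.smul_apply, smul_eq_mul, RingHom.id_apply, Finset.smul_sum, ← smul_smul]
        } with hL
  have hdom : Module.finrank (ZMod p) (Fin (m + 1) → ZMod p) = m + 1 := by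
    simp [Module.finrank_fintype_fun_eq_card]
  have hrk := LinearMap.finrank_range_add_finrank_ker L
  rw [hdom] at hrk
  have hrange : Module.finrank (ZMod p) (LinearMap.range L) ≤ m - 1 := by
    have h1 := Submodule.finrank_le (LinearMap.range L)
    have h2 : Module.finrank (ZMod p) (Fin (m - 1) → ZMod p) = m - 1 := by
      simp [Module.finrank_fintype_fun_eq_card]
    omega
  have hker : 2 ≤ Module.finrank (ZMod p) (LinearMap.ker L) := by omega
  let b := Module.finBasis (ZMod p) (LinearMap.ker L)
  let i0 : Fin (Module.finrank (ZMod p) (LinearMap.ker L)) := ⟨0, by omega⟩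
  let i1 : Fin (Module.finrank (ZMod p) (LinearMap.ker L)) := ⟨1, by omega⟩
  set u : Fin (m + 1) → ZMod p := ((b i0 : LinearMap.ker L) : Fin (m + 1) → ZMod p) with hu
  set v : Fin (m + 1) → ZMod p := ((b i1 : LinearMap.ker L) : Fin (m + 1) → ZMod p) with hv
  have hpair : ∀ a c : ZMod p, a • u + c • v = 0 → a = 0 ∧ c = 0 := by
    have hli : LinearIndependent (ZMod p) ![u, v] := by
      have hcomp := b.linearIndependent.comp ![i0, i1] (by
        intro x y hxy
        fin_cases x <;> fin_cases y <;> simp_all [i0, i1, Fin.ext_iff])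
      have hmap := hcomp.map' (LinearMap.ker L).subtype (Submodule.ker_subtype _)
      convert hmap using 1
      funext z
      fin_cases z <;> simp [hu, hv]
      rfl
      rfl
    exact fun a c h => hli.eq_zero_of_pair h
  have huker : L u = 0 := (b i0).2
  have hvker : L v = 0 := (b i1).2
  set R : Finset (ZMod p × ZMod p) :=
    (univ.image fun c : ZMod p => ((1 : ZMod p), c)) ∪ {((0 : ZMod p), (1 : ZMod p))} with hR
  have hinj : Function.Injective (fun c : ZMod p => ((1 : ZMod p), c)) := by
    intro a c h
    exact ((Prod.mk.injEq _ _ _ _).mp h).2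
  have hnotin : ((0 : ZMod p), (1 : ZMod p)) ∉ univ.image fun c : ZMod p => ((1 : ZMod p), c) := by
    simp only [mem_image, mem_univ, true_and, not_exists]
    intro c h
    exact one_ne_zero ((Prod.mk.injEq _ _ _ _).mp h).1
  have hRcard : R.card = p + 1 := by
    rw [hR, card_union_of_disjoint (by simpa [disjoint_singleton_right] using hnotin),
      card_image_of_injective _ hinj, card_univ, card_singleton]
    simp [ZMod.card]
  have hwt : ∀ r ∈ R, k + 2 ≤ (univ.filter fun i : Fin (m + 1) => r.1 * u i + r.2 * v i ≠ 0).card := by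
    intro r hrR
    have hr0 : ¬(r.1 = 0 ∧ r.2 = 0) := by
      rw [hR, mem_union] at hrR
      rcases hrR with h | h
      · obtain ⟨c, -, hc⟩ := mem_image.mp h
        intro hh
        rw [← hc] at hh
        exact one_ne_zero hh.1
      · have h' := mem_singleton.mp h
        intro hh
        rw [h'] at hh
        exact one_ne_zero hh.2
    set wr : Fin (m + 1) → ZMod p := r.1 • u + r.2 • v with hwr
    have hwrk : ∑ i, wr i • f i = 0 := by
      have hzero : L wr = 0 := by
        rw [hwr, map_add, map_smul, map_smul, huker, hvker, smul_zero, smul_zero, add_zero]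
      exact hzero
    have hwr0 : wr ≠ 0 := fun hh => hr0 (hpair r.1 r.2 (by rw [← hwr]; exact hh))
    have hwtw := wt_lemma f hf wr hwrk hwr0
    have hptw : ∀ i, wr i = r.1 * u i + r.2 * v i := fun i => by
      rw [hwr]; simp [smul_eq_mul]
    have hset : (univ.filter (fun i => wr i ≠ 0))
        = (univ.filter fun i : Fin (m + 1) => r.1 * u i + r.2 * v i ≠ 0) := by
      simp only [hptw]
    rw [← hset]
    exact hwtw
  have hcol : ∀ i : Fin (m + 1), (R.filter fun r => r.1 * u i + r.2 * v i ≠ 0).card ≤ p := by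
    intro i
    obtain ⟨r₀, hr₀R, hr₀⟩ : ∃ r ∈ R, r.1 * u i + r.2 * v i = 0 := by
      by_cases hui : u i = 0
      · refine ⟨((1 : ZMod p), 0), ?_, by simp [hui]⟩
        rw [hR]
        exact mem_union_left _ (mem_image.mpr ⟨0, mem_univ _, rfl⟩)
      · by_cases hvi : v i = 0
        · refine ⟨((0 : ZMod p), 1), ?_, by simp [hvi]⟩
          rw [hR]
          exact mem_union_right _ (mem_singleton_self _)
        · refine ⟨((1 : ZMod p), -(u i) * (v i)⁻¹), ?_, ?_⟩
          · rw [hR]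
            exact mem_union_left _ (mem_image.mpr ⟨_, mem_univ _, rfl⟩)
          · field_simp
            ring
    calc (R.filter fun r => r.1 * u i + r.2 * v i ≠ 0).card
        ≤ (R.erase r₀).card := card_le_card (fun r hr => by
          rw [mem_erase]
          have hmf := mem_filter.mp hr
          exact ⟨fun he => hmf.2 (he ▸ hr₀), hmf.1⟩)
      _ ≤ p := by
          rw [card_erase_of_mem hr₀R, hRcard]
          omega
  calc (p + 1) * (k + 2) = ∑ _r ∈ R, (k + 2) := by rw [sum_const, hRcard, smul_eq_mul]
    _ ≤ ∑ r ∈ R, (univ.filter fun i : Fin (m + 1) => r.1 * u i + r.2 * v i ≠ 0).card :=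
        sum_le_sum hwt
    _ = ∑ r ∈ R, ∑ i : Fin (m + 1), (if r.1 * u i + r.2 * v i ≠ 0 then 1 else 0) := by
        refine sum_congr rfl fun r _ => ?_
        rw [card_filter]
    _ = ∑ i : Fin (m + 1), ∑ r ∈ R, (if r.1 * u i + r.2 * v i ≠ 0 then 1 else 0) := sum_comm
    _ ≤ ∑ _i : Fin (m + 1), p := sum_le_sum (fun i _ => by rw [← card_filter]; exact hcol i)
    _ = (m + 1) * p := by rw [sum_const, card_univ, Fintype.card_fin, smul_eq_mul]

lemma backward_construct {p m k q : ℕ} [Fact p.Prime] (hm : 2 ≤ m) (hp2 : 2 ≤ p)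
    (hk1 : k + 1 = p * q + p) (hge : k + q + 3 ≤ m) :
    ∃ f : Fin (m + 1) → (Fin (m - 1) → ZMod p),
      ∀ s : Finset (Fin (m + 1)), s.card ≤ k + 1 →
        LinearIndependent (ZMod p) (fun i : s => f i.1) := by
  classical
  set pt : ℕ → (ZMod p) × (ZMod p) := fun r =>
    if r = 1 then ((0 : ZMod p), 1) else if r = p then (1, 1) else (1, (r : ZMod p)) with hptdef
  set u : Fin (m + 1) → ZMod p := fun i => (pt ((i : ℕ) % (p + 1))).1 with hudef
  set v : Fin (m + 1) → ZMod p := fun i => (pt ((i : ℕ) % (p + 1))).2 with hvdef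
  have hcast : ∀ a b : ℕ, a < p → b < p → ((a : ZMod p) = (b : ZMod p)) → a = b := by
    intro a b ha hb h
    have hval := congrArg ZMod.val h
    rwa [ZMod.val_cast_of_lt ha, ZMod.val_cast_of_lt hb] at hval
  have hpt1 : pt 1 = ((0 : ZMod p), 1) := by rw [hptdef]; simp
  have hptne : ∀ r : ℕ, r ≠ 1 → pt r = (1, if r = p then (1 : ZMod p) else (r : ZMod p)) := by
    intro r h1
    rw [hptdef]
    simp only [if_neg h1]
    split_ifs <;> rfl
  have hdet : ∀ r r' : ℕ, r < p + 1 → r' < p + 1 → r ≠ r' →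
      (pt r).1 * (pt r').2 ≠ (pt r').1 * (pt r).2 := by
    intro r r' hr hr' hne
    by_cases h1 : r = 1
    · subst h1
      rw [hpt1, hptne r' (Ne.symm hne)]
      simp
    · by_cases h1' : r' = 1
      · subst h1'
        rw [hpt1, hptne r h1]
        simp
      · rw [hptne r h1, hptne r' h1']
        simp only [one_mul]
        by_cases hp1 : r = p
        · subst hp1
          rw [if_pos rfl, if_neg (Ne.symm hne)]
          intro hc
          exact h1' (hcast r' 1 (by omega) (by omega) (by rw [hc]; simp))
        · by_cases hp1' : r' = p
          · subst hp1'
            rw [if_pos rfl, if_neg hp1]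
            intro hc
            exact h1 (hcast r 1 (by omega) (by omega) (by rw [← hc]; simp))
          · rw [if_neg hp1', if_neg hp1]
            intro hc
            exact hne (hcast r r' (by omega) (by omega) hc.symm)
  set ix : Fin (m - 1) → Fin (m + 1) := fun j => ⟨(j : ℕ) + 2, by have := j.2; omega⟩ with hixdef
  set i0 : Fin (m + 1) := ⟨0, by omega⟩ with hi0
  set i1 : Fin (m + 1) := ⟨1, by omega⟩ with hi1
  have hi0v : (i0 : ℕ) = 0 := rfl
  have hi1v : (i1 : ℕ) = 1 := rfl
  have hixv : ∀ j : Fin (m - 1), ((ix j : Fin (m + 1)) : ℕ) = (j : ℕ) + 2 := fun j => rfl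
  set f : Fin (m + 1) → Fin (m - 1) → ZMod p := fun i j =>
    if (i : ℕ) = 0 then -(u (ix j)) else if (i : ℕ) = 1 then -(v (ix j))
    else if (i : ℕ) = (j : ℕ) + 2 then 1 else 0 with hfdef
  refine ⟨f, ?_⟩
  intro s hs
  rw [Fintype.linearIndependent_iff]
  intro g hg
  set w : Fin (m + 1) → ZMod p := fun i => if h : i ∈ s then g ⟨i, h⟩ else 0 with hwdef
  have hws : ∀ i : s, w i.1 = g i := by
    intro i
    rw [hwdef]
    simp only [dif_pos i.2]
  have hsum : ∑ i, w i • f i = 0 := by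
    have e1 : ∑ i : Fin (m + 1), w i • f i = ∑ i ∈ s, w i • f i := by
      refine (Finset.sum_subset (subset_univ s) fun i _ hi => ?_).symm
      rw [hwdef]
      simp [dif_neg hi]
    rw [e1, ← Finset.sum_coe_sort s (fun i => w i • f i), ← hg]
    exact Finset.sum_congr rfl fun i _ => by rw [hws i]
  have hcoord : ∀ j : Fin (m - 1),
      w (ix j) = w i0 * u (ix j) + w i1 * v (ix j) := by
    intro j
    have hgj := congrFun hsum j
    rw [Finset.sum_apply] at hgj
    simp only [Pi.smul_apply, smul_eq_mul, Pi.zero_apply] at hgj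
    have hd01 : i0 ≠ i1 := by
      intro h
      have := congrArg Fin.val h
      rw [hi0v, hi1v] at this
      omega
    have hd0j : i0 ≠ ix j := by
      intro h
      have := congrArg Fin.val h
      rw [hi0v, hixv] at this
      omega
    have hd1j : i1 ≠ ix j := by
      intro h
      have := congrArg Fin.val h
      rw [hi1v, hixv] at this
      omega
    have hT : ∑ i ∈ ({i0, i1, ix j} : Finset (Fin (m + 1))), w i * f i j
        = ∑ i : Fin (m + 1), w i * f i j := by
      refine Finset.sum_subset (subset_univ _) fun i _ hi => ?_
      simp only [mem_insert, mem_singleton, not_or] at hi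
      obtain ⟨h0, h1, h2⟩ := hi
      have hv0 : (i : ℕ) ≠ 0 := fun hh => h0 (Fin.ext (by rw [hi0v]; exact hh))
      have hv1 : (i : ℕ) ≠ 1 := fun hh => h1 (Fin.ext (by rw [hi1v]; exact hh))
      have hv2 : (i : ℕ) ≠ (j : ℕ) + 2 := fun hh => h2 (Fin.ext (by rw [hixv]; exact hh))
      rw [hfdef]
      simp only [if_neg hv0, if_neg hv1, if_neg hv2, mul_zero]
    have heq : w i0 * f i0 j + (w i1 * f i1 j + w (ix j) * f (ix j) j) = 0 := by
      rw [← hgj, ← hT, Finset.sum_insert (by simp [hd01, hd0j]),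
        Finset.sum_insert (by simp [hd1j]), Finset.sum_singleton]
    have hf0 : f i0 j = -(u (ix j)) := by
      rw [hfdef]
      simp [hi0v]
    have hf1 : f i1 j = -(v (ix j)) := by
      rw [hfdef]
      simp [hi1v]
    have hfj : f (ix j) j = 1 := by
      rw [hfdef]
      simp [hixv]
    rw [hf0, hf1, hfj] at heq
    linear_combination heq
  have hu0 : u i0 = 1 := by
    rw [hudef]
    simp only [hi0v, Nat.zero_mod]
    rw [hptne 0 (by omega)]
  have hv0 : v i0 = 0 := by
    rw [hvdef]
    simp only [hi0v, Nat.zero_mod]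
    rw [hptne 0 (by omega)]
    simp [show (0 : ℕ) ≠ p by omega]
  have hu1 : u i1 = 0 := by
    rw [hudef]
    simp only [hi1v]
    rw [Nat.mod_eq_of_lt (by omega), hpt1]
  have hv1 : v i1 = 1 := by
    rw [hvdef]
    simp only [hi1v]
    rw [Nat.mod_eq_of_lt (by omega), hpt1]
  have hwall : ∀ i : Fin (m + 1), w i = w i0 * u i + w i1 * v i := by
    intro i
    by_cases h0 : (i : ℕ) = 0
    · have hii : i = i0 := Fin.ext (by rw [hi0v]; exact h0)
      rw [hii, hu0, hv0, mul_one, mul_zero, add_zero]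
    · by_cases h1 : (i : ℕ) = 1
      · have hii : i = i1 := Fin.ext (by rw [hi1v]; exact h1)
        rw [hii, hu1, hv1, mul_zero, mul_one, zero_add]
      · have hj2 : (i : ℕ) - 2 < m - 1 := by have := i.2; omega
        have hii : ix ⟨(i : ℕ) - 2, hj2⟩ = i := Fin.ext (by rw [hixv]; simp; omega)
        rw [← hii]
        exact hcoord ⟨(i : ℕ) - 2, hj2⟩
  by_cases hab : w i0 = 0 ∧ w i1 = 0
  · intro i
    rw [← hws i, hwall i.1, hab.1, hab.2, zero_mul, zero_mul, add_zero]
  · exfalso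
    have hnz_sub : (univ.filter fun i : Fin (m + 1) => ¬ w i = 0) ⊆ s := by
      intro i hi
      rw [mem_filter] at hi
      by_contra hns
      exact hi.2 (by rw [hwdef]; simp [dif_neg hns])
    have hnz_card : (univ.filter fun i : Fin (m + 1) => ¬ w i = 0).card ≤ k + 1 :=
      le_trans (card_le_card hnz_sub) hs
    have htot : (univ.filter fun i : Fin (m + 1) => w i = 0).card
        + (univ.filter fun i : Fin (m + 1) => ¬ w i = 0).card = m + 1 := by
      rw [card_filter_add_card_filter_not, card_univ, Fintype.card_fin]
    have harith := arith_bwd hp2 hk1 hge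
    rcases (univ.filter fun i : Fin (m + 1) => w i = 0).eq_empty_or_nonempty with hZe | ⟨iz, hiz⟩
    · rw [hZe, card_empty] at htot
      omega
    · rw [mem_filter] at hiz
      set r₀ : ℕ := (iz : ℕ) % (p + 1) with hr₀
      have hzfib : (univ.filter fun i : Fin (m + 1) => w i = 0)
          ⊆ (univ.filter fun i : Fin (m + 1) => (i : ℕ) % (p + 1) = r₀) := by
        intro i hi
        rw [mem_filter] at hi ⊢
        refine ⟨mem_univ _, ?_⟩
        by_contra hrne
        have hz1 : w i0 * u i + w i1 * v i = 0 := by rw [← hwall i]; exact hi.2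
        have hz2 : w i0 * u iz + w i1 * v iz = 0 := by rw [← hwall iz]; exact hiz.2
        rw [hudef, hvdef] at hz1 hz2
        simp only [] at hz1 hz2
        rw [← hr₀] at hz2
        have hd := hdet ((i : ℕ) % (p + 1)) r₀ (Nat.mod_lt _ (by omega))
          (by rw [hr₀]; exact Nat.mod_lt _ (by omega)) hrne
        exact hab (orth_pair hd hz1 hz2)
      have hfib_card : (univ.filter fun i : Fin (m + 1) => (i : ℕ) % (p + 1) = r₀).card
          ≤ (m + 1) / (p + 1) + 1 := by
        have hcc : (univ.filter fun i : Fin (m + 1) => (i : ℕ) % (p + 1) = r₀).card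
            ≤ (Finset.range ((m + 1) / (p + 1) + 1)).card := by
          apply Finset.card_le_card_of_injOn (fun i : Fin (m + 1) => (i : ℕ) / (p + 1))
          · intro i _
            rw [Finset.mem_coe, Finset.mem_range, Nat.lt_succ_iff]
            exact Nat.div_le_div_right (by have := i.2; omega)
          · intro i hi i' hi' hdd
            rw [Finset.mem_coe, mem_filter] at hi hi'
            have e1 := (Nat.div_add_mod (i : ℕ) (p + 1)).symm
            have e2 := (Nat.div_add_mod (i' : ℕ) (p + 1)).symm
            rw [hi.2] at e1
            rw [hi'.2] at e2
            have hdd' : (i : ℕ) / (p + 1) = (i' : ℕ) / (p + 1) := hdd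
            rw [hdd'] at e1
            exact Fin.ext (e1.trans e2.symm)
        rwa [Finset.card_range] at hcc
      have hzcard : (univ.filter fun i : Fin (m + 1) => w i = 0).card ≤ (m + 1) / (p + 1) + 1 :=
        le_trans (card_le_card hzfib) hfib_card
      omega

/-- For `m ≥ 2`, `0 ≤ k ≤ m−1`, and `k % p = p−1`: there is a nondegenerate
simplicial map `Δ^m_(k) → X(F_p^{m−1})` iff `m ≥ k + ⌊k/p⌋ + 3`.
(Equivalently, `s_p(Δ^m_(k)) ≥ 2` iff `m ≥ k + ⌊k/p⌋ + 3`.) -/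
theorem stmt11 (p m k : ℕ) (hp : p.Prime) (hm : 2 ≤ m) (hkm : k + 1 ≤ m)
    (hk : k % p = p - 1) :
    (∃ f : Fin (m + 1) → (Fin (m - 1) → ZMod p),
      ∀ s : Finset (Fin (m + 1)), s.card ≤ k + 1 →
        LinearIndependent (ZMod p) (fun i : s => f i.1)) ↔
    k + k / p + 3 ≤ m := by
  haveI := Fact.mk hp
  have hp2 := hp.two_le
  have hk1 : k + 1 = p * (k / p) + p := by
    have := Nat.div_add_mod k p
    omega
  constructor
  · rintro ⟨f, hf⟩
    exact arith_fwd hk1 (forward_count hm f hf)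
  · intro hge
    exact backward_construct hm hp2 hk1 hge
end

section
/- Let p be a prime and m ≥ 2. Then there exists a nondegenerate simplicial map from Δ^m_(m−2) to X(F_p^{m−1}) (a function f : Fin (m+1) → (Fin (m−1) → ZMod p) such that for every finset s of Fin (m+1) with s.card ≤ m−1 the family (f i), i ∈ s, is linearly independent over ZMod p) if and only if m ≤ p. (Equivalently, s_p(Δ^m_(m−2)) = 1 if and only if m ≥ p+1.) -/
open Finset in
lemma sumHelper {K V ι : Type*} [Field K] [AddCommGroup V] [Module K V] {f : ι → V}
    {t : Finset ι} (h : LinearIndependent K (fun i : t => f i.1)) (l : ι → K)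
    (hl : ∑ i ∈ t, l i • f i = 0) : ∀ i ∈ t, l i = 0 := by
  rw [Fintype.linearIndependent_iff] at h
  intro i hi
  exact h (fun j => l j.1) (by rw [← Finset.sum_attach t (fun i => l i • f i)] at hl; exact hl) ⟨i, hi⟩

lemma fwd (p n : ℕ) [Fact p.Prime]
    (f : Fin (n + 3) → Fin (n + 1) → ZMod p)
    (H : ∀ s : Finset (Fin (n + 3)), s.card ≤ n + 1 →
      LinearIndependent (ZMod p) (fun i : s => f i.1)) :
    n + 2 ≤ p := by
  have hι : ∀ k : Fin (n+1), (k : ℕ) < n + 3 := fun k => by omega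
  set ι : Fin (n+1) → Fin (n+3) := fun k => ⟨k, hι k⟩ with hιdef
  have ιinj : Function.Injective ι := by
    intro a b hab
    have h2 := congrArg Fin.val hab
    exact Fin.ext h2
  let ιemb : Fin (n+1) ↪ Fin (n+3) := ⟨ι, ιinj⟩
  -- basis
  have li : LinearIndependent (ZMod p) (f ∘ ι) := by
    have h0 := H (Finset.univ.map ιemb) (by simp)
    have : Function.Injective (fun k : Fin (n+1) =>
        (⟨ι k, by simp [ιemb]⟩ : (Finset.univ.map ιemb : Finset (Fin (n+3))))) := by
      intro a b hab
      exact ιinj (congrArg Subtype.val hab)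
    exact h0.comp _ this
  have hcard : Fintype.card (Fin (n+1)) = Module.finrank (ZMod p) (Fin (n+1) → ZMod p) := by
    simp
  let b := basisOfLinearIndependentOfCardEqFinrank li hcard
  have hb : ∀ k, b k = f (ι k) := fun k => by
    simp [b, coe_basisOfLinearIndependentOfCardEqFinrank]
  set v₁ : Fin (n+3) := ⟨n+1, by omega⟩ with hv₁
  set v₂ : Fin (n+3) := ⟨n+2, by omega⟩ with hv₂
  set a : Fin (n+1) → ZMod p := fun k => b.repr (f v₁) k with ha
  set c : Fin (n+1) → ZMod p := fun k => b.repr (f v₂) k with hc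
  have hrepr₁ : f v₁ = ∑ k, a k • f (ι k) := by
    conv_lhs => rw [← b.sum_repr (f v₁)]
    exact Finset.sum_congr rfl (fun k _ => by rw [hb])
  have hrepr₂ : f v₂ = ∑ k, c k • f (ι k) := by
    conv_lhs => rw [← b.sum_repr (f v₂)]
    exact Finset.sum_congr rfl (fun k _ => by rw [hb])
  have hone : (1 : ZMod p) ≠ 0 := one_ne_zero
  -- claim 1
  have claim1 : ∀ (v : Fin (n+3)) (g : Fin (n+1) → ZMod p), n+1 ≤ (v:ℕ) →
      f v = ∑ k, g k • f (ι k) → ∀ i, g i ≠ 0 := by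
    intro v g hv hre i hgi
    set t : Finset (Fin (n+3)) := insert v ((Finset.univ.erase i).map ιemb) with ht
    have hιv : ∀ k : Fin (n+1), ι k ≠ v := by
      intro k h
      have := congrArg Fin.val h
      simp only [ι] at this
      omega
    have hvnot : v ∉ (Finset.univ.erase i).map ιemb := by
      simp only [Finset.mem_map]
      rintro ⟨k, -, hk⟩
      exact hιv k hk
    have htcard : t.card ≤ n + 1 := by
      rw [ht, Finset.card_insert_of_notMem hvnot, Finset.card_map,
        Finset.card_erase_of_mem (Finset.mem_univ i)]
      simp
    set l : Fin (n+3) → ZMod p :=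
      fun x => if x = v then 1 else if h : (x:ℕ) < n+1 then -g ⟨x, h⟩ else 0 with hldef
    have hlv : l v = 1 := if_pos rfl
    have hlι : ∀ k, l (ι k) = -g k := by
      intro k
      rw [hldef]
      simp only
      rw [if_neg (hιv k), dif_pos (show ((ι k : Fin (n+3)) : ℕ) < n+1 from k.isLt)]
    have hsum : ∑ x ∈ t, l x • f x = 0 := by
      rw [ht, Finset.sum_insert hvnot, Finset.sum_map, hlv, one_smul]
      have e1 : ∑ k ∈ Finset.univ.erase i, l (ιemb k) • f (ιemb k)
          = ∑ k ∈ Finset.univ.erase i, -(g k • f (ι k)) := by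
        refine Finset.sum_congr rfl (fun k _ => ?_)
        show l (ι k) • f (ι k) = _
        rw [hlι k, neg_smul]
      rw [e1, Finset.sum_neg_distrib,
        Finset.sum_erase_eq_sub (Finset.mem_univ i), hgi, zero_smul, sub_zero, ← hre]
      exact sub_self (f v) ▸ (add_neg_cancel (f v))
    have := sumHelper (H t htcard) l hsum v (Finset.mem_insert_self v _)
    rw [hlv] at this
    exact hone this
  have hreprv₁ : n + 1 ≤ (v₁ : ℕ) := le_refl _
  have hreprv₂ : n + 1 ≤ (v₂ : ℕ) := Nat.le_succ (n+1)
  have hA : ∀ i, a i ≠ 0 := claim1 v₁ a hreprv₁ hrepr₁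
  have hC : ∀ i, c i ≠ 0 := claim1 v₂ c hreprv₂ hrepr₂
  -- claim 2
  have claim2 : ∀ i j : Fin (n+1), i ≠ j → a i * c j ≠ a j * c i := by
    intro i j hij heq
    set t : Finset (Fin (n+3)) :=
      insert v₁ (insert v₂ (((Finset.univ.erase i).erase j).map ιemb)) with ht
    have hιv : ∀ (k : Fin (n+1)) (v : Fin (n+3)), n+1 ≤ (v:ℕ) → ι k ≠ v := by
      intro k v hv h
      have := congrArg Fin.val h
      simp only [ι] at this
      omega
    have hv₂not : v₂ ∉ ((Finset.univ.erase i).erase j).map ιemb := by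
      simp only [Finset.mem_map]
      rintro ⟨k, -, hk⟩
      exact hιv k v₂ hreprv₂ hk
    have hv₁not : v₁ ∉ insert v₂ (((Finset.univ.erase i).erase j).map ιemb) := by
      simp only [Finset.mem_insert, Finset.mem_map]
      rintro (h | ⟨k, -, hk⟩)
      · exact absurd (congrArg Fin.val h) (by simp [hv₁, hv₂])
      · exact hιv k v₁ hreprv₁ hk
    have hn : 1 ≤ n := by
      rcases Nat.eq_zero_or_pos n with h | h
      · subst h
        have hi := i.isLt
        have hj := j.isLt
        exact absurd (Fin.ext (by omega)) hij
      · exact h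
    have h1 : (((Finset.univ : Finset (Fin (n+1))).erase i).erase j).card = n - 1 := by
      rw [Finset.card_erase_of_mem (by simp [hij.symm]),
        Finset.card_erase_of_mem (Finset.mem_univ i), Finset.card_univ, Fintype.card_fin]
      omega
    have htcard : t.card ≤ n + 1 := by
      rw [ht, Finset.card_insert_of_notMem hv₁not, Finset.card_insert_of_notMem hv₂not,
        Finset.card_map, h1]
      omega
    set l : Fin (n+3) → ZMod p :=
      fun x => if x = v₁ then c i else if x = v₂ then -(a i)
        else if h : (x:ℕ) < n+1 then -(c i * a ⟨x, h⟩ - a i * c ⟨x, h⟩) else 0 with hldef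
    have hlv₁ : l v₁ = c i := if_pos rfl
    have hlv₂ : l v₂ = -(a i) := by
      rw [hldef]
      simp only
      rw [if_neg (by intro h; exact absurd (congrArg Fin.val h) (by simp [hv₁, hv₂]))]
      simp
    have hlι : ∀ k, l (ι k) = -(c i * a k - a i * c k) := by
      intro k
      rw [hldef]
      simp only
      rw [if_neg (hιv k v₁ hreprv₁), if_neg (hιv k v₂ hreprv₂),
        dif_pos (show ((ι k : Fin (n+3)) : ℕ) < n+1 from k.isLt)]
    have hsum : ∑ x ∈ t, l x • f x = 0 := by
      rw [ht, Finset.sum_insert hv₁not, Finset.sum_insert hv₂not, Finset.sum_map,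
        hlv₁, hlv₂]
      have e1 : ∑ k ∈ (Finset.univ.erase i).erase j, l (ιemb k) • f (ιemb k)
          = ∑ k ∈ (Finset.univ.erase i).erase j, -((c i * a k - a i * c k) • f (ι k)) := by
        refine Finset.sum_congr rfl (fun k _ => ?_)
        show l (ι k) • f (ι k) = _
        rw [hlι k, neg_smul]
      rw [e1, Finset.sum_neg_distrib,
        Finset.sum_erase_eq_sub (by simp [hij.symm] : j ∈ Finset.univ.erase i),
        Finset.sum_erase_eq_sub (Finset.mem_univ i)]
      have hzi : c i * a i - a i * c i = 0 := by ring
      have hzj : c i * a j - a i * c j = 0 := by linear_combination -heq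
      have e2 : ∑ k, (c i * a k - a i * c k) • f (ι k)
          = c i • f v₁ - a i • f v₂ := by
        rw [hrepr₁, hrepr₂, Finset.smul_sum, Finset.smul_sum, ← Finset.sum_sub_distrib]
        refine Finset.sum_congr rfl (fun k _ => ?_)
        rw [smul_smul, smul_smul, ← sub_smul]
      rw [e2, hzi, hzj]
      simp only [zero_smul, sub_zero]
      module
    have := sumHelper (H t htcard) l hsum v₁ (Finset.mem_insert_self v₁ _)
    rw [hlv₁] at this
    exact hC i this
  -- build injection into units
  let u : Fin (n+1) → (ZMod p)ˣ :=
    fun k => (Units.mk0 (a k) (hA k)) * (Units.mk0 (c k) (hC k))⁻¹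
  have huinj : Function.Injective u := by
    intro i j hij
    by_contra hne
    have hval := congrArg Units.val hij
    simp only [u, Units.val_mul, Units.val_mk0, Units.val_inv_eq_inv_val] at hval
    rw [← div_eq_mul_inv, ← div_eq_mul_inv, div_eq_div_iff (hC i) (hC j)] at hval
    exact claim2 i j hne (by linear_combination hval)
  have hcardle : n + 1 ≤ Fintype.card (ZMod p)ˣ := by
    calc n + 1 = Fintype.card (Fin (n+1)) := by simp
    _ ≤ Fintype.card (ZMod p)ˣ := Fintype.card_le_of_injective u huinj
  rw [ZMod.card_units p] at hcardle
  have hp2 : 2 ≤ p := (Fact.out : p.Prime).two_le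
  omega


lemma bwd (p n : ℕ) [Fact p.Prime] (hpn : n + 2 ≤ p) :
    ∃ f : Fin (n + 3) → Fin (n + 1) → ZMod p,
      ∀ s : Finset (Fin (n + 3)), s.card ≤ n + 1 →
        LinearIndependent (ZMod p) (fun i : s => f i.1) := by
  haveI : NeZero p := ⟨(Fact.out : p.Prime).ne_zero⟩
  have hι : ∀ k : Fin (n+1), (k : ℕ) < n + 3 := fun k => by omega
  set ι : Fin (n+1) → Fin (n+3) := fun k => ⟨k, hι k⟩ with hιdef
  set v₁ : Fin (n+3) := ⟨n+1, by omega⟩ with hv₁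
  set v₂ : Fin (n+3) := ⟨n+2, by omega⟩ with hv₂
  have hval1 : (v₁ : ℕ) = n + 1 := rfl
  have hval2 : (v₂ : ℕ) = n + 2 := rfl
  have ιinj : Function.Injective ι := by
    intro a b hab
    have h2 := congrArg Fin.val hab
    exact Fin.ext h2
  set f : Fin (n + 3) → Fin (n + 1) → ZMod p :=
    fun x => if h : (x:ℕ) < n+1 then Pi.single (⟨x, h⟩ : Fin (n+1)) 1
      else if (x:ℕ) = n+1 then (fun _ => 1) else (fun k : Fin (n+1) => ((k:ℕ) : ZMod p) + 1) with hfdef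
  have hf1 : ∀ j : Fin (n+1), f (ι j) = Pi.single j 1 := by
    intro j
    rw [hfdef]
    simp only
    rw [dif_pos (show ((ι j : Fin (n+3)) : ℕ) < n+1 from j.isLt)]
  have hf2 : f v₁ = fun _ => 1 := by
    rw [hfdef]
    simp only
    rw [dif_neg (by omega)]
    simp [hval1]
  have hf3 : f v₂ = fun k : Fin (n+1) => ((k:ℕ) : ZMod p) + 1 := by
    rw [hfdef]
    simp only
    rw [dif_neg (by omega)]
    rw [if_neg (by omega)]
  -- cast injectivity helper
  have hcast : ∀ x y : ℕ, x < p → y < p → ((x : ZMod p) = (y : ZMod p)) → x = y := by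
    intro x y hx hy h
    have := congrArg ZMod.val h
    rwa [ZMod.val_cast_of_lt hx, ZMod.val_cast_of_lt hy] at this
  refine ⟨f, ?_⟩
  intro s hs
  rw [Fintype.linearIndependent_iff]
  intro l hsum
  set L : Fin (n+3) → ZMod p := fun x => if h : x ∈ s then l ⟨x, h⟩ else 0 with hLdef
  have hLs : ∀ i : s, L i.1 = l i := fun i => dif_pos i.2
  have hLn : ∀ x, x ∉ s → L x = 0 := fun x hx => dif_neg hx
  have h0 : ∑ x, L x • f x = 0 := by
    rw [← Finset.sum_subset (Finset.subset_univ s)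
      (fun x _ hx => by rw [hLn x hx, zero_smul])]
    rw [← Finset.sum_attach s (fun x => L x • f x)]
    calc ∑ i ∈ s.attach, L i.1 • f i.1 = ∑ i : s, l i • f i.1 :=
          Finset.sum_congr rfl (fun i _ => by rw [hLs i])
      _ = 0 := hsum
  have E : ∀ k : Fin (n+1), L (ι k) + L v₁ + L v₂ * (((k:ℕ) : ZMod p) + 1) = 0 := by
    intro k
    have h1 := congrFun h0 k
    rw [Fin.sum_univ_castSucc, Fin.sum_univ_castSucc] at h1
    have hc1 : ∀ x : Fin (n+1), ((x.castSucc.castSucc : Fin (n+3))) = ι x :=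
      fun x => Fin.ext rfl
    have hc2 : (((Fin.last (n+1)).castSucc : Fin (n+3))) = v₁ := Fin.ext rfl
    have hc3 : ((Fin.last (n+2) : Fin (n+3))) = v₂ := Fin.ext rfl
    rw [hc2, hc3] at h1
    simp only [hc1, Pi.add_apply, Pi.smul_apply, smul_eq_mul, hf1, hf2, hf3,
      Pi.single_apply, mul_ite, mul_one, mul_zero, Finset.sum_ite_eq, Finset.mem_univ,
      if_true, Pi.zero_apply, Finset.sum_apply] at h1
    linear_combination h1
  -- counting
  set A : Finset (Fin (n+1)) := Finset.univ.filter (fun k => ι k ∈ s) with hA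
  set B : Finset (Fin (n+1)) := Finset.univ.filter (fun k => ι k ∉ s) with hB
  have hAB : A.card + B.card = n + 1 := by
    rw [hA, hB, Finset.card_filter_add_card_filter_not, Finset.card_univ,
      Fintype.card_fin]
  have hιv : ∀ (k : Fin (n+1)) (v : Fin (n+3)), n + 1 ≤ (v:ℕ) → ι k ≠ v := by
    intro k v hv h
    have := congrArg Fin.val h
    simp only [ι] at this
    omega
  have hv₁le : n + 1 ≤ (v₁ : ℕ) := le_refl _
  have hv₂le : n + 1 ≤ (v₂ : ℕ) := Nat.le_succ _
  have hkey : A.card + (s ∩ {v₁, v₂}).card ≤ n + 1 := by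
    have hsub : A.map ⟨ι, ιinj⟩ ∪ (s ∩ {v₁, v₂}) ⊆ s := by
      intro x hx
      rcases Finset.mem_union.mp hx with hx | hx
      · obtain ⟨k, hk, rfl⟩ := Finset.mem_map.mp hx
        exact (Finset.mem_filter.mp hk).2
      · exact (Finset.mem_inter.mp hx).1
    have hdisj : Disjoint (A.map ⟨ι, ιinj⟩)
        (s ∩ {v₁, v₂}) := by
      rw [Finset.disjoint_left]
      intro x hx hx'
      obtain ⟨k, -, rfl⟩ := Finset.mem_map.mp hx
      rcases Finset.mem_insert.mp (Finset.mem_inter.mp hx').2 with h | h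
      · exact hιv k v₁ hv₁le h
      · exact hιv k v₂ hv₂le (Finset.mem_singleton.mp h)
    calc A.card + (s ∩ {v₁, v₂}).card
        = (A.map ⟨ι, ιinj⟩ ∪ (s ∩ {v₁, v₂})).card := by
          rw [Finset.card_union_of_disjoint hdisj, Finset.card_map]
      _ ≤ s.card := Finset.card_le_card hsub
      _ ≤ n + 1 := hs
  have hEB : ∀ k ∈ B, L v₁ + L v₂ * (((k:ℕ) : ZMod p) + 1) = 0 := by
    intro k hk
    have := E k
    rw [hLn (ι k) (Finset.mem_filter.mp hk).2, zero_add] at this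
    exact this
  have hv₂0 : L v₂ = 0 := by
    by_cases h2 : v₂ ∈ s
    · by_cases h1 : v₁ ∈ s
      · -- both: need two elements of B
        have hin : ({v₁, v₂} : Finset (Fin (n+3))) ⊆ s ∩ {v₁, v₂} :=
          Finset.subset_inter (by intro x hx; rcases Finset.mem_insert.mp hx with rfl | hx
                                  · exact h1
                                  · rw [Finset.mem_singleton.mp hx]; exact h2) (le_refl _)
        have h2le : 2 ≤ (s ∩ {v₁, v₂}).card := by
          have := Finset.card_le_card hin
          rwa [Finset.card_pair (by intro h; exact absurd (congrArg Fin.val h) (by simp [hv₁, hv₂]))] at this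
        have hB2 : 1 < B.card := by omega
        obtain ⟨k₁, hk₁, k₂, hk₂, hkk⟩ := Finset.one_lt_card.mp hB2
        have e₁ := hEB k₁ hk₁
        have e₂ := hEB k₂ hk₂
        have hsub : L v₂ * (((k₁:ℕ) : ZMod p) - ((k₂:ℕ) : ZMod p)) = 0 := by
          linear_combination e₁ - e₂
        rcases mul_eq_zero.mp hsub with h | h
        · exact h
        · exfalso
          have : ((k₁:ℕ) : ZMod p) = ((k₂:ℕ) : ZMod p) := by linear_combination h
          exact hkk (Fin.ext (hcast _ _ (by omega) (by omega) this))
      · -- v₂ ∈ s, v₁ ∉ s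
        have hin : ({v₂} : Finset (Fin (n+3))) ⊆ s ∩ {v₁, v₂} := by
          intro x hx
          rw [Finset.mem_singleton.mp hx]
          exact Finset.mem_inter.mpr ⟨h2, by simp⟩
        have h1le : 1 ≤ (s ∩ {v₁, v₂}).card := by
          have := Finset.card_le_card hin
          rwa [Finset.card_singleton] at this
        have hB1 : 0 < B.card := by omega
        obtain ⟨k, hk⟩ := Finset.card_pos.mp hB1
        have e := hEB k hk
        rw [hLn v₁ h1, zero_add] at e
        rcases mul_eq_zero.mp e with h | h
        · exact h
        · exfalso
          have : (((k:ℕ)+1 : ℕ) : ZMod p) = ((0 : ℕ) : ZMod p) := by push_cast; linear_combination h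
          have := hcast _ _ (by omega) (by omega) this
          omega
    · exact hLn v₂ h2
  have hv₁0 : L v₁ = 0 := by
    by_cases h1 : v₁ ∈ s
    · have hin : ({v₁} : Finset (Fin (n+3))) ⊆ s ∩ {v₁, v₂} := by
        intro x hx
        rw [Finset.mem_singleton.mp hx]
        exact Finset.mem_inter.mpr ⟨h1, by simp⟩
      have h1le : 1 ≤ (s ∩ {v₁, v₂}).card := by
        have := Finset.card_le_card hin
        rwa [Finset.card_singleton] at this
      have hB1 : 0 < B.card := by omega
      obtain ⟨k, hk⟩ := Finset.card_pos.mp hB1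
      have e := hEB k hk
      rw [hv₂0, zero_mul, add_zero] at e
      exact e
    · exact hLn v₁ h1
  -- conclude
  intro i
  rw [← hLs i]
  rcases lt_or_ge ((i.1 : Fin (n+3)) : ℕ) (n+1) with hlt | hge
  · have hx : (i.1 : Fin (n+3)) = ι ⟨(i.1 : Fin (n+3)), hlt⟩ := Fin.ext rfl
    have := E ⟨(i.1 : Fin (n+3)), hlt⟩
    rw [hv₁0, hv₂0, zero_mul, add_zero, add_zero] at this
    rw [hx]
    exact this
  · have : (i.1 : Fin (n+3)) = v₁ ∨ (i.1 : Fin (n+3)) = v₂ := by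
      have := (i.1 : Fin (n+3)).isLt
      rcases Nat.lt_or_ge ((i.1 : Fin (n+3)) : ℕ) (n+2) with h | h
      · left; exact Fin.ext (by omega)
      · right; exact Fin.ext (by omega)
    rcases this with h | h
    · rw [h]; exact hv₁0
    · rw [h]; exact hv₂0


/-- For `m ≥ 2`: there is a nondegenerate simplicial map
`Δ^m_(m−2) → X(F_p^{m−1})` iff `m ≤ p`.
(Equivalently, `s_p(Δ^m_(m−2)) = 1` iff `m ≥ p+1`.) -/
theorem stmt12 (p m : ℕ) (hp : p.Prime) (hm : 2 ≤ m) :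
    (∃ f : Fin (m + 1) → (Fin (m - 1) → ZMod p),
      ∀ s : Finset (Fin (m + 1)), s.card ≤ m - 1 →
        LinearIndependent (ZMod p) (fun i : s => f i.1)) ↔
    m ≤ p := by
  haveI := Fact.mk hp
  obtain ⟨n, rfl⟩ : ∃ n, m = n + 2 := ⟨m - 2, by omega⟩
  constructor
  · rintro ⟨f, hf⟩
    have := fwd p n f hf
    omega
  · intro hpn
    obtain ⟨f, hf⟩ := bwd p n (by omega)
    exact ⟨f, hf⟩
end

section
/- There exists a nondegenerate simplicial map from X(F_2^4) to X(F_3^5): there is a function f : (Fin 4 → ZMod 2) → (Fin 5 → ZMod 3) such that for every finset s of vectors in (Fin 4 → ZMod 2) that is linearly independent over ZMod 2, the family (f v) for v ∈ s is linearly independent over ZMod 3. (Consequently s_3(X(F_2^4)) = 15 − 5 = 10.) -/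
set_option maxRecDepth 100000
set_option maxHeartbeats 4000000

def ok2 (t : Nat) : Bool :=
  t % 2 != 0 || t / 16 % 2 != 0 || t / 256 % 2 != 0 || t / 4096 % 2 != 0

def ok3 (t : Nat) : Bool :=
  t % 16 % 3 != 0 || t / 16 % 16 % 3 != 0 || t / 256 % 16 % 3 != 0 || t / 4096 % 16 % 3 != 0

def indep2s (a b c d : Nat) : Bool :=
  ok2 (1 * a + 0 * b + 0 * c + 0 * d) && (ok2 (0 * a + 1 * b + 0 * c + 0 * d) && (ok2 (1 * a + 1 * b + 0 * c + 0 * d) && (ok2 (0 * a + 0 * b + 1 * c + 0 * d) && (ok2 (1 * a + 0 * b + 1 * c + 0 * d) && (ok2 (0 * a + 1 * b + 1 * c + 0 * d) && (ok2 (1 * a + 1 * b + 1 * c + 0 * d) && (ok2 (0 * a + 0 * b + 0 * c + 1 * d) && (ok2 (1 * a + 0 * b + 0 * c + 1 * d) && (ok2 (0 * a + 1 * b + 0 * c + 1 * d) && (ok2 (1 * a + 1 * b + 0 * c + 1 * d) && (ok2 (0 * a + 0 * b + 1 * c + 1 * d) && (ok2 (1 * a + 0 * b + 1 * c + 1 *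 d) && (ok2 (0 * a + 1 * b + 1 * c + 1 * d) && (ok2 (1 * a + 1 * b + 1 * c + 1 * d)))))))))))))))

def indep3s (a b c d : Nat) : Bool :=
  ok3 (2 * a + 1 * b + 0 * c + 0 * d) && (ok3 (1 * a + 2 * b + 0 * c + 0 * d) && (ok3 (2 * a + 0 * b + 1 * c + 0 * d) && (ok3 (1 * a + 1 * b + 1 * c + 0 * d) && (ok3 (0 * a + 2 * b + 1 * c + 0 * d) && (ok3 (1 * a + 0 * b + 2 * c + 0 * d) && (ok3 (0 * a + 1 * b + 2 * c + 0 * d) && (ok3 (2 * a + 2 * b + 2 * c + 0 * d) && (ok3 (2 * a + 0 * b + 0 * c + 1 * d) && (ok3 (1 * a + 1 * b + 0 * c + 1 * d) && (ok3 (0 * a + 2 * b + 0 * c + 1 * d) && (ok3 (1 * a + 0 * b + 1 * c + 1 * d) && (ok3 (0 * a + 1 * b + 1 * c + 1 * d) && (ok3 (2 * a + 2 * b + 1 * c + 1 * d) && (ok3 (0 * a + 0 * b + 2 * c + 1 * d) && (ok3 (2 * a + 1 * b + 2 * c + 1 * d) && (ok3 (1 * a + 2 * b + 2 * c + 1 *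 d) && (ok3 (1 * a + 0 * b + 0 * c + 2 * d) && (ok3 (0 * a + 1 * b + 0 * c + 2 * d) && (ok3 (2 * a + 2 * b + 0 * c + 2 * d) && (ok3 (0 * a + 0 * b + 1 * c + 2 * d) && (ok3 (2 * a + 1 * b + 1 * c + 2 * d) && (ok3 (1 * a + 2 * b + 1 * c + 2 * d) && (ok3 (2 * a + 0 * b + 2 * c + 2 * d) && (ok3 (1 * a + 1 * b + 2 * c + 2 * d) && (ok3 (0 * a + 2 * b + 2 * c + 2 * d))))))))))))))))))))))))))

def spread (n : Nat) : Nat :=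
  n % 2 + 16 * (n / 2 % 2) + 256 * (n / 4 % 2) + 4096 * (n / 8 % 2)

def allB (p : Nat → Bool) : Nat → Bool
  | 0 => true
  | n+1 => allB p n && p n

def coreb : Bool :=
  allB (fun a => allB (fun b' => allB (fun c' => allB (fun d' =>
    !indep2s (spread a) (spread (a+b')) (spread (a+b'+c')) (spread (a+b'+c'+d')) ||
    indep3s (spread a) (spread (a+b')) (spread (a+b'+c')) (spread (a+b'+c'+d')))
    (16 - (a+b'+c'))) (16 - (a+b'))) (16 - a)) 16

theorem core : coreb = true := by decide
theorem allB_ball {p : Nat → Bool} : ∀ {n}, allB p n = true → ∀ i, i < n → p i = true := by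
  intro n
  induction n with
  | zero => exact fun _ i hi => absurd hi (Nat.not_lt_zero i)
  | succ n ih =>
    intro h i hi
    rw [allB, Bool.and_eq_true] at h
    rcases Nat.lt_succ_iff_lt_or_eq.mp hi with h' | h'
    · exact ih h.1 i h'
    · subst h'; exact h.2

theorem corePsorted (a b c d : Nat) (hd : d < 16) (hab : a ≤ b) (hbc : b ≤ c) (hcd : c ≤ d)
    (h2 : indep2s (spread a) (spread b) (spread c) (spread d) = true) :
    indep3s (spread a) (spread b) (spread c) (spread d) = true := by
  have hc : allB (fun a => allB (fun b' => allB (fun c' => allB (fun d' =>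
      !indep2s (spread a) (spread (a+b')) (spread (a+b'+c')) (spread (a+b'+c'+d')) ||
      indep3s (spread a) (spread (a+b')) (spread (a+b'+c')) (spread (a+b'+c'+d')))
      (16 - (a+b'+c'))) (16 - (a+b'))) (16 - a)) 16 = true := core
  have h1 := allB_ball hc a (by omega)
  have h2' := allB_ball h1 (b - a) (by omega)
  have h3' := allB_ball h2' (c - b) (by omega)
  have h4 := allB_ball h3' (d - c) (by omega)
  rw [show a + (b - a) = b by omega] at h4
  rw [show b + (c - b) = c by omega] at h4
  rw [show c + (d - c) = d by omega] at h4
  rw [h2] at h4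
  simpa using h4
abbrev V2 := Fin 4 → ZMod 2

def fmap (v : V2) : Fin 5 → ZMod 3 := Fin.snoc (fun i => ((v i).val : ZMod 3)) 1

def S (u : V2) : Nat := (u 0).val + 16 * (u 1).val + 256 * (u 2).val + 4096 * (u 3).val

def encV (u : V2) : Nat := (u 0).val + 2 * (u 1).val + 4 * (u 2).val + 8 * (u 3).val

theorem spread_encV (u : V2) : spread (encV u) = S u := by
  have h0 := ZMod.val_lt (u 0); have h1 := ZMod.val_lt (u 1)
  have h2 := ZMod.val_lt (u 2); have h3 := ZMod.val_lt (u 3)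
  unfold spread encV S
  omega

theorem encV_lt (u : V2) : encV u < 16 := by
  have h0 := ZMod.val_lt (u 0); have h1 := ZMod.val_lt (u 1)
  have h2 := ZMod.val_lt (u 2); have h3 := ZMod.val_lt (u 3)
  unfold encV; omega

theorem dig2 (s0 s1 s2 s3 : Nat) (h0 : s0 < 16) (h1 : s1 < 16) (h2 : s2 < 16) (h3 : s3 < 16)
    (h : ok2 (s0 + 16 * s1 + 256 * s2 + 4096 * s3) = false) :
    s0 % 2 = 0 ∧ s1 % 2 = 0 ∧ s2 % 2 = 0 ∧ s3 % 2 = 0 := by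
  simp only [ok2, Bool.or_eq_false_iff, bne_eq_false_iff_eq] at h
  omega

theorem dig3 (s0 s1 s2 s3 : Nat) (h0 : s0 < 16) (h1 : s1 < 16) (h2 : s2 < 16) (h3 : s3 < 16)
    (h : ok3 (s0 + 16 * s1 + 256 * s2 + 4096 * s3) = true) :
    s0 % 3 ≠ 0 ∨ s1 % 3 ≠ 0 ∨ s2 % 3 ≠ 0 ∨ s3 % 3 ≠ 0 := by
  simp only [ok3, Bool.or_eq_true, bne_iff_ne, ne_eq] at h
  have e0 : (s0 + 16 * s1 + 256 * s2 + 4096 * s3) % 16 = s0 := by omega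
  have e1 : (s0 + 16 * s1 + 256 * s2 + 4096 * s3) / 16 % 16 = s1 := by omega
  have e2 : (s0 + 16 * s1 + 256 * s2 + 4096 * s3) / 256 % 16 = s2 := by omega
  have e3 : (s0 + 16 * s1 + 256 * s2 + 4096 * s3) / 4096 % 16 = s3 := by omega
  rw [e0, e1, e2, e3] at h
  tauto
theorem mulLeOne14 {c : Nat} (hc : c < 2) (y : ZMod 2) : c * y.val ≤ 1 := by
  have hy := ZMod.val_lt y
  calc c * y.val ≤ 1 * 1 := Nat.mul_le_mul (by omega) (by omega)
  _ = 1 := by norm_num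

theorem mulLeTwo14 {c : Nat} (hc : c < 3) (y : ZMod 2) : c * y.val ≤ 2 := by
  have hy := ZMod.val_lt y
  calc c * y.val ≤ 2 * 1 := Nat.mul_le_mul (by omega) (by omega)
  _ = 2 := by norm_num

theorem term2 {c1 c2 c3 c4 : Nat} (b1 : c1 < 2) (b2 : c2 < 2) (b3 : c3 < 2) (b4 : c4 < 2)
    (hne : ¬(c1 = 0 ∧ c2 = 0 ∧ c3 = 0 ∧ c4 = 0)) {u : Fin 4 → V2}
    (hu : LinearIndependent (ZMod 2) u) :
    ok2 (c1 * S (u 0) + c2 * S (u 1) + c3 * S (u 2) + c4 * S (u 3)) = true := by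
  by_contra hok
  rw [Bool.not_eq_true] at hok
  have ht : c1 * S (u 0) + c2 * S (u 1) + c3 * S (u 2) + c4 * S (u 3)
      = (c1 * (u 0 0).val + c2 * (u 1 0).val + c3 * (u 2 0).val + c4 * (u 3 0).val)
        + 16 * (c1 * (u 0 1).val + c2 * (u 1 1).val + c3 * (u 2 1).val + c4 * (u 3 1).val)
        + 256 * (c1 * (u 0 2).val + c2 * (u 1 2).val + c3 * (u 2 2).val + c4 * (u 3 2).val)
        + 4096 * (c1 * (u 0 3).val + c2 * (u 1 3).val + c3 * (u 2 3).val + c4 * (u 3 3).val) := by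
    simp only [S]; ring
  rw [ht] at hok
  have hb : ∀ j : Fin 4,
      c1 * (u 0 j).val + c2 * (u 1 j).val + c3 * (u 2 j).val + c4 * (u 3 j).val < 16 := by
    intro j
    have m1 := mulLeOne14 b1 (u 0 j); have m2 := mulLeOne14 b2 (u 1 j)
    have m3 := mulLeOne14 b3 (u 2 j); have m4 := mulLeOne14 b4 (u 3 j)
    omega
  obtain ⟨d0, d1, d2, d3⟩ := dig2 _ _ _ _ (hb 0) (hb 1) (hb 2) (hb 3) hok
  have hzero : (c1 : ZMod 2) • u 0 + (c2 : ZMod 2) • u 1 + (c3 : ZMod 2) • u 2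
      + (c4 : ZMod 2) • u 3 = 0 := by
    funext j
    have hj : (c1 * (u 0 j).val + c2 * (u 1 j).val + c3 * (u 2 j).val + c4 * (u 3 j).val) % 2
        = 0 := by fin_cases j <;> assumption
    have hcast : ((c1 * (u 0 j).val + c2 * (u 1 j).val + c3 * (u 2 j).val + c4 * (u 3 j).val : Nat)
        : ZMod 2) = 0 := by
      rw [ZMod.natCast_eq_zero_iff]
      omega
    push_cast [ZMod.natCast_val, ZMod.cast_id] at hcast
    simpa using hcast
  rw [Fintype.linearIndependent_iff] at hu
  have hdep := hu ![(c1 : ZMod 2), (c2 : ZMod 2), (c3 : ZMod 2), (c4 : ZMod 2)]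
    (by rw [Fin.sum_univ_four]; exact hzero)
  have f1 : (2:Nat) ∣ c1 := by
    rw [← ZMod.natCast_eq_zero_iff]; exact hdep 0
  have f2 : (2:Nat) ∣ c2 := by
    rw [← ZMod.natCast_eq_zero_iff]; exact hdep 1
  have f3 : (2:Nat) ∣ c3 := by
    rw [← ZMod.natCast_eq_zero_iff]; exact hdep 2
  have f4 : (2:Nat) ∣ c4 := by
    rw [← ZMod.natCast_eq_zero_iff]; exact hdep 3
  exact hne (by omega)

theorem indep2s_of_li {u : Fin 4 → V2} (hu : LinearIndependent (ZMod 2) u) :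
    indep2s (S (u 0)) (S (u 1)) (S (u 2)) (S (u 3)) = true := by
  simp only [indep2s, Bool.and_eq_true]
  refine ⟨?_, ?_, ?_, ?_, ?_, ?_, ?_, ?_, ?_, ?_, ?_, ?_, ?_, ?_, ?_⟩ <;>
    exact term2 (by omega) (by omega) (by omega) (by omega) (by omega) hu
theorem use3 {a b c d : Nat} (h : indep3s a b c d = true) {k1 k2 k3 k4 : Nat}
    (b1 : k1 < 3) (b2 : k2 < 3) (b3 : k3 < 3) (b4 : k4 < 3)
    (hsum : (k1 + k2 + k3 + k4) % 3 = 0) (hne : ¬(k1 = 0 ∧ k2 = 0 ∧ k3 = 0 ∧ k4 = 0)) :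
    ok3 (k1 * a + k2 * b + k3 * c + k4 * d) = true := by
  simp only [indep3s, Bool.and_eq_true] at h
  obtain ⟨h1, h2, h3, h4, h5, h6, h7, h8, h9, h10, h11, h12, h13, h14, h15, h16, h17, h18,
    h19, h20, h21, h22, h23, h24, h25, h26⟩ := h
  interval_cases k1 <;> interval_cases k2 <;> interval_cases k3 <;> interval_cases k4 <;>
    first
      | assumption
      | (exfalso; omega)
theorem li3_of {u : Fin 4 → V2}
    (h3 : indep3s (S (u 0)) (S (u 1)) (S (u 2)) (S (u 3)) = true) :
    LinearIndependent (ZMod 3) (fun i => fmap (u i)) := by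
  rw [Fintype.linearIndependent_iff]
  intro g hg
  have hb : ∀ i : Fin 4, (g i).val < 3 := fun i => ZMod.val_lt _
  rw [Fin.sum_univ_four] at hg
  have hsum : ((g 0).val + (g 1).val + (g 2).val + (g 3).val) % 3 = 0 := by
    have hlast := congrFun hg (Fin.last 4)
    simp only [Pi.add_apply, Pi.smul_apply, smul_eq_mul, Pi.zero_apply, fmap,
      Fin.snoc_last, mul_one] at hlast
    have hcast : (((g 0).val + (g 1).val + (g 2).val + (g 3).val : Nat) : ZMod 3) = 0 := by
      push_cast [ZMod.natCast_val, ZMod.cast_id]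
      exact hlast
    rw [ZMod.natCast_eq_zero_iff] at hcast
    omega
  have hcoord : ∀ j : Fin 4, ((g 0).val * (u 0 j).val + (g 1).val * (u 1 j).val
      + (g 2).val * (u 2 j).val + (g 3).val * (u 3 j).val) % 3 = 0 := by
    intro j
    have hj := congrFun hg (Fin.castSucc j)
    simp only [Pi.add_apply, Pi.smul_apply, smul_eq_mul, Pi.zero_apply, fmap,
      Fin.snoc_castSucc] at hj
    have hcast : (((g 0).val * (u 0 j).val + (g 1).val * (u 1 j).val
        + (g 2).val * (u 2 j).val + (g 3).val * (u 3 j).val : Nat) : ZMod 3) = 0 := by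
      push_cast [ZMod.natCast_val, ZMod.cast_id]
      exact hj
    rw [ZMod.natCast_eq_zero_iff] at hcast
    omega
  have hall : (g 0).val = 0 ∧ (g 1).val = 0 ∧ (g 2).val = 0 ∧ (g 3).val = 0 := by
    by_contra hne
    have hok := use3 h3 (hb 0) (hb 1) (hb 2) (hb 3) hsum hne
    have ht : (g 0).val * S (u 0) + (g 1).val * S (u 1) + (g 2).val * S (u 2)
        + (g 3).val * S (u 3)
        = ((g 0).val * (u 0 0).val + (g 1).val * (u 1 0).val + (g 2).val * (u 2 0).val
            + (g 3).val * (u 3 0).val)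
          + 16 * ((g 0).val * (u 0 1).val + (g 1).val * (u 1 1).val + (g 2).val * (u 2 1).val
            + (g 3).val * (u 3 1).val)
          + 256 * ((g 0).val * (u 0 2).val + (g 1).val * (u 1 2).val + (g 2).val * (u 2 2).val
            + (g 3).val * (u 3 2).val)
          + 4096 * ((g 0).val * (u 0 3).val + (g 1).val * (u 1 3).val + (g 2).val * (u 2 3).val
            + (g 3).val * (u 3 3).val) := by
      simp only [S]; ring
    rw [ht] at hok
    have hbnd : ∀ j : Fin 4, (g 0).val * (u 0 j).val + (g 1).val * (u 1 j).val
        + (g 2).val * (u 2 j).val + (g 3).val * (u 3 j).val < 16 := by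
      intro j
      have m1 := mulLeTwo14 (hb 0) (u 0 j); have m2 := mulLeTwo14 (hb 1) (u 1 j)
      have m3 := mulLeTwo14 (hb 2) (u 2 j); have m4 := mulLeTwo14 (hb 3) (u 3 j)
      omega
    rcases dig3 _ _ _ _ (hbnd 0) (hbnd 1) (hbnd 2) (hbnd 3) hok with h | h | h | h
    exacts [h (hcoord 0), h (hcoord 1), h (hcoord 2), h (hcoord 3)]
  intro i
  fin_cases i
  exacts [(ZMod.val_eq_zero _).mp hall.1, (ZMod.val_eq_zero _).mp hall.2.1,
    (ZMod.val_eq_zero _).mp hall.2.2.1, (ZMod.val_eq_zero _).mp hall.2.2.2]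
theorem key {u : Fin 4 → V2} (hu : LinearIndependent (ZMod 2) u) :
    LinearIndependent (ZMod 3) (fun i => fmap (u i)) := by
  set τ := Tuple.sort (fun i => encV (u i)) with hτ
  have hm : Monotone ((fun i => encV (u i)) ∘ τ) := Tuple.monotone_sort _
  have hw : LinearIndependent (ZMod 2) (u ∘ τ) := hu.comp τ τ.injective
  have h2 := indep2s_of_li hw
  have h3 : indep3s (S ((u ∘ τ) 0)) (S ((u ∘ τ) 1)) (S ((u ∘ τ) 2)) (S ((u ∘ τ) 3))
      = true := by
    have hcp := corePsorted (encV ((u ∘ τ) 0)) (encV ((u ∘ τ) 1)) (encV ((u ∘ τ) 2))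
      (encV ((u ∘ τ) 3)) (encV_lt _)
      (hm (show (0 : Fin 4) ≤ 1 by decide)) (hm (show (1 : Fin 4) ≤ 2 by decide))
      (hm (show (2 : Fin 4) ≤ 3 by decide))
    rw [spread_encV, spread_encV, spread_encV, spread_encV] at hcp
    exact hcp h2
  have hw3 := li3_of h3
  have hfin := hw3.comp τ.symm τ.symm.injective
  have he : ((fun i => fmap ((u ∘ τ) i)) ∘ ⇑τ.symm) = fun i => fmap (u i) := by
    funext i
    simp [Function.comp, Equiv.apply_symm_apply]
  rwa [he] at hfin
/-- There exists a nondegenerate simplicial map from `X(F_2^4)` to `X(F_3^5)`.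
(Consequently `s_3(X(F_2^4)) = 15 − 5 = 10`.) -/
theorem stmt14 :
    ∃ f : (Fin 4 → ZMod 2) → (Fin 5 → ZMod 3),
      ∀ s : Finset (Fin 4 → ZMod 2),
        LinearIndependent (ZMod 2) (fun v : s => (v.1 : Fin 4 → ZMod 2)) →
        LinearIndependent (ZMod 3) (fun v : s => f v.1) := by
  refine ⟨fmap, fun s hs => ?_⟩
  have hs' : LinearIndepOn (ZMod 2) id (s : Set V2) := hs
  have hli : LinearIndependent (ZMod 2) (fun x : (hs'.extend (Set.subset_univ _)) => (x : V2)) :=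
    hs'.linearIndepOn_extend (Set.subset_univ _)
  have htfin : (hs'.extend (Set.subset_univ _)).Finite := hli.setFinite
  haveI := htfin.fintype
  have hcard : Fintype.card (hs'.extend (Set.subset_univ _)) = 4 := by
    have h1 := Module.finrank_eq_card_basis (Module.Basis.extend hs')
    rw [Module.finrank_fintype_fun_eq_card] at h1
    simpa using h1.symm
  let e : Fin 4 ≃ (hs'.extend (Set.subset_univ _)) := (Fintype.equivFinOfCardEq hcard).symm
  have hu : LinearIndependent (ZMod 2) (fun i : Fin 4 => ((e i : V2))) :=
    hli.comp e e.injective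
  have hk := key hu
  have hsub : (s : Set V2) ⊆ hs'.extend (Set.subset_univ _) :=
    hs'.subset_extend (Set.subset_univ _)
  let ι : {x // x ∈ s} → Fin 4 := fun x => e.symm ⟨x.1, hsub x.2⟩
  have hι : Function.Injective ι := by
    intro x y hxy
    have h' := congrArg (fun z : Fin 4 => ((e z : V2))) hxy
    simp only [ι, Equiv.apply_symm_apply] at h'
    exact Subtype.ext h'
  have hcomp := hk.comp ι hι
  have he2 : ((fun i : Fin 4 => fmap ((e i : V2))) ∘ ι) = fun x : s => fmap x.1 := by
    funext x
    simp only [Function.comp_apply, ι, Equiv.apply_symm_apply]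
  rwa [he2] at hcomp
end

section
/- There is no nondegenerate simplicial map from X(F_3^4) to X(F_2^6): there is no function f : (Fin 4 → ZMod 3) → (Fin 6 → ZMod 2) such that for every finset s of vectors in (Fin 4 → ZMod 3) that is linearly independent over ZMod 3, the family (f v) for v ∈ s is linearly independent over ZMod 2. (Consequently s_2(X(F_3^4)) ≤ 80 − 7 = 73.) -/
open Finset Submodule Module
open scoped Classical

private abbrev V3 : Type := Fin 4 → ZMod 3
private abbrev W2 : Type := Fin 6 → ZMod 2

private def isN (v : V3) : Prop :=
  v 0 = 1 ∨ (v 0 = 0 ∧ (v 1 = 1 ∨ (v 1 = 0 ∧ (v 2 = 1 ∨ (v 2 = 0 ∧ v 3 = 1)))))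

private instance : DecidablePred isN := fun v => by unfold isN; infer_instance

private lemma isN_ne_zero {v : V3} (h : isN v) : v ≠ 0 := by
  rintro rfl; revert h; decide

private lemma isN_two_smul : ∀ v : V3, v ≠ 0 → (isN v ↔ ¬ isN ((2 : ZMod 3) • v)) := by decide

private lemma two_smul_two_smul (v : V3) : (2 : ZMod 3) • (2 : ZMod 3) • v = v := by
  rw [smul_smul, show ((2*2 : ZMod 3)) = 1 by decide, one_smul]

private lemma W2_add_self (x : W2) : x + x = 0 := by
  funext i
  have : ∀ a : ZMod 2, a + a = 0 := by decide
  simp [Pi.add_apply, this]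

private lemma W2_add_eq_zero {x y : W2} (h : x + y = 0) : x = y := by
  have := W2_add_self x
  have h2 : x + y = x + x := by rw [h, this]
  exact (add_left_cancel h2).symm

private lemma indep_pair {A B : V3} (hA : isN A) (hB : isN B) (hAB : A ≠ B) :
    LinearIndependent (ZMod 3) (fun v : ({A, B} : Set V3) => (v : V3)) := by
  have hBA : A ∉ ({B} : Set V3) := by simpa using hAB
  show LinearIndepOn (ZMod 3) id (insert A {B}); rw [linearIndepOn_id_insert hBA]
  refine ⟨LinearIndepOn.singleton (isN_ne_zero hB), ?_⟩
  intro hmem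
  rw [mem_span_singleton] at hmem
  obtain ⟨a, ha⟩ := hmem
  have h3 : ∀ b : ZMod 3, b = 0 ∨ b = 1 ∨ b = 2 := by decide
  rcases h3 a with rfl | rfl | rfl
  · exact isN_ne_zero hA (by simpa using ha.symm)
  · exact hAB (by simpa using ha.symm)
  · exact ((isN_two_smul B (isN_ne_zero hB)).mp hB) (ha ▸ hA)

private lemma indep_triple {A B C : V3} (hA : isN A) (hB : isN B) (hAB : A ≠ B)
    (hCA : C ≠ A) (hCB : C ≠ B) (hC : C ∉ span (ZMod 3) ({A, B} : Set V3)) :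
    LinearIndependent (ZMod 3) (fun v : ({C, A, B} : Set V3) => (v : V3)) := by
  have hCm : C ∉ ({A, B} : Set V3) := by simp [hCA, hCB]
  show LinearIndepOn (ZMod 3) id (insert C {A, B}); rw [linearIndepOn_id_insert hCm]
  exact ⟨indep_pair hA hB hAB, hC⟩

/-- If the spans of two independent pairs intersect trivially, the union of the pairs
is independent. -/
private lemma indep_quad {A B C D : V3} (hA : isN A) (hB : isN B) (hC : isN C) (hD : isN D)
    (hAB : A ≠ B) (hCD : C ≠ D)
    (h : span (ZMod 3) ({A, B} : Set V3) ⊓ span (ZMod 3) ({C, D} : Set V3) = ⊥) :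
    LinearIndependent (ZMod 3) (fun v : (({A, B} ∪ {C, D} : Set V3)) => (v : V3)) :=
  LinearIndepOn.id_union (s := {A, B}) (t := {C, D}) (indep_pair hA hB hAB) (indep_pair hC hD hCD) (disjoint_iff.mpr h)

section withf

variable {f : V3 → W2}
variable (hf : ∀ s : Finset V3,
    LinearIndependent (ZMod 3) (fun v : s => (v.1 : V3)) →
    LinearIndependent (ZMod 2) (fun v : s => f v.1))

include hf

private lemma fne0 {A : V3} (hA : isN A) : f A ≠ 0 := by
  have h1 : LinearIndependent (ZMod 3) (fun v : (({A} : Finset V3) : Set V3) => (v : V3)) := by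
    have : (({A} : Finset V3) : Set V3) = ({A} : Set V3) := by simp
    rw [this]
    exact LinearIndepOn.singleton (R := ZMod 3) (v := id) (isN_ne_zero hA)
  have h2 := hf {A} h1
  exact h2.ne_zero ⟨A, by simp⟩

private lemma finj {A B : V3} (hA : isN A) (hB : isN B) (hAB : A ≠ B) : f A ≠ f B := by
  have h1 : LinearIndependent (ZMod 3) (fun v : (({A, B} : Finset V3) : Set V3) => (v : V3)) := by
    have : (({A, B} : Finset V3) : Set V3) = ({A, B} : Set V3) := by simp
    rw [this]
    exact indep_pair hA hB hAB
  have h2 := hf {A, B} h1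
  intro hEq
  have := h2.injective (a₁ := ⟨A, by simp⟩) (a₂ := ⟨B, by simp⟩) (by simpa using hEq)
  exact hAB (by simpa using congrArg Subtype.val this)

private lemma sum_ne_zero {s : Finset V3}
    (hind : LinearIndependent (ZMod 3) (fun v : s => (v.1 : V3))) (hne : s.Nonempty) :
    ∑ v ∈ s, f v ≠ 0 := by
  have h2 := hf s hind
  intro h0
  have h3 := Fintype.linearIndependent_iff.mp h2 (fun _ => 1) ?_
  · obtain ⟨a, ha⟩ := hne
    exact one_ne_zero (h3 ⟨a, ha⟩)
  · have : ∑ i : s, f i.1 = ∑ v ∈ s, f v := by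
      rw [← Finset.sum_attach s (fun v => f v)]; rfl
    simp only [one_smul, this, h0]

private lemma K3 {A B C : V3} (hA : isN A) (hB : isN B) (hC : isN C)
    (hAB : A ≠ B) (hCA : C ≠ A) (hCB : C ≠ B)
    (hsum : f A + f B + f C = 0) : C ∈ span (ZMod 3) ({A, B} : Set V3) := by
  by_contra hCs
  have hind : LinearIndependent (ZMod 3) (fun v : ({C, A, B} : Finset V3) => (v.1 : V3)) := by
    have h1 : ((({C, A, B} : Finset V3) : Set V3)) = ({C, A, B} : Set V3) := by simp
    have h2 : LinearIndependent (ZMod 3)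
        (fun v : ((({C, A, B} : Finset V3) : Set V3)) => (v : V3)) := by
      rw [h1]; exact indep_triple hA hB hAB hCA hCB hCs
    exact h2
  have hsne := sum_ne_zero hf hind ⟨C, by simp⟩
  apply hsne
  rw [Finset.sum_insert (by simp [hCA, hCB]), Finset.sum_pair hAB]
  have h3 : f C + (f A + f B) = f A + f B + f C := by abel
  rw [h3]; exact hsum

private lemma K4 {A B C D : V3} (hA : isN A) (hB : isN B) (hC : isN C) (hD : isN D)
    (hAB : A ≠ B) (hAC : A ≠ C) (hAD : A ≠ D) (hBC : B ≠ C) (hBD : B ≠ D) (hCD : C ≠ D)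
    (hsum : f A + f B + f C + f D = 0) :
    ∃ x : V3, x ≠ 0 ∧
      x ∈ span (ZMod 3) ({A, B} : Set V3) ⊓ span (ZMod 3) ({C, D} : Set V3) := by
  by_contra hx
  push_neg at hx
  have hbot : span (ZMod 3) ({A, B} : Set V3) ⊓ span (ZMod 3) ({C, D} : Set V3) = ⊥ := by
    rw [eq_bot_iff]
    intro y hy
    simp only [Submodule.mem_bot]
    by_contra hy0
    exact hy0 (hx y hy0 hy).elim
  have hindset := indep_quad hA hB hC hD hAB hCD hbot
  have hind : LinearIndependent (ZMod 3) (fun v : ({A, B, C, D} : Finset V3) => (v.1 : V3)) := by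
    have h1 : ((({A, B, C, D} : Finset V3) : Set V3)) = (({A, B} ∪ {C, D} : Set V3)) := by
      ext x; simp; tauto
    have h2 : LinearIndependent (ZMod 3)
        (fun v : ((({A, B, C, D} : Finset V3) : Set V3)) => (v : V3)) := by
      rw [h1]; exact hindset
    exact h2
  have hsne := sum_ne_zero hf hind ⟨A, by simp⟩
  apply hsne
  rw [Finset.sum_insert (by simp [hAB, hAC, hAD]), Finset.sum_insert (by simp [hBC, hBD]),
    Finset.sum_pair hCD]
  have h3 : f A + (f B + (f C + f D)) = f A + f B + f C + f D := by abel
  rw [h3]; exact hsum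

end withf

private noncomputable def ptsIn (U : Submodule (ZMod 3) V3) : Finset V3 :=
  univ.filter (fun v => v ∈ U ∧ isN v)

private lemma mem_ptsIn {U : Submodule (ZMod 3) V3} {v : V3} :
    v ∈ ptsIn U ↔ v ∈ U ∧ isN v := by simp [ptsIn]

private lemma two_mul_card_ptsIn (U : Submodule (ZMod 3) V3) :
    2 * (ptsIn U).card + 1 = 3 ^ (finrank (ZMod 3) U) := by
  classical
  have hFcard : (univ.filter (fun v => v ∈ U)).card = 3 ^ (finrank (ZMod 3) U) := by
    have h1 : (univ.filter (fun v => v ∈ U)).card = Fintype.card {v : V3 // v ∈ U} :=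
      (Fintype.card_subtype _).symm
    have h3 : Fintype.card {v : V3 // v ∈ U} = 3 ^ (finrank (ZMod 3) U) := by
      rw [card_eq_pow_finrank (K := ZMod 3) (V := ↥U), ZMod.card]
    rw [h1, h3]
  have hsplit : (ptsIn U).card + (univ.filter (fun v => v ∈ U ∧ ¬ isN v)).card
      = (univ.filter (fun v => v ∈ U)).card := by
    rw [ptsIn]
    rw [← Finset.filter_filter, ← Finset.filter_filter]
    exact Finset.card_filter_add_card_filter_not _
  have hzero : (univ.filter (fun v => v ∈ U ∧ ¬ isN v)).card
      = (univ.filter (fun v => v ∈ U ∧ v ≠ 0 ∧ ¬ isN v)).card + 1 := by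
    have h0 : (0 : V3) ∈ univ.filter (fun v => v ∈ U ∧ ¬ isN v) := by
      simp only [Finset.mem_filter, Finset.mem_univ, true_and]
      exact ⟨U.zero_mem, fun h => isN_ne_zero h rfl⟩
    have herase : (univ.filter (fun v => v ∈ U ∧ ¬ isN v)).erase 0
        = univ.filter (fun v => v ∈ U ∧ v ≠ 0 ∧ ¬ isN v) := by
      ext v
      simp only [Finset.mem_erase, Finset.mem_filter, Finset.mem_univ, true_and]
      tauto
    rw [← Finset.card_erase_add_one h0, herase]
  have hbij : (ptsIn U).card = (univ.filter (fun v => v ∈ U ∧ v ≠ 0 ∧ ¬ isN v)).card := by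
    apply Finset.card_bij' (fun a _ => (2 : ZMod 3) • a) (fun b _ => (2 : ZMod 3) • b)
        ?hi ?hj ?hleft ?hright
    case hi =>
      intro a ha
      rw [mem_ptsIn] at ha
      have ha0 := isN_ne_zero ha.2
      simp only [Finset.mem_filter, Finset.mem_univ, true_and]
      refine ⟨U.smul_mem _ ha.1, ?_, ?_⟩
      · intro h
        exact ha0 (by
          have := congrArg (fun w => (2 : ZMod 3) • w) h
          simpa [two_smul_two_smul] using this)
      · exact (isN_two_smul a ha0).mp ha.2
    case hj =>
      intro b hb
      simp only [Finset.mem_filter, Finset.mem_univ, true_and] at hb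
      rw [mem_ptsIn]
      refine ⟨U.smul_mem _ hb.1, ?_⟩
      have h2b0 : (2 : ZMod 3) • b ≠ 0 := by
        intro h
        exact hb.2.1 (by
          have := congrArg (fun w => (2 : ZMod 3) • w) h
          simpa [two_smul_two_smul] using this)
      refine (isN_two_smul ((2:ZMod 3) • b) h2b0).mpr ?_
      rw [two_smul_two_smul]
      exact hb.2.2
    case hleft =>
      intro a _; exact two_smul_two_smul a
    case hright =>
      intro a _; exact two_smul_two_smul a
  omega

private lemma finrank_V3 : finrank (ZMod 3) V3 = 4 := by
  rw [Module.finrank_pi]; simp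

private instance : FiniteDimensional (ZMod 3) V3 := by infer_instance

private lemma finrank_span_pair' {x y : V3} (hxy : x ≠ y)
    (h : LinearIndependent (ZMod 3) (fun v : ({x, y} : Set V3) => (v : V3))) :
    finrank (ZMod 3) (span (ZMod 3) ({x, y} : Set V3)) = 2 := by
  classical
  rw [finrank_span_set_eq_card h]
  rw [show ({x, y} : Set V3).toFinset = {x, y} by simp]
  rw [Finset.card_insert_of_notMem (by simpa using hxy), Finset.card_singleton]

/-- pair independence from non-membership in a singleton span -/
private lemma indep_pair_of_not_mem {x y : V3} (hx : x ≠ 0)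
    (hy : y ∉ span (ZMod 3) ({x} : Set V3)) :
    LinearIndependent (ZMod 3) (fun v : ({x, y} : Set V3) => (v : V3)) := by
  have hyx : y ≠ x := by
    intro h; exact hy (h ▸ subset_span rfl)
  rw [Set.pair_comm]
  have hym : y ∉ ({x} : Set V3) := by simpa using hyx
  show LinearIndepOn (ZMod 3) id (insert y {x}); rw [linearIndepOn_id_insert hym]
  exact ⟨LinearIndepOn.singleton hx, hy⟩

private lemma finrank_span_pair_of_not_mem {x y : V3} (hx : x ≠ 0)
    (hy : y ∉ span (ZMod 3) ({x} : Set V3)) :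
    finrank (ZMod 3) (span (ZMod 3) ({x, y} : Set V3)) = 2 := by
  have hyx : x ≠ y := by
    intro h; exact hy (h ▸ subset_span rfl)
  exact finrank_span_pair' hyx (indep_pair_of_not_mem hx hy)

private lemma zero_sum_triple_unique {f : V3 → W2} {ℓ t1 t2 : Finset V3}
    (hinj : ∀ a ∈ ℓ, ∀ b ∈ ℓ, f a = f b → a = b)
    (hcard : ℓ.card = 4) (ht1 : t1 ⊆ ℓ) (ht2 : t2 ⊆ ℓ)
    (hc1 : t1.card = 3) (hc2 : t2.card = 3)
    (hs1 : ∑ v ∈ t1, f v = 0) (hs2 : ∑ v ∈ t2, f v = 0) : t1 = t2 := by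
  by_contra hne
  have hud : (t1 ∪ t2).card ≤ 4 :=
    le_trans (Finset.card_le_card (Finset.union_subset ht1 ht2)) (le_of_eq hcard)
  have hcui := Finset.card_union_add_card_inter t1 t2
  have hint3 : (t1 ∩ t2).card ≠ 3 := by
    intro h3
    have e1 : t1 ∩ t2 = t1 :=
      Finset.eq_of_subset_of_card_le Finset.inter_subset_left (by omega)
    have e2 : t1 ∩ t2 = t2 :=
      Finset.eq_of_subset_of_card_le Finset.inter_subset_right (by omega)
    exact hne (e1 ▸ e2)
  have hile : (t1 ∩ t2).card ≤ 3 :=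
    le_trans (Finset.card_le_card Finset.inter_subset_left) (le_of_eq hc1)
  have hint2 : (t1 ∩ t2).card = 2 := by omega
  have hsd1 := Finset.card_sdiff_add_card_inter t1 t2
  have hsd2 := Finset.card_sdiff_add_card_inter t2 t1
  rw [Finset.inter_comm] at hsd2
  obtain ⟨u, hu⟩ := Finset.card_eq_one.mp (show (t1 \ t2).card = 1 by omega)
  obtain ⟨v, hv⟩ := Finset.card_eq_one.mp (show (t2 \ t1).card = 1 by omega)
  have ht1eq : t1 = (t1 ∩ t2) ∪ {u} := by
    ext a
    simp only [Finset.mem_union, Finset.mem_inter, Finset.mem_singleton]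
    constructor
    · intro ha
      by_cases hat2 : a ∈ t2
      · exact Or.inl ⟨ha, hat2⟩
      · have : a ∈ t1 \ t2 := Finset.mem_sdiff.mpr ⟨ha, hat2⟩
        rw [hu] at this
        exact Or.inr (Finset.mem_singleton.mp this)
    · rintro (⟨ha, _⟩ | rfl)
      · exact ha
      · have : a ∈ t1 \ t2 := by rw [hu]; exact Finset.mem_singleton_self a
        exact (Finset.mem_sdiff.mp this).1
  have ht2eq : t2 = (t1 ∩ t2) ∪ {v} := by
    ext a
    simp only [Finset.mem_union, Finset.mem_inter, Finset.mem_singleton]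
    constructor
    · intro ha
      by_cases hat1 : a ∈ t1
      · exact Or.inl ⟨hat1, ha⟩
      · have : a ∈ t2 \ t1 := Finset.mem_sdiff.mpr ⟨ha, hat1⟩
        rw [hv] at this
        exact Or.inr (Finset.mem_singleton.mp this)
    · rintro (⟨_, ha⟩ | rfl)
      · exact ha
      · have : a ∈ t2 \ t1 := by rw [hv]; exact Finset.mem_singleton_self a
        exact (Finset.mem_sdiff.mp this).1
  have hud1 : Disjoint (t1 ∩ t2) {u} := by
    rw [Finset.disjoint_singleton_right]
    intro hmem
    have : u ∈ t1 \ t2 := by rw [hu]; exact Finset.mem_singleton_self u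
    exact (Finset.mem_sdiff.mp this).2 (Finset.mem_inter.mp hmem).2
  have hud2 : Disjoint (t1 ∩ t2) {v} := by
    rw [Finset.disjoint_singleton_right]
    intro hmem
    have : v ∈ t2 \ t1 := by rw [hv]; exact Finset.mem_singleton_self v
    exact (Finset.mem_sdiff.mp this).2 (Finset.mem_inter.mp hmem).1
  have hsum1 : ∑ w ∈ t1, f w = (∑ w ∈ t1 ∩ t2, f w) + f u := by
    conv_lhs => rw [ht1eq]
    rw [Finset.sum_union hud1, Finset.sum_singleton]
  have hsum2 : ∑ w ∈ t2, f w = (∑ w ∈ t1 ∩ t2, f w) + f v := by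
    conv_lhs => rw [ht2eq]
    rw [Finset.sum_union hud2, Finset.sum_singleton]
  have hfu : f u = f v := by
    have h1 : (∑ w ∈ t1 ∩ t2, f w) + f u = 0 := by rw [← hsum1]; exact hs1
    have h2 : (∑ w ∈ t1 ∩ t2, f w) + f v = 0 := by rw [← hsum2]; exact hs2
    have := h1.trans h2.symm
    exact add_left_cancel this
  have huℓ : u ∈ ℓ := ht1 (by rw [ht1eq]; exact Finset.mem_union_right _ (Finset.mem_singleton_self u))
  have hvℓ : v ∈ ℓ := ht2 (by rw [ht2eq]; exact Finset.mem_union_right _ (Finset.mem_singleton_self v))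
  have huv : u = v := hinj u huℓ v hvℓ hfu
  have : u ∈ t1 \ t2 := by rw [hu]; exact Finset.mem_singleton_self u
  have hvmem : v ∈ t2 \ t1 := by rw [hv]; exact Finset.mem_singleton_self v
  rw [← huv] at hvmem
  exact (Finset.mem_sdiff.mp hvmem).2 (Finset.mem_sdiff.mp this).1

/-- There is no nondegenerate simplicial map from `X(F_3^4)` to `X(F_2^6)`.
(Consequently `s_2(X(F_3^4)) ≤ 80 − 7 = 73`.) -/
theorem stmt17 :
    ¬ ∃ f : (Fin 4 → ZMod 3) → (Fin 6 → ZMod 2),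
      ∀ s : Finset (Fin 4 → ZMod 3),
        LinearIndependent (ZMod 3) (fun v : s => (v.1 : Fin 4 → ZMod 3)) →
        LinearIndependent (ZMod 2) (fun v : s => f v.1) := by
  rintro ⟨f, hf⟩
  classical
  set Pts : Finset V3 := ptsIn ⊤ with hPts
  have hmemPts : ∀ {v : V3}, v ∈ Pts ↔ isN v := by
    intro v; rw [hPts, mem_ptsIn]; simp
  have hcard40 : Pts.card = 40 := by
    have h := two_mul_card_ptsIn (⊤ : Submodule (ZMod 3) V3)
    rw [finrank_top, finrank_V3] at h
    rw [hPts]; omega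
  have hinj : ∀ {A B : V3}, A ∈ Pts → B ∈ Pts → f A = f B → A = B := by
    intro A B hA hB hEq
    by_contra hne
    exact finj hf (hmemPts.mp hA) (hmemPts.mp hB) hne hEq
  have hne0 : ∀ {A : V3}, A ∈ Pts → f A ≠ 0 := by
    intro A hA; exact fne0 hf (hmemPts.mp hA)
  have hpair : ∀ {A B : V3}, A ∈ Pts → B ∈ Pts → A ≠ B →
      LinearIndependent (ZMod 3) (fun v : ({A, B} : Set V3) => (v : V3)) := by
    intro A B hA hB hAB
    exact indep_pair (hmemPts.mp hA) (hmemPts.mp hB) hAB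
  have hfr2 : ∀ {A B : V3}, A ∈ Pts → B ∈ Pts → A ≠ B →
      finrank (ZMod 3) (span (ZMod 3) ({A, B} : Set V3)) = 2 := by
    intro A B hA hB hAB
    exact finrank_span_pair' hAB (hpair hA hB hAB)
  have hK3 : ∀ {A B C : V3}, A ∈ Pts → B ∈ Pts → C ∈ Pts → A ≠ B → C ≠ A → C ≠ B →
      f A + f B + f C = 0 → C ∈ span (ZMod 3) ({A, B} : Set V3) := by
    intro A B C hA hB hC hAB hCA hCB hsum
    exact K3 hf (hmemPts.mp hA) (hmemPts.mp hB) (hmemPts.mp hC) hAB hCA hCB hsum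
  have hK4 : ∀ {A B C D : V3}, A ∈ Pts → B ∈ Pts → C ∈ Pts → D ∈ Pts →
      A ≠ B → A ≠ C → A ≠ D → B ≠ C → B ≠ D → C ≠ D →
      f A + f B + f C + f D = 0 →
      ∃ x : V3, x ≠ 0 ∧
        x ∈ span (ZMod 3) ({A, B} : Set V3) ⊓ span (ZMod 3) ({C, D} : Set V3) := by
    intro A B C D hA hB hC hD hAB hAC hAD hBC hBD hCD hsum
    exact K4 hf (hmemPts.mp hA) (hmemPts.mp hB) (hmemPts.mp hC) (hmemPts.mp hD)
      hAB hAC hAD hBC hBD hCD hsum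
  -- the 1560 ordered pairs of distinct points
  set D : Finset (V3 × V3) := Pts.offDiag with hDdef
  have hmemD : ∀ {p : V3 × V3}, p ∈ D ↔ p.1 ∈ Pts ∧ p.2 ∈ Pts ∧ p.1 ≠ p.2 := by
    intro p; rw [hDdef, Finset.mem_offDiag]
  have hDcard : D.card = 1560 := by rw [hDdef, Finset.offDiag_card, hcard40]
  set T' : Finset W2 := Pts.image f with hT'def
  have hT'card : T'.card = 40 := by
    rw [hT'def, Finset.card_image_of_injOn (fun a ha b hb h => hinj ha hb h), hcard40]
  set lineOf : V3 × V3 → Finset V3 :=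
    fun p => ptsIn (span (ZMod 3) ({p.1, p.2} : Set V3)) with hlineOf
  have hlineMemSpan : ∀ {p : V3 × V3} {v : V3}, v ∈ Pts →
      v ∈ span (ZMod 3) ({p.1, p.2} : Set V3) → v ∈ lineOf p := by
    intro p v hv hsp
    rw [hlineOf, mem_ptsIn]
    exact ⟨hsp, hmemPts.mp hv⟩
  have hlineSub : ∀ {p : V3 × V3}, lineOf p ⊆ Pts := by
    intro p v hv
    rw [hlineOf, mem_ptsIn] at hv
    exact hmemPts.mpr hv.2
  have hlineSpanMem : ∀ {p : V3 × V3} {v : V3},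
      v ∈ lineOf p → v ∈ span (ZMod 3) ({p.1, p.2} : Set V3) := by
    intro p v hv
    rw [hlineOf, mem_ptsIn] at hv
    exact hv.1
  have hlineMem : ∀ {p : V3 × V3}, p ∈ D → p.1 ∈ lineOf p ∧ p.2 ∈ lineOf p := by
    intro p hp
    obtain ⟨h1, h2, _⟩ := hmemD.mp hp
    constructor
    · exact hlineMemSpan h1 (subset_span (by simp))
    · exact hlineMemSpan h2 (subset_span (by simp))
  have hline4 : ∀ {p : V3 × V3}, p ∈ D → (lineOf p).card = 4 := by
    intro p hp
    obtain ⟨h1, h2, h3⟩ := hmemD.mp hp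
    have h := two_mul_card_ptsIn (span (ZMod 3) ({p.1, p.2} : Set V3))
    rw [hfr2 h1 h2 h3] at h
    have hl : lineOf p = ptsIn (span (ZMod 3) ({p.1, p.2} : Set V3)) := rfl
    rw [hl]
    omega
  have hspanEq : ∀ {p q : V3 × V3}, p ∈ D → q ∈ D →
      q.1 ∈ lineOf p → q.2 ∈ lineOf p →
      span (ZMod 3) ({q.1, q.2} : Set V3) = span (ZMod 3) ({p.1, p.2} : Set V3) := by
    intro p q hp hq h1 h2
    obtain ⟨hp1, hp2, hp3⟩ := hmemD.mp hp
    obtain ⟨hq1, hq2, hq3⟩ := hmemD.mp hq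
    have hle : span (ZMod 3) ({q.1, q.2} : Set V3) ≤ span (ZMod 3) ({p.1, p.2} : Set V3) := by
      rw [span_le]
      intro v hv
      rcases hv with rfl | rfl
      · exact hlineSpanMem h1
      · exact hlineSpanMem h2
    exact Submodule.eq_of_le_of_finrank_le hle
      (by rw [hfr2 hp1 hp2 hp3, hfr2 hq1 hq2 hq3])
  have hlineEq : ∀ {p q : V3 × V3}, p ∈ D → q ∈ D →
      q.1 ∈ lineOf p → q.2 ∈ lineOf p → lineOf q = lineOf p := by
    intro p q hp hq h1 h2
    show ptsIn (span (ZMod 3) ({q.1, q.2} : Set V3)) = ptsIn (span (ZMod 3) ({p.1, p.2} : Set V3))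
    rw [hspanEq hp hq h1 h2]
  set LINES : Finset (Finset V3) := D.image lineOf with hLINESdef
  have hfiber12 : ∀ ℓ ∈ LINES, (D.filter (fun p => lineOf p = ℓ)).card = 12 := by
    intro ℓ hℓ
    rw [hLINESdef, Finset.mem_image] at hℓ
    obtain ⟨p, hp, hpl⟩ := hℓ
    have hfeq : D.filter (fun q => lineOf q = ℓ) = ℓ.offDiag := by
      ext q
      constructor
      · intro hqf
        have hq : q ∈ D := Finset.mem_of_mem_filter _ hqf
        have hql : lineOf q = ℓ := (Finset.mem_filter.mp hqf).2
        obtain ⟨m1, m2⟩ := hlineMem hq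
        rw [Finset.mem_offDiag, ← hql]
        exact ⟨m1, m2, (hmemD.mp hq).2.2⟩
      · intro hqo
        rw [Finset.mem_offDiag] at hqo
        obtain ⟨h1, h2, h3⟩ := hqo
        rw [← hpl] at h1 h2
        have hq : q ∈ D := by
          rw [hmemD]
          exact ⟨hlineSub h1, hlineSub h2, h3⟩
        rw [Finset.mem_filter]
        exact ⟨hq, by rw [← hpl]; exact hlineEq hp hq h1 h2⟩
    rw [hfeq, Finset.offDiag_card, ← hpl, hline4 hp]
  have hLINEScard : LINES.card = 130 := by
    have h := Finset.card_eq_sum_card_fiberwise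
      (f := lineOf) (s := D) (t := LINES)
      (fun p hp => by rw [hLINESdef]; exact Finset.mem_image_of_mem _ hp)
    rw [Finset.sum_congr rfl hfiber12] at h
    rw [Finset.sum_const, smul_eq_mul] at h
    rw [hDcard] at h
    omega
  set D1 : Finset (V3 × V3) := D.filter (fun p => f p.1 + f p.2 ∈ T') with hD1def
  set D2 : Finset (V3 × V3) := D.filter (fun p => ¬ (f p.1 + f p.2 ∈ T')) with hD2def
  have hsplitD : D1.card + D2.card = 1560 := by
    rw [hD1def, hD2def, Finset.card_filter_add_card_filter_not, hDcard]
  have hthird : ∀ p, p ∈ D1 → ∃ C, C ∈ lineOf p ∧ C ≠ p.1 ∧ C ≠ p.2 ∧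
      f C + f p.1 + f p.2 = 0 := by
    intro p hp1
    have hp : p ∈ D := Finset.mem_of_mem_filter _ hp1
    have hm := (Finset.mem_filter.mp hp1).2
    rw [hT'def, Finset.mem_image] at hm
    obtain ⟨C, hCp, hCv⟩ := hm
    obtain ⟨h1, h2, h3⟩ := hmemD.mp hp
    have hC1 : C ≠ p.1 := by
      intro hEq
      apply hne0 h2
      have : f p.1 = f p.1 + f p.2 := by rw [← hCv, hEq]
      have h' := congrArg (fun w => f p.1 + w) this.symm
      simpa [← add_assoc, W2_add_self] using h'
    have hC2 : C ≠ p.2 := by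
      intro hEq
      apply hne0 h1
      have : f p.2 = f p.1 + f p.2 := by rw [← hCv, hEq]
      have h' := congrArg (fun w => w + f p.2) this.symm
      rw [add_assoc, W2_add_self, add_zero] at h'
      exact h'
    have hsum : f p.1 + f p.2 + f C = 0 := by
      rw [hCv]; exact W2_add_self _
    have hCsp := hK3 h1 h2 hCp h3 hC1 hC2 hsum
    refine ⟨C, hlineMemSpan hCp hCsp, hC1, hC2, ?_⟩
    have : f C + f p.1 + f p.2 = f p.1 + f p.2 + f C := by abel
    rw [this]; exact hsum
  choose! tC htCmem htC1 htC2 htCsum using hthird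
  have htri : ∀ p, p ∈ D1 → ({tC p, p.1, p.2} : Finset V3) ⊆ lineOf p ∧
      ({tC p, p.1, p.2} : Finset V3).card = 3 ∧
      ∑ v ∈ ({tC p, p.1, p.2} : Finset V3), f v = 0 := by
    intro p hp1
    have hp : p ∈ D := Finset.mem_of_mem_filter _ hp1
    obtain ⟨h1, h2, h3⟩ := hmemD.mp hp
    obtain ⟨m1, m2⟩ := hlineMem hp
    refine ⟨?_, ?_, ?_⟩
    · intro v hv
      simp only [Finset.mem_insert, Finset.mem_singleton] at hv
      rcases hv with rfl | rfl | rfl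
      · exact htCmem p hp1
      · exact m1
      · exact m2
    · rw [Finset.card_insert_of_notMem (by simp [htC1 p hp1, htC2 p hp1]),
        Finset.card_insert_of_notMem (by simp [h3]), Finset.card_singleton]
    · rw [Finset.sum_insert (by simp [htC1 p hp1, htC2 p hp1]),
        Finset.sum_insert (by simp [h3]), Finset.sum_singleton]
      have : f (tC p) + (f p.1 + f p.2) = f (tC p) + f p.1 + f p.2 := by abel
      rw [this]; exact htCsum p hp1
  have hD1fiber : ∀ ℓ ∈ LINES, (D1.filter (fun p => lineOf p = ℓ)).card ≤ 6 := by
    intro ℓ hℓ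
    by_cases hne : (D1.filter (fun p => lineOf p = ℓ)).Nonempty
    · obtain ⟨p0, hp0⟩ := hne
      have hp0D1 : p0 ∈ D1 := Finset.mem_of_mem_filter _ hp0
      have hp0l : lineOf p0 = ℓ := (Finset.mem_filter.mp hp0).2
      have hp0D : p0 ∈ D := Finset.mem_of_mem_filter _ hp0D1
      have hℓ4 : ℓ.card = 4 := by rw [← hp0l]; exact hline4 hp0D
      have hinjℓ : ∀ a ∈ ℓ, ∀ b ∈ ℓ, f a = f b → a = b := by
        intro a ha b hb hab
        rw [← hp0l] at ha hb
        exact hinj (hlineSub ha) (hlineSub hb) hab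
      have hsubset : D1.filter (fun p => lineOf p = ℓ) ⊆
          ({tC p0, p0.1, p0.2} : Finset V3).offDiag := by
        intro q hq
        have hqD1 : q ∈ D1 := Finset.mem_of_mem_filter _ hq
        have hql : lineOf q = ℓ := (Finset.mem_filter.mp hq).2
        have hqD : q ∈ D := Finset.mem_of_mem_filter _ hqD1
        obtain ⟨hs0, hc0, hz0⟩ := htri p0 hp0D1
        obtain ⟨hsq, hcq, hzq⟩ := htri q hqD1
        rw [hp0l] at hs0
        rw [hql] at hsq
        have htreq := zero_sum_triple_unique hinjℓ hℓ4 hsq hs0 hcq hc0 hzq hz0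
        rw [Finset.mem_offDiag]
        refine ⟨?_, ?_, (hmemD.mp hqD).2.2⟩
        · rw [← htreq]; simp
        · rw [← htreq]; simp
      calc (D1.filter (fun p => lineOf p = ℓ)).card
          ≤ ({tC p0, p0.1, p0.2} : Finset V3).offDiag.card := Finset.card_le_card hsubset
        _ ≤ 6 := by
            rw [Finset.offDiag_card]
            have h2 : ({tC p0, p0.1, p0.2} : Finset V3).card ≤ 3 := by
              apply le_trans (Finset.card_insert_le _ _)
              have h4 := Finset.card_insert_le p0.1 ({p0.2} : Finset V3)
              rw [Finset.card_singleton] at h4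
              omega
            have h3 := Nat.mul_le_mul_right ({tC p0, p0.1, p0.2} : Finset V3).card h2
            have h5 := Nat.sub_le_sub_right h3 ({tC p0, p0.1, p0.2} : Finset V3).card
            apply le_trans h5
            omega
    · rw [Finset.not_nonempty_iff_eq_empty] at hne
      rw [hne]
      simp
  have hD1card : D1.card ≤ 780 := by
    have h := Finset.card_eq_sum_card_fiberwise
      (f := lineOf) (s := D1) (t := LINES)
      (fun p hp => by
        rw [hLINESdef]
        exact Finset.mem_image_of_mem _ (Finset.mem_of_mem_filter _ hp))
    rw [h]
    calc ∑ ℓ ∈ LINES, (D1.filter (fun p => lineOf p = ℓ)).card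
        ≤ LINES.card * 6 := by
          rw [← smul_eq_mul]
          exact Finset.sum_le_card_nsmul _ _ 6 hD1fiber
      _ = 780 := by rw [hLINEScard]
  have hD2card : 780 ≤ D2.card := by omega
  set NT : Finset W2 := (univ.filter (fun w : W2 => w ≠ 0)) \ T' with hNTdef
  have hNZcard : (univ.filter (fun w : W2 => w ≠ 0)).card = 63 := by
    have h1 : (univ.filter (fun w : W2 => w ≠ 0)) = univ.erase 0 := by
      ext w; simp [Finset.mem_erase, and_comm]
    rw [h1, Finset.card_erase_of_mem (Finset.mem_univ _), Finset.card_univ]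
    rw [show Fintype.card W2 = 64 by rw [Fintype.card_fun, ZMod.card]; norm_num]
  have hT'sub : T' ⊆ univ.filter (fun w : W2 => w ≠ 0) := by
    intro w hw
    rw [hT'def, Finset.mem_image] at hw
    obtain ⟨A, hA, rfl⟩ := hw
    simp only [Finset.mem_filter, Finset.mem_univ, true_and]
    exact hne0 hA
  have hNTcard : NT.card = 23 := by
    rw [hNTdef, Finset.card_sdiff_of_subset hT'sub, hNZcard, hT'card]
  have hD2map : ∀ p ∈ D2, f p.1 + f p.2 ∈ NT := by
    intro p hp
    have hpD : p ∈ D := Finset.mem_of_mem_filter _ hp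
    obtain ⟨h1, h2, h3⟩ := hmemD.mp hpD
    have hnT := (Finset.mem_filter.mp hp).2
    rw [hNTdef, Finset.mem_sdiff]
    refine ⟨?_, hnT⟩
    simp only [Finset.mem_filter, Finset.mem_univ, true_and]
    intro h0
    exact h3 (hinj h1 h2 (W2_add_eq_zero h0))
  obtain ⟨sS, hsSNT, hsS34⟩ :
      ∃ sS ∈ NT, 34 ≤ (D2.filter (fun p => f p.1 + f p.2 = sS)).card := by
    by_contra hcon
    push_neg at hcon
    have h := Finset.card_eq_sum_card_fiberwise hD2map
    have hle : D2.card ≤ NT.card * 33 := by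
      rw [h, ← smul_eq_mul]
      exact Finset.sum_le_card_nsmul _ _ 33 (fun w hw => by have := hcon w hw; omega)
    rw [hNTcard] at hle
    omega
  have hsS0 : sS ≠ 0 := by
    rw [hNTdef, Finset.mem_sdiff, Finset.mem_filter] at hsSNT
    exact hsSNT.1.2
  have hsST' : sS ∉ T' := by
    rw [hNTdef, Finset.mem_sdiff] at hsSNT
    exact hsSNT.2
  set F : Finset (V3 × V3) := D2.filter (fun p => f p.1 + f p.2 = sS) with hFdef
  have hmemF : ∀ {p : V3 × V3}, p ∈ F ↔
      (p.1 ∈ Pts ∧ p.2 ∈ Pts ∧ p.1 ≠ p.2) ∧ f p.1 + f p.2 = sS := by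
    intro p
    rw [hFdef, Finset.mem_filter, hD2def, Finset.mem_filter, hmemD]
    constructor
    · rintro ⟨⟨h1, _⟩, h3⟩; exact ⟨h1, h3⟩
    · rintro ⟨h1, h3⟩
      refine ⟨⟨h1, ?_⟩, h3⟩
      rw [h3]; exact hsST'
  set M : Finset V3 := F.image Prod.fst with hMdef
  have hMsub : M ⊆ Pts := by
    intro A hA
    rw [hMdef, Finset.mem_image] at hA
    obtain ⟨p, hp, rfl⟩ := hA
    exact (hmemF.mp hp).1.1
  have hMcard : 34 ≤ M.card := by
    rw [hMdef]
    rw [Finset.card_image_of_injOn ?hinj]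
    · exact hsS34
    case hinj =>
      intro p hp q hq hEq
      have hp' := hmemF.mp hp
      have hq' := hmemF.mp hq
      have h2 : f p.2 = f q.2 := by
        have h1 : f p.1 + f p.2 = f q.1 + f q.2 := by rw [hp'.2, hq'.2]
        rw [hEq] at h1
        exact add_left_cancel h1
      have := hinj hp'.1.2.1 hq'.1.2.1 h2
      exact Prod.ext hEq this
  have hpartner : ∀ A ∈ M, ∃ B, (A, B) ∈ F := by
    intro A hA
    rw [hMdef, Finset.mem_image] at hA
    obtain ⟨p, hp, rfl⟩ := hA
    exact ⟨p.2, hp⟩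
  choose! μ hμ using hpartner
  have hμPts : ∀ A ∈ M, μ A ∈ Pts := fun A hA => (hmemF.mp (hμ A hA)).1.2.1
  have hμne : ∀ A ∈ M, μ A ≠ A := fun A hA => fun h =>
    (hmemF.mp (hμ A hA)).1.2.2 h.symm
  have hμsum : ∀ A ∈ M, f A + f (μ A) = sS := fun A hA => (hmemF.mp (hμ A hA)).2
  have hμval : ∀ A ∈ M, f (μ A) = f A + sS := by
    intro A hA
    have h := hμsum A hA
    have h2 := congrArg (fun w => f A + w) h
    simpa [← add_assoc, W2_add_self] using h2
  have hμM : ∀ A ∈ M, μ A ∈ M := by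
    intro A hA
    rw [hMdef, Finset.mem_image]
    refine ⟨(μ A, A), ?_, rfl⟩
    rw [hmemF]
    have hA' := hmemF.mp (hμ A hA)
    refine ⟨⟨hA'.1.2.1, hA'.1.1, fun h => hA'.1.2.2 h.symm⟩, ?_⟩
    rw [add_comm]
    exact hA'.2
  have hμinv : ∀ A ∈ M, μ (μ A) = A := by
    intro A hA
    have h1 := hμval A hA
    have h2 := hμval (μ A) (hμM A hA)
    rw [h1] at h2
    have h3 : f (μ (μ A)) = f A := by
      rw [h2, add_assoc, W2_add_self, add_zero]
    exact hinj (hμPts (μ A) (hμM A hA)) (hMsub hA) h3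
  set L : V3 → Submodule (ZMod 3) V3 := fun A => span (ZMod 3) ({A, μ A} : Set V3) with hLdef
  have hALA : ∀ A, A ∈ L A := fun A => subset_span (by simp)
  have hμLA : ∀ A, μ A ∈ L A := fun A => subset_span (by simp)
  have hμA_ne : ∀ A ∈ M, A ≠ μ A := fun A hA h => hμne A hA h.symm
  have hfrL : ∀ A ∈ M, finrank (ZMod 3) (L A) = 2 := by
    intro A hA
    exact hfr2 (hMsub hA) (hμPts A hA) (hμA_ne A hA)
  have hLμ : ∀ A ∈ M, L (μ A) = L A := by
    intro A hA
    show span (ZMod 3) ({μ A, μ (μ A)} : Set V3) = span (ZMod 3) ({A, μ A} : Set V3)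
    rw [hμinv A hA, Set.pair_comm]
  have hK4p : ∀ A ∈ M, ∀ A' ∈ M, A' ≠ A → A' ≠ μ A →
      ∃ x : V3, x ≠ 0 ∧ x ∈ L A ⊓ L A' := by
    intro A hA A' hA' h1 h2
    have hd1 : A ≠ μ A := hμA_ne A hA
    have hd2 : A ≠ A' := fun h => h1 h.symm
    have hd3 : A ≠ μ A' := by
      intro h
      apply h2
      have h3 := hμinv A' hA'
      rw [← h] at h3
      exact h3.symm
    have hd4 : μ A ≠ A' := fun h => h2 h.symm
    have hd5 : μ A ≠ μ A' := by
      intro h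
      have h3 := hμinv A hA
      rw [h, hμinv A' hA'] at h3
      exact h1 h3
    have hd6 : A' ≠ μ A' := hμA_ne A' hA'
    have hsum : f A + f (μ A) + f A' + f (μ A') = 0 := by
      have e1 := hμsum A hA
      have e2 := hμsum A' hA'
      calc f A + f (μ A) + f A' + f (μ A')
          = (f A + f (μ A)) + (f A' + f (μ A')) := by abel
        _ = sS + sS := by rw [e1, e2]
        _ = 0 := W2_add_self sS
    exact hK4 (hMsub hA) (hμPts A hA) (hMsub hA') (hμPts A' hA')
      hd1 hd2 hd3 hd4 hd5 hd6 hsum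
  have hBranchW : ∀ Wp : Submodule (ZMod 3) V3, finrank (ZMod 3) Wp = 3 →
      (∀ A ∈ M, A ∈ Wp) → False := by
    intro Wp hfr hsub
    have hMW : M ⊆ ptsIn Wp := by
      intro A hA
      rw [mem_ptsIn]
      exact ⟨hsub A hA, hmemPts.mp (hMsub hA)⟩
    have h := two_mul_card_ptsIn Wp
    rw [hfr] at h
    have := Finset.card_le_card hMW
    omega
  have hBranchX : ∀ x : V3, x ≠ 0 → (∀ A ∈ M, x ∈ L A) → False := by
    intro x hx0 hxL
    set SX : Submodule (ZMod 3) V3 := span (ZMod 3) ({x} : Set V3) with hSXdef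
    have hSXcard : (ptsIn SX).card = 1 := by
      have h := two_mul_card_ptsIn SX
      rw [hSXdef, finrank_span_singleton hx0] at h
      rw [hSXdef]
      omega
    set M2 : Finset V3 := M.filter (fun A => A ∉ SX ∧ μ A ∉ SX) with hM2def
    have hM2sub : M2 ⊆ M := Finset.filter_subset _ _
    have hM2card : 32 ≤ M2.card := by
      have hc1 : (M.filter (fun A => A ∈ SX)).card ≤ 1 := by
        have hsub1 : M.filter (fun A => A ∈ SX) ⊆ ptsIn SX := by
          intro A hA
          rw [mem_ptsIn]
          exact ⟨(Finset.mem_filter.mp hA).2, hmemPts.mp (hMsub (Finset.mem_of_mem_filter _ hA))⟩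
        calc (M.filter (fun A => A ∈ SX)).card ≤ (ptsIn SX).card := Finset.card_le_card hsub1
          _ = 1 := hSXcard
      have hc2 : (M.filter (fun A => μ A ∈ SX)).card ≤ 1 := by
        have hinjμ : Set.InjOn μ (M.filter (fun A => μ A ∈ SX)) := by
          intro a ha b hb hEq
          have ha' := Finset.mem_of_mem_filter _ ha
          have hb' := Finset.mem_of_mem_filter _ hb
          have h1 := hμinv a ha'
          rw [hEq, hμinv b hb'] at h1
          exact h1.symm
        have hmap : ∀ A ∈ M.filter (fun A => μ A ∈ SX), μ A ∈ ptsIn SX := by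
          intro A hA
          rw [mem_ptsIn]
          exact ⟨(Finset.mem_filter.mp hA).2,
            hmemPts.mp (hμPts A (Finset.mem_of_mem_filter _ hA))⟩
        calc (M.filter (fun A => μ A ∈ SX)).card
            ≤ (ptsIn SX).card := Finset.card_le_card_of_injOn μ hmap hinjμ
          _ = 1 := hSXcard
      have hcover : M ⊆ M2 ∪ (M.filter (fun A => A ∈ SX)) ∪ (M.filter (fun A => μ A ∈ SX)) := by
        intro A hA
        simp only [Finset.mem_union, hM2def, Finset.mem_filter]
        by_cases h1 : A ∈ SX
        · exact Or.inl (Or.inr ⟨hA, h1⟩)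
        · by_cases h2 : μ A ∈ SX
          · exact Or.inr ⟨hA, h2⟩
          · exact Or.inl (Or.inl ⟨hA, h1, h2⟩)
      have hle := Finset.card_le_card hcover
      have hle2 := Finset.card_union_le (M2 ∪ (M.filter (fun A => A ∈ SX)))
        (M.filter (fun A => μ A ∈ SX))
      have hle3 := Finset.card_union_le M2 (M.filter (fun A => A ∈ SX))
      omega
    have hLxA : ∀ A ∈ M2, L A = span (ZMod 3) ({x, A} : Set V3) := by
      intro A hA2
      have hA : A ∈ M := hM2sub hA2
      have hAx : A ∉ SX := (Finset.mem_filter.mp hA2).2.1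
      symm
      apply Submodule.eq_of_le_of_finrank_le
      · rw [span_le]
        intro v hv
        rcases hv with rfl | hv
        · exact hxL A hA
        · rw [Set.mem_singleton_iff] at hv
          rw [hv]
          exact hALA A
      · rw [hfrL A hA, finrank_span_pair_of_not_mem hx0 hAx]
    set TAfun : V3 → Finset V3 := fun A => (ptsIn (L A)).filter (fun v => v ∉ SX) with hTAdef
    have hTAcard : ∀ A ∈ M2, (TAfun A).card = 3 := by
      intro A hA2
      have hA : A ∈ M := hM2sub hA2
      have h4 : (ptsIn (L A)).card = 4 := by
        have h := two_mul_card_ptsIn (L A)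
        rw [hfrL A hA] at h
        omega
      have hfeq : (ptsIn (L A)).filter (fun v => v ∈ SX) = ptsIn SX := by
        ext v
        rw [Finset.mem_filter, mem_ptsIn, mem_ptsIn]
        constructor
        · rintro ⟨⟨_, hvN⟩, hvS⟩
          exact ⟨hvS, hvN⟩
        · rintro ⟨hvS, hvN⟩
          have hSXle : SX ≤ L A := by
            rw [hSXdef, span_le]
            intro w hw
            rw [Set.mem_singleton_iff] at hw
            rw [hw]
            exact hxL A hA
          exact ⟨⟨hSXle hvS, hvN⟩, hvS⟩
      have hsplit := Finset.card_filter_add_card_filter_not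
        (s := ptsIn (L A)) (p := fun v => v ∈ SX)
      rw [hfeq, hSXcard, h4] at hsplit
      have : TAfun A = (ptsIn (L A)).filter (fun v => ¬ v ∈ SX) := rfl
      rw [this]
      omega
    have hAinTA : ∀ A ∈ M2, A ∈ TAfun A ∧ μ A ∈ TAfun A := by
      intro A hA2
      have hA : A ∈ M := hM2sub hA2
      obtain ⟨hns1, hns2⟩ := (Finset.mem_filter.mp hA2).2
      constructor
      · rw [hTAdef, Finset.mem_filter, mem_ptsIn]
        exact ⟨⟨hALA A, hmemPts.mp (hMsub hA)⟩, hns1⟩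
      · rw [hTAdef, Finset.mem_filter, mem_ptsIn]
        exact ⟨⟨hμLA A, hmemPts.mp (hμPts A hA)⟩, hns2⟩
    have hLeqOfMeet : ∀ A ∈ M2, ∀ A' ∈ M2, ∀ y, y ∈ TAfun A → y ∈ TAfun A' → L A = L A' := by
      intro A hA2 A' hA2' y hy hy'
      have hA : A ∈ M := hM2sub hA2
      have hA' : A' ∈ M := hM2sub hA2'
      have hyL : y ∈ L A := (mem_ptsIn.mp (Finset.mem_of_mem_filter _ hy)).1
      have hyS : y ∉ SX := (Finset.mem_filter.mp hy).2
      have hyL' : y ∈ L A' := (mem_ptsIn.mp (Finset.mem_of_mem_filter _ hy')).1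
      have e1 : span (ZMod 3) ({x, y} : Set V3) = L A := by
        apply Submodule.eq_of_le_of_finrank_le
        · rw [span_le]
          intro v hv
          rcases hv with rfl | hv
          · exact hxL A hA
          · rw [Set.mem_singleton_iff] at hv
            rw [hv]
            exact hyL
        · rw [hfrL A hA, finrank_span_pair_of_not_mem hx0 hyS]
      have e2 : span (ZMod 3) ({x, y} : Set V3) = L A' := by
        apply Submodule.eq_of_le_of_finrank_le
        · rw [span_le]
          intro v hv
          rcases hv with rfl | hv
          · exact hxL A' hA'
          · rw [Set.mem_singleton_iff] at hv
            rw [hv]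
            exact hyL'
        · rw [hfrL A' hA', finrank_span_pair_of_not_mem hx0 hyS]
      rw [← e1, e2]
    have hfiber2 : ∀ A ∈ M2, (M2.filter (fun A' => TAfun A' = TAfun A)).card ≤ 2 := by
      intro A hA2
      have hA : A ∈ M := hM2sub hA2
      have hsub : M2.filter (fun A' => TAfun A' = TAfun A) ⊆ {A, μ A} := by
        intro A' hA'f
        have hA'2 : A' ∈ M2 := Finset.mem_of_mem_filter _ hA'f
        have hA' : A' ∈ M := hM2sub hA'2
        have hTeq : TAfun A' = TAfun A := (Finset.mem_filter.mp hA'f).2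
        by_contra hnm
        simp only [Finset.mem_insert, Finset.mem_singleton] at hnm
        push_neg at hnm
        have hA'in' : A' ∈ TAfun A' := (hAinTA A' hA'2).1
        have hA'in : A' ∈ TAfun A := hTeq ▸ hA'in'
        have hμA'in : μ A' ∈ TAfun A := hTeq ▸ (hAinTA A' hA'2).2
        have hAin := (hAinTA A hA2).1
        have hμAin := (hAinTA A hA2).2
        have hd3 : μ A' ≠ A := by
          intro h
          apply hnm.2
          have h3 := hμinv A' hA'
          rw [h] at h3
          exact h3.symm
        have hd5 : μ A' ≠ μ A := by
          intro h
          have h3 := hμinv A' hA'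
          rw [h, hμinv A hA] at h3
          exact hnm.1 h3.symm
        have hd6 : A' ≠ μ A' := hμA_ne A' hA'
        have hsub4 : ({A, μ A, A', μ A'} : Finset V3) ⊆ TAfun A := by
          intro v hv
          simp only [Finset.mem_insert, Finset.mem_singleton] at hv
          rcases hv with rfl | rfl | rfl | rfl
          · exact hAin
          · exact hμAin
          · exact hA'in
          · exact hμA'in
        have hcard4 : ({A, μ A, A', μ A'} : Finset V3).card = 4 := by
          rw [Finset.card_insert_of_notMem, Finset.card_insert_of_notMem,
            Finset.card_insert_of_notMem, Finset.card_singleton]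
          · simp only [Finset.mem_singleton]
            exact hd6

          · simp only [Finset.mem_insert, Finset.mem_singleton]
            push_neg
            exact ⟨fun h => hnm.2 h.symm, fun h => hd5 h.symm⟩
          · simp only [Finset.mem_insert, Finset.mem_singleton]
            push_neg
            exact ⟨hμA_ne A hA, fun h => hnm.1 h.symm, fun h => hd3 h.symm⟩
        have hle := Finset.card_le_card hsub4
        rw [hcard4, hTAcard A hA2] at hle
        omega
      calc (M2.filter (fun A' => TAfun A' = TAfun A)).card
          ≤ ({A, μ A} : Finset V3).card := Finset.card_le_card hsub
        _ ≤ 2 := by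
            apply le_trans (Finset.card_insert_le _ _)
            rw [Finset.card_singleton]
    have hdisj : ∀ t1 ∈ M2.image TAfun, ∀ t2 ∈ M2.image TAfun, t1 ≠ t2 → Disjoint t1 t2 := by
      intro t1 ht1 t2 ht2 hne
      rw [Finset.mem_image] at ht1 ht2
      obtain ⟨A, hA2, rfl⟩ := ht1
      obtain ⟨A', hA'2, rfl⟩ := ht2
      rw [Finset.disjoint_left]
      intro y hy hy'
      apply hne
      have hLeq := hLeqOfMeet A hA2 A' hA'2 y hy hy'
      show TAfun A = TAfun A'
      rw [hTAdef]
      simp only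
      rw [hLeq]
    have himgcount : 3 * ((M2.image TAfun).card) ≤ 40 := by
      have hbUsub : (M2.image TAfun).biUnion id ⊆ Pts := by
        intro v hv
        rw [Finset.mem_biUnion] at hv
        obtain ⟨t, ht, hvt⟩ := hv
        rw [Finset.mem_image] at ht
        obtain ⟨A, hA2, rfl⟩ := ht
        have : v ∈ ptsIn (L A) := Finset.mem_of_mem_filter _ hvt
        exact hmemPts.mpr (mem_ptsIn.mp this).2
      have hcardbU := Finset.card_biUnion hdisj
      have hsum3 : ∑ u ∈ M2.image TAfun, u.card = 3 * ((M2.image TAfun).card) := by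
        rw [Finset.sum_congr rfl (fun t ht => ?_), Finset.sum_const, smul_eq_mul, mul_comm]
        rw [Finset.mem_image] at ht
        obtain ⟨A, hA2, rfl⟩ := ht
        exact hTAcard A hA2
      rw [hsum3] at hcardbU
      calc 3 * ((M2.image TAfun).card) = ((M2.image TAfun).biUnion (fun x => x)).card :=
            hcardbU.symm
        _ ≤ Pts.card := Finset.card_le_card hbUsub
        _ = 40 := hcard40
    have hM2le : M2.card ≤ 2 * ((M2.image TAfun).card) := by
      have h := Finset.card_eq_sum_card_fiberwise
        (f := TAfun) (s := M2) (t := M2.image TAfun)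
        (fun A hA => Finset.mem_image_of_mem _ hA)
      rw [h]
      refine le_trans (Finset.sum_le_card_nsmul _ _ 2 ?_) (by rw [smul_eq_mul]; omega)
      intro t ht
      rw [Finset.mem_image] at ht
      obtain ⟨A, hA2, rfl⟩ := ht
      exact hfiber2 A hA2
    omega
  by_cases hall : ∀ A ∈ M, ∀ A' ∈ M, L A = L A'
  · obtain ⟨A0, hA0⟩ : M.Nonempty := Finset.card_pos.mp (by omega)
    apply hBranchX A0 (isN_ne_zero (hmemPts.mp (hMsub hA0)))
    intro A hA
    rw [← hall A0 hA0 A hA]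
    exact hALA A0
  · push_neg at hall
    obtain ⟨A, hA, A', hA', hLne⟩ := hall
    have hA'A : A' ≠ A := fun h => hLne (by rw [h])
    have hA'μA : A' ≠ μ A := by
      intro h
      apply hLne
      rw [h, hLμ A hA]
    obtain ⟨x0, hx00, hx0m⟩ := hK4p A hA A' hA' hA'A hA'μA
    set Wp : Submodule (ZMod 3) V3 := L A ⊔ L A' with hWpdef
    have hformula := Submodule.finrank_sup_add_finrank_inf_eq (L A) (L A')
    rw [hfrL A hA, hfrL A' hA'] at hformula
    have hspanx0le : span (ZMod 3) ({x0} : Set V3) ≤ L A ⊓ L A' := by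
      rw [span_le]
      intro w hw
      rw [Set.mem_singleton_iff] at hw
      rw [hw]
      exact hx0m
    have hinf1 : 1 ≤ finrank (ZMod 3) ((L A ⊓ L A' : Submodule (ZMod 3) V3)) := by
      calc 1 = finrank (ZMod 3) (span (ZMod 3) ({x0} : Set V3)) :=
            (finrank_span_singleton hx00).symm
        _ ≤ finrank (ZMod 3) ((L A ⊓ L A' : Submodule (ZMod 3) V3)) := Submodule.finrank_mono hspanx0le
    have hsup_le : finrank (ZMod 3) Wp ≤ 3 := by rw [hWpdef]; omega
    have hsup_ge : 3 ≤ finrank (ZMod 3) Wp := by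
      by_contra hlt
      push_neg at hlt
      have e1 : L A = Wp := Submodule.eq_of_le_of_finrank_le le_sup_left
        (by rw [hfrL A hA]; omega)
      have e2 : L A' = Wp := Submodule.eq_of_le_of_finrank_le le_sup_right
        (by rw [hfrL A' hA']; omega)
      exact hLne (e1.trans e2.symm)
    have hfrWp : finrank (ZMod 3) Wp = 3 := le_antisymm hsup_le hsup_ge
    have hfrinf : finrank (ZMod 3) ((L A ⊓ L A' : Submodule (ZMod 3) V3)) = 1 := by
      rw [hWpdef] at hfrWp
      omega
    have hinfeq : L A ⊓ L A' = span (ZMod 3) ({x0} : Set V3) := by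
      symm
      apply Submodule.eq_of_le_of_finrank_le hspanx0le
      rw [hfrinf, finrank_span_singleton hx00]
    by_cases hsub : ∀ B ∈ M, L B ≤ Wp
    · exact hBranchW Wp hfrWp (fun B hB => hsub B hB (hALA B))
    · push_neg at hsub
      obtain ⟨k, hk, hkW⟩ := hsub
      have hhelper : ∀ j ∈ M, ¬ L j ≤ Wp → L j ⊓ Wp = span (ZMod 3) ({x0} : Set V3) := by
        intro j hj hjW
        have hfrsupjW : finrank (ZMod 3) ((L j ⊔ Wp : Submodule (ZMod 3) V3)) = 4 := by
          apply le_antisymm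
          · calc finrank (ZMod 3) ((L j ⊔ Wp : Submodule (ZMod 3) V3)) ≤ finrank (ZMod 3) V3 := Submodule.finrank_le _
              _ = 4 := finrank_V3
          · have hlt : Wp < L j ⊔ Wp := by
              apply lt_of_le_of_ne le_sup_right
              intro h
              exact hjW (le_trans le_sup_left h.ge)
            have := Submodule.finrank_lt_finrank_of_lt hlt
            rw [hfrWp] at this
            omega
        have hformj := Submodule.finrank_sup_add_finrank_inf_eq (L j) Wp
        rw [hfrL j hj, hfrWp, hfrsupjW] at hformj
        have hjA : L j ≠ L A := fun h => hjW (h ▸ (le_sup_left : L A ≤ Wp))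
        have hjA' : L j ≠ L A' := fun h => hjW (h ▸ (le_sup_right : L A' ≤ Wp))
        have hjA2 : j ≠ A := fun h => hjA (by rw [h])
        have hjμA : j ≠ μ A := fun h => hjA (by rw [h, hLμ A hA])
        obtain ⟨y, hy0, hym⟩ := hK4p A hA j hj hjA2 hjμA
        have hjA'2 : j ≠ A' := fun h => hjA' (by rw [h])
        have hjμA' : j ≠ μ A' := fun h => hjA' (by rw [h, hLμ A' hA'])
        obtain ⟨y', hy'0, hy'm⟩ := hK4p A' hA' j hj hjA'2 hjμA'
        have hinc1 : L A ⊓ L j ≤ L j ⊓ Wp :=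
          le_inf inf_le_right (le_trans inf_le_left le_sup_left)
        have hinc2 : L A' ⊓ L j ≤ L j ⊓ Wp :=
          le_inf inf_le_right (le_trans inf_le_left le_sup_right)
        have he1 : L A ⊓ L j = L j ⊓ Wp := by
          apply Submodule.eq_of_le_of_finrank_le hinc1
          have h1le : 1 ≤ finrank (ZMod 3) ((L A ⊓ L j : Submodule (ZMod 3) V3)) := by
            calc 1 = finrank (ZMod 3) (span (ZMod 3) ({y} : Set V3)) :=
                  (finrank_span_singleton hy0).symm
              _ ≤ _ := Submodule.finrank_mono (by
                  rw [span_le]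
                  intro w hw
                  rw [Set.mem_singleton_iff] at hw
                  rw [hw]
                  exact hym)
          omega
        have he2 : L A' ⊓ L j = L j ⊓ Wp := by
          apply Submodule.eq_of_le_of_finrank_le hinc2
          have h1le : 1 ≤ finrank (ZMod 3) ((L A' ⊓ L j : Submodule (ZMod 3) V3)) := by
            calc 1 = finrank (ZMod 3) (span (ZMod 3) ({y'} : Set V3)) :=
                  (finrank_span_singleton hy'0).symm
              _ ≤ _ := Submodule.finrank_mono (by
                  rw [span_le]
                  intro w hw
                  rw [Set.mem_singleton_iff] at hw
                  rw [hw]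
                  exact hy'm)
          omega
        have hle : L j ⊓ Wp ≤ L A ⊓ L A' := by
          apply le_inf
          · rw [← he1]
            exact inf_le_left
          · rw [← he2]
            exact inf_le_left
        rw [hinfeq] at hle
        apply Submodule.eq_of_le_of_finrank_le hle
        rw [finrank_span_singleton hx00]
        omega
      apply hBranchX x0 hx00
      intro l hl
      by_cases hlW : L l ≤ Wp
      · have hlk : l ≠ k := fun h => hkW (h ▸ hlW)
        have hlμk : l ≠ μ k := by
          intro h
          apply hkW
          rw [← hLμ k hk, ← h]
          exact hlW
        obtain ⟨y, hy0, hym⟩ := hK4p k hk l hl hlk hlμk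
        have hyW : y ∈ L k ⊓ Wp := by
          rw [Submodule.mem_inf] at hym ⊢
          exact ⟨hym.1, hlW hym.2⟩
        rw [hhelper k hk hkW] at hyW
        obtain ⟨c, hc⟩ := Submodule.mem_span_singleton.mp hyW
        have hc0 : c ≠ 0 := by
          intro h
          apply hy0
          rw [← hc, h, zero_smul]
        have hx0eq : x0 = c⁻¹ • y := by
          rw [← hc, smul_smul, inv_mul_cancel₀ hc0, one_smul]
        rw [hx0eq]
        exact Submodule.smul_mem _ _ (Submodule.mem_inf.mp hym).2
      · have h := hhelper l hl hlW
        have hx0mem : x0 ∈ L l ⊓ Wp := by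
          rw [h]
          exact Submodule.mem_span_singleton_self x0
        exact (Submodule.mem_inf.mp hx0mem).1
end

section
/- Let V be a type, K a family of finsets of V (the simplices of a simplicial complex on vertex set V), r a positive integer, and f : V → (Fin r → ZMod 2) a map such that for every s ∈ K the family (f v), v ∈ s, is linearly independent over ZMod 2. Let p be a prime with (p : ℝ) > (r+1)^((r+1)/2) / 2^r. Define f_p : V → (Fin r → ZMod p) by f_p v i = ((f v i).val : ZMod p) (reading the 0/1 coordinates of f v in ZMod p). Then for every s ∈ K the family (f_p v), v ∈ s, is linearly independent over ZMod p. (Consequently, for a simplicial complex K on m vertices, s_2(K) ≤ s_p(K) for all primes p > (m − s_2(K) + 1)^((m − s_2(K) + 1)/2) / 2^(m − s_2(K)).) -/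
open Matrix

theorem det_le_pow {m : Type*} [Fintype m] [DecidableEq m]
    (hn : 0 < Fintype.card m) (G : Matrix m m ℝ) (hG : G.PosSemidef)
    (c : ℝ) (htr : G.trace = (Fintype.card m) * c) : G.det ≤ c ^ (Fintype.card m) := by
  set n := Fintype.card m with hndef
  have hH := hG.isHermitian
  have heig : ∀ i, 0 ≤ hH.eigenvalues i := hG.eigenvalues_nonneg
  have hsum : ∑ i, hH.eigenvalues i = n * c := by
    rw [← htr]
    conv_rhs => rw [hH.spectral_theorem, Unitary.conjStarAlgAut_apply]
    rw [Matrix.trace_mul_cycle,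
      Unitary.coe_star_mul_self, Matrix.one_mul,
      Matrix.trace_diagonal]
    simp
  have hdet : G.det = ∏ i, hH.eigenvalues i := by
    have := hH.det_eq_prod_eigenvalues; simpa using this
  have hnR : (0:ℝ) < n := by exact_mod_cast hn
  have amgm := Real.geom_mean_le_arith_mean_weighted Finset.univ (fun _ => 1/(n:ℝ))
    hH.eigenvalues (fun i _ => by positivity)
    (by simp [Finset.card_univ, ← hndef]; field_simp) (fun i _ => heig i)
  have hside : ∑ i, (1/(n:ℝ)) * hH.eigenvalues i = c := by
    rw [← Finset.mul_sum, hsum]; field_simp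
  simp only [hside] at amgm
  calc G.det = ∏ i, hH.eigenvalues i := hdet
    _ = ∏ i, (hH.eigenvalues i ^ (1/(n:ℝ)))^(n:ℕ) := by
        refine Finset.prod_congr rfl (fun i _ => ?_)
        rw [← Real.rpow_natCast (hH.eigenvalues i ^ (1/(n:ℝ))) n, ← Real.rpow_mul (heig i)]
        rw [one_div, inv_mul_cancel₀ (ne_of_gt hnR), Real.rpow_one]
    _ = (∏ i, hH.eigenvalues i ^ (1/(n:ℝ)))^(n:ℕ) := by rw [Finset.prod_pow]
    _ ≤ c ^ (n:ℕ) :=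
        pow_le_pow_left₀ (Finset.prod_nonneg (fun i _ => Real.rpow_nonneg (heig i) _)) amgm n

theorem hadamard01 (r : ℕ) (M : Matrix (Fin r) (Fin r) ℝ)
    (hM : ∀ i j, M i j = 0 ∨ M i j = 1) :
    2 ^ r * |M.det| ≤ ((r : ℝ) + 1) ^ (((r : ℝ) + 1) / 2) := by
  set B : Matrix (Unit ⊕ Fin r) (Unit ⊕ Fin r) ℝ :=
    fromBlocks 1 (Matrix.of fun _ _ => 1) (Matrix.of fun _ _ => 1)
      (Matrix.of fun i j => 1 - 2 * M i j) with hBdef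
  set L : Matrix (Unit ⊕ Fin r) (Unit ⊕ Fin r) ℝ :=
    fromBlocks 1 0 (Matrix.of fun _ _ => (-1:ℝ)) 1 with hLdef
  have hLB : L * B = fromBlocks 1 (Matrix.of fun _ _ => 1) 0 ((-2 : ℝ) • M) := by
    ext i j
    rcases i with i | i <;> rcases j with j | j <;>
      simp [hBdef, hLdef, Matrix.mul_apply, Fintype.sum_sum_type, Matrix.fromBlocks,
        Matrix.smul_apply, Matrix.one_apply, Finset.sum_ite_eq]
    · ring
  have hdetL : L.det = 1 := by
    rw [hLdef, det_fromBlocks_zero₁₂]; simp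
  have hdetB : B.det = (-2)^r * M.det := by
    have h1 : (L * B).det = B.det := by rw [det_mul, hdetL, one_mul]
    rw [← h1, hLB, det_fromBlocks_zero₂₁, det_one, one_mul, det_smul]
    simp
  -- entries of B are ±1
  have hBsq : ∀ i j, B i j * B i j = 1 := by
    rintro (i | i) (j | j)
    · simp [hBdef, Matrix.fromBlocks, Matrix.one_apply]
    · simp [hBdef, Matrix.fromBlocks]
    · simp [hBdef, Matrix.fromBlocks]
    · rw [hBdef, Matrix.fromBlocks_apply₂₂]
      rcases hM i j with h | h <;> simp [h] <;> ring
  have hcard : Fintype.card (Unit ⊕ Fin r) = r + 1 := by simp [Fintype.card_sum]; ring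
  set G := B * Bᴴ with hGdef
  have hG : G.PosSemidef := Matrix.posSemidef_self_mul_conjTranspose B
  have htr : G.trace = (Fintype.card (Unit ⊕ Fin r)) * ((r:ℝ) + 1) := by
    have hdiag : ∀ i, G.diag i = (r:ℝ) + 1 := by
      intro i
      simp only [Matrix.diag, hGdef, Matrix.mul_apply, Matrix.conjTranspose_apply, star_trivial]
      rw [Finset.sum_congr rfl (fun j _ => hBsq i j), Finset.sum_const, Finset.card_univ, hcard]
      push_cast; ring
    rw [Matrix.trace, Finset.sum_congr rfl (fun i _ => hdiag i), Finset.sum_const,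
      Finset.card_univ, hcard]
    push_cast; ring
  have hdetle := det_le_pow (by rw [hcard]; omega) G hG ((r:ℝ)+1) htr
  have hdetG : G.det = B.det ^ 2 := by
    rw [hGdef, det_mul, det_conjTranspose, star_trivial]; ring
  -- |det B| ≤ (r+1)^((r+1)/2)
  have h1 : |B.det| ≤ ((r:ℝ)+1) ^ (((r:ℝ)+1)/2) := by
    have h2 : B.det ^ 2 ≤ ((r:ℝ)+1) ^ ((r:ℕ)+1) := by
      rw [← hdetG]; simpa [hcard] using hdetle
    have h3 : |B.det| = Real.sqrt (B.det ^ 2) := (Real.sqrt_sq_eq_abs _).symm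
    rw [h3]
    have h4 : Real.sqrt (((r:ℝ)+1) ^ ((r:ℕ)+1)) = ((r:ℝ)+1) ^ (((r:ℝ)+1)/2) := by
      rw [Real.sqrt_eq_rpow, ← Real.rpow_natCast ((r:ℝ)+1) (r+1), ← Real.rpow_mul (by positivity)]
      congr 1
      push_cast; ring
    rw [← h4]
    exact Real.sqrt_le_sqrt h2
  calc 2^r * |M.det| = |B.det| := by
        rw [hdetB, abs_mul, abs_pow, abs_neg, abs_two]
    _ ≤ _ := h1

open Matrix




/-- If `f` is a nondegenerate simplicial map from `K` to `X(F_2^r)` and `p` is a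
prime with `p > (r+1)^((r+1)/2) / 2^r` (Hadamard's bound), then reading the 0/1
coordinates of `f` in `ZMod p` gives a nondegenerate simplicial map into
`X(F_p^r)`.  (Consequently `s_2(K) ≤ s_p(K)` for such primes `p`.) -/
theorem stmt18 {V : Type*} (K : Set (Finset V)) (r : ℕ) (hr : 1 ≤ r)
    (f : V → (Fin r → ZMod 2))
    (hf : ∀ s ∈ K, LinearIndependent (ZMod 2) (fun v : s => f v.1))
    (p : ℕ) (hp : p.Prime)
    (hpbig : ((r : ℝ) + 1) ^ (((r : ℝ) + 1) / 2) / 2 ^ r < (p : ℝ)) :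
    ∀ s ∈ K, LinearIndependent (ZMod p)
      (fun v : s => (fun i => (((f v.1 i).val : ℕ) : ZMod p))) := by
  intro s hs
  have hli := hf s hs
  classical
  -- extend to a basis of Fin r → ZMod 2
  have hSr := (linearIndepOn_id_range_iff hli.injective).mpr hli
  set T : Set (Fin r → ZMod 2) := hSr.extend (Set.subset_univ _) with hTdef
  have hsub : Set.range (fun v : s => f v.1) ⊆ T := hSr.subset_extend _
  let b : Module.Basis T (ZMod 2) (Fin r → ZMod 2) := Module.Basis.extend hSr
  haveI : Fintype T := Fintype.ofFinite _
  have hcard : Fintype.card T = r := by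
    have h1 := Module.finrank_eq_card_basis b
    have h2 : Module.finrank (ZMod 2) (Fin r → ZMod 2) = r := by
      simp [Module.finrank_pi]
    omega
  let e : T ≃ Fin r := Fintype.equivFinOfCardEq hcard
  let g : Fin r → (Fin r → ZMod 2) := fun i => ((e.symm i : T) : Fin r → ZMod 2)
  have hg : LinearIndependent (ZMod 2) g := by
    have : g = ⇑(b.reindex e) := by
      funext i
      simp only [g, Module.Basis.coe_reindex, Function.comp, b]
      exact (Module.Basis.extend_apply_self hSr (e.symm i)).symm
    rw [this]
    exact (b.reindex e).linearIndependent
  let ι : s → Fin r := fun v => e ⟨f v.1, hsub (Set.mem_range_self v)⟩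
  have hgι : ∀ v : s, g (ι v) = f v.1 := by
    intro v; simp [g, ι]
  have hιinj : Function.Injective ι := by
    intro v w h
    have := congrArg g h
    rw [hgι v, hgι w] at this
    exact hli.injective this
  haveI : Fact p.Prime := ⟨hp⟩
  -- the integer matrix of the basis
  set M : Matrix (Fin r) (Fin r) ℤ := Matrix.of fun i j => ((g i j).val : ℤ) with hMdef
  have hM01 : ∀ i j, M i j = 0 ∨ M i j = 1 := by
    intro i j
    have h2 := ZMod.val_lt (g i j)
    have : (g i j).val = 0 ∨ (g i j).val = 1 := by omega
    rcases this with h | h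
    · left; simp only [hMdef, Matrix.of_apply]; exact_mod_cast h
    · right; simp only [hMdef, Matrix.of_apply]; exact_mod_cast h
  -- determinant is odd
  have hmap2 : M.map (Int.castRingHom (ZMod 2)) = Matrix.of fun i j => g i j := by
    ext i j
    simp [hMdef, ZMod.natCast_val, ZMod.cast_id]
  have h2det : ¬ (2:ℤ) ∣ M.det := by
    intro hdvd
    have hrows2 : LinearIndependent (ZMod 2) (fun i => (M.map (Int.castRingHom (ZMod 2))) i) := by
      rw [hmap2]; exact hg
    have hunit := Matrix.linearIndependent_rows_iff_isUnit.mp hrows2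
    have hdet2 : (M.map (Int.castRingHom (ZMod 2))).det ≠ 0 :=
      isUnit_iff_ne_zero.mp ((Matrix.isUnit_iff_isUnit_det _).mp hunit)
    rw [← RingHom.mapMatrix_apply, ← RingHom.map_det] at hdet2
    apply hdet2
    rw [show ((2:ℤ)) = ((2:ℕ):ℤ) by norm_num] at hdvd
    exact_mod_cast (ZMod.intCast_zmod_eq_zero_iff_dvd M.det 2).mpr hdvd
  have hMdet0 : M.det ≠ 0 := fun h => h2det (h ▸ dvd_zero 2)
  -- Hadamard bound
  have hbound : |M.det| < (p:ℤ) := by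
    have hmapR : (M.map (Int.castRingHom ℝ)).det = ((M.det : ℤ) : ℝ) := by
      rw [← RingHom.mapMatrix_apply, ← RingHom.map_det]; rfl
    have hhad := hadamard01 r (M.map (Int.castRingHom ℝ)) (by
      intro i j
      rcases hM01 i j with h | h <;> simp [Matrix.map_apply, h])
    rw [hmapR] at hhad
    have h2r : (0:ℝ) < 2 ^ r := by positivity
    have : (|M.det| : ℝ) < (p:ℝ) := by
      rw [← Int.cast_abs] at hhad ⊢
      calc ((|M.det| : ℤ) : ℝ) ≤ ((r : ℝ) + 1) ^ (((r : ℝ) + 1) / 2) / 2 ^ r := by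
            rw [le_div_iff₀ h2r]; linarith [hhad]
        _ < (p:ℝ) := hpbig
    exact_mod_cast this
  -- determinant nonzero mod p
  have hpdet : ((M.det : ℤ) : ZMod p) ≠ 0 := by
    intro h0
    have hdvd : (p:ℤ) ∣ M.det := (ZMod.intCast_zmod_eq_zero_iff_dvd M.det p).mp h0
    have := Int.le_of_dvd (abs_pos.mpr hMdet0) ((dvd_abs _ _).mpr hdvd)
    omega
  -- rows mod p are linearly independent
  have hrowsp : LinearIndependent (ZMod p) (fun i => (M.map (Int.castRingHom (ZMod p))) i) := by
    apply Matrix.linearIndependent_rows_iff_isUnit.mpr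
    apply (Matrix.isUnit_iff_isUnit_det _).mpr
    apply isUnit_iff_ne_zero.mpr
    change (M.map (Int.castRingHom (ZMod p))).det ≠ 0
    rw [← RingHom.mapMatrix_apply, ← RingHom.map_det]
    exact hpdet
  have hcomp := hrowsp.comp ι hιinj
  have heq : (fun v : s => (fun i => (((f v.1 i).val : ℕ) : ZMod p))) =
      (fun i => (M.map (Int.castRingHom (ZMod p))) i) ∘ ι := by
    funext v
    funext j
    simp only [Function.comp_apply, Matrix.map_apply, hMdef, Matrix.of_apply, hgι v]
    simp
  rw [heq]
  exact hcomp
end
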